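/- arXiv:2105.05453 — 7 statements merged into one kernel-verified Lean document; each statement's English description precedes it below -/
import Mathlib

section
/- Lemma 3.3 (facets of the permutohedron): For nonempty proper subsets I, J of [n], the sets F(I) and F(J) intersect nontrivially, i.e. F(I) ∩ F(J) ≠ ∅, if and only if I ⊆ J or J ⊆ I. -/
noncomputable section

namespace PermutohedronA

/-- The vertex of the permutohedron corresponding to a permutation `u`. -/
def permPoint (n : ℕ) (a : Fin n → ℝ) (u : Equiv.Perm (Fin n)) : Fin n → ℝ :=
  fun i => a (u i)

/-- The permutohedron `P_{A_{n-1}}`, the convex hull of the `𝔖_n`-orbit of `a`. -/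
def permutohedron (n : ℕ) (a : Fin n → ℝ) : Set (Fin n → ℝ) :=
  convexHull ℝ {p | ∃ u : Equiv.Perm (Fin n), p = permPoint n a u}

/-- The facet `F(I)` of the permutohedron. -/
def facet (n : ℕ) (a : Fin n → ℝ) (I : Finset (Fin n)) : Set (Fin n → ℝ) :=
  {x ∈ permutohedron n a |
    ∑ i ∈ I, x i = ∑ i ∈ Finset.univ.filter (fun i : Fin n => (i : ℕ) < I.card), a i}

end PermutohedronA

open PermutohedronA Finset

section Aux

variable {n : ℕ} {a : Fin n → ℝ}

/-- Extension of `a` to `ℕ` by zero. -/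
def bExt (n : ℕ) (a : Fin n → ℝ) : ℕ → ℝ := fun i => if h : i < n then a ⟨i, h⟩ else 0

/-- Sum of the first `k` values of `a`. -/
def Gfun (n : ℕ) (a : Fin n → ℝ) (k : ℕ) : ℝ := ∑ i ∈ Finset.range k, bExt n a i

/-- The initial segment of `Fin n`. -/
def Bfin (n k : ℕ) : Finset (Fin n) := Finset.univ.filter (fun i : Fin n => (i : ℕ) < k)

lemma mem_Bfin {k : ℕ} {i : Fin n} : i ∈ Bfin n k ↔ (i : ℕ) < k := by
  simp [Bfin]

lemma card_Bfin {k : ℕ} (hk : k ≤ n) : (Bfin n k).card = k := by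
  have h : ∀ m ∈ Finset.range k, m < n := fun m hm => lt_of_lt_of_le (Finset.mem_range.mp hm) hk
  have : Bfin n k = Finset.attachFin (Finset.range k) h := by
    ext i; simp [mem_Bfin, Finset.mem_attachFin]
  rw [this, Finset.card_attachFin, Finset.card_range]

lemma bExt_apply {i : ℕ} (hi : i < n) : bExt n a i = a ⟨i, hi⟩ := by simp [bExt, hi]

lemma bExt_le (ha : StrictMono a) {i j : ℕ} (hij : i ≤ j) (hj : j < n) :
    bExt n a i ≤ bExt n a j := by
  rw [bExt_apply (lt_of_le_of_lt hij hj), bExt_apply hj]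
  exact ha.monotone (by simpa [Fin.mk_le_mk] using hij)

lemma bExt_lt (ha : StrictMono a) {i j : ℕ} (hij : i < j) (hj : j < n) :
    bExt n a i < bExt n a j := by
  rw [bExt_apply (lt_trans hij hj), bExt_apply hj]
  exact ha (by simpa [Fin.mk_lt_mk] using hij)

lemma sum_Bfin_eq (k : ℕ) : ∑ i ∈ Bfin n k, a i = Gfun n a (min k n) := by
  have h1 : ∑ i ∈ Bfin n k, a i = ∑ i : Fin n, if (i : ℕ) < k then a i else 0 := by
    rw [Bfin, Finset.sum_filter]
  have h2 : ∀ i : Fin n, (if (i : ℕ) < k then a i else 0)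
      = (fun j : ℕ => if j < k then bExt n a j else 0) (i : ℕ) := by
    intro i
    simp only [bExt, i.isLt, dif_pos, Fin.eta]
  have h4 : ∑ i : Fin n, (if (i : ℕ) < k then a i else 0)
      = ∑ i ∈ Finset.range n, (if i < k then bExt n a i else 0) := by
    rw [Finset.sum_congr rfl (fun i _ => h2 i)]
    exact Fin.sum_univ_eq_sum_range (fun j => if j < k then bExt n a j else 0) n
  have h3 : Finset.range (min k n) = (Finset.range n).filter (· < k) := by
    ext i; simp; omega
  rw [h1, h4, Gfun, h3, Finset.sum_filter]

lemma sum_Bfin_eq_of_le {k : ℕ} (hk : k ≤ n) : ∑ i ∈ Bfin n k, a i = Gfun n a k := by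
  rw [sum_Bfin_eq, min_eq_left hk]

lemma strictMono_val_le {k : ℕ} (f : Fin k → Fin n) (hf : StrictMono f) :
    ∀ v (hv : v < k), v ≤ (f ⟨v, hv⟩ : ℕ) := by
  intro v
  induction v with
  | zero => intro _; exact Nat.zero_le _
  | succ w ih =>
    intro hv
    have hw : w < k := Nat.lt_of_succ_lt hv
    have h1 := ih hw
    have h2 : f ⟨w, hw⟩ < f ⟨w + 1, hv⟩ := hf (by simp [Fin.lt_def])
    have h3 : (f ⟨w, hw⟩ : ℕ) < (f ⟨w + 1, hv⟩ : ℕ) := h2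
    omega

/-- Vertex bound: any `|T|`-subset sum of `a` is at least the sum of the `|T|` smallest. -/
lemma vertex_bound (ha : StrictMono a) (T : Finset (Fin n)) :
    Gfun n a T.card ≤ ∑ i ∈ T, a i := by
  have hkn : T.card ≤ n := by
    simpa using Finset.card_le_card (Finset.subset_univ T)
  set k := T.card with hk
  let e := T.orderIsoOfFin hk.symm
  have hmono : StrictMono (fun j : Fin k => ((e j : Fin n))) := by
    intro x y hxy
    exact Subtype.coe_lt_coe.mpr (e.lt_iff_lt.2 hxy)
  have hsum : ∑ i ∈ T, a i = ∑ j : Fin k, a (e j) := by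
    rw [← Finset.sum_attach T (fun i => a i)]
    exact (Equiv.sum_comp e.toEquiv (fun i : {x // x ∈ T} => a i)).symm
  have hterm : ∀ j : Fin k, bExt n a (j : ℕ) ≤ a (e j) := by
    intro j
    have hjn : (j : ℕ) < n := lt_of_lt_of_le j.isLt hkn
    rw [bExt_apply hjn]
    have := strictMono_val_le _ hmono j j.isLt
    exact ha.monotone (by simpa [Fin.le_def] using this)
  calc Gfun n a k = ∑ j : Fin k, bExt n a (j : ℕ) := (Fin.sum_univ_eq_sum_range _ _).symm
    _ ≤ ∑ j : Fin k, a (e j) := Finset.sum_le_sum fun j _ => hterm j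
    _ = ∑ i ∈ T, a i := hsum.symm

lemma isLinearMap_sum (S : Finset (Fin n)) :
    IsLinearMap ℝ (fun x : Fin n → ℝ => ∑ i ∈ S, x i) := by
  constructor
  · intro x y; simp [Finset.sum_add_distrib]
  · intro c x; simp [Finset.mul_sum]

lemma perm_sum_zero (hsum : ∑ i, a i = 0) {x : Fin n → ℝ}
    (hx : x ∈ permutohedron n a) : ∑ i, x i = 0 := by
  have h : permutohedron n a ⊆ {y : Fin n → ℝ | ∑ i, y i = 0} := by
    apply convexHull_min ?_ (convex_hyperplane (isLinearMap_sum Finset.univ) 0)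
    rintro p ⟨u, rfl⟩
    show ∑ i, a (u i) = 0
    rw [Equiv.sum_comp u a]; exact hsum
  exact h hx

lemma perm_lower (ha : StrictMono a) {x : Fin n → ℝ}
    (hx : x ∈ permutohedron n a) (S : Finset (Fin n)) :
    Gfun n a S.card ≤ ∑ i ∈ S, x i := by
  have h : permutohedron n a ⊆ {y : Fin n → ℝ | Gfun n a S.card ≤ ∑ i ∈ S, y i} := by
    apply convexHull_min ?_ (convex_halfSpace_ge (isLinearMap_sum S) _)
    rintro p ⟨u, rfl⟩
    show Gfun n a S.card ≤ ∑ i ∈ S, a (u i)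
    have h1 : ∑ i ∈ S, a (u i) = ∑ j ∈ S.image u, a j :=
      (Finset.sum_image (fun x _ y _ h => u.injective h)).symm
    rw [h1, ← Finset.card_image_of_injective S u.injective]
    exact vertex_bound ha _
  exact h hx

lemma G_strict (ha : StrictMono a) {p q r s : ℕ} (hpq : p < q) (hqr : q ≤ r) (hrs : r < s)
    (hsn : s ≤ n) (hcard : p + s = q + r) :
    Gfun n a q + Gfun n a r < Gfun n a p + Gfun n a s := by
  have h1 : Gfun n a p + ∑ i ∈ Finset.Ico p q, bExt n a i = Gfun n a q := by
    rw [Gfun, Gfun, Finset.range_eq_Ico, Finset.range_eq_Ico]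
    exact Finset.sum_Ico_consecutive (bExt n a) (Nat.zero_le p) hpq.le
  have h2 : Gfun n a r + ∑ i ∈ Finset.Ico r s, bExt n a i = Gfun n a s := by
    rw [Gfun, Gfun, Finset.range_eq_Ico, Finset.range_eq_Ico]
    exact Finset.sum_Ico_consecutive _ (Nat.zero_le r) hrs.le
  have hq1n : q - 1 < n := by omega
  have hrn : r < n := by omega
  have key : ∑ i ∈ Finset.Ico p q, bExt n a i < ∑ i ∈ Finset.Ico r s, bExt n a i := by
    have hb1 : ∑ i ∈ Finset.Ico p q, bExt n a i ≤ (q - p) • bExt n a (q - 1) := by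
      rw [← Nat.card_Ico p q]
      apply Finset.sum_le_card_nsmul
      intro i hi
      rw [Finset.mem_Ico] at hi
      exact bExt_le ha (by omega) hq1n
    have hb2 : (s - r) • bExt n a r ≤ ∑ i ∈ Finset.Ico r s, bExt n a i := by
      rw [← Nat.card_Ico r s]
      apply Finset.card_nsmul_le_sum
      intro i hi
      rw [Finset.mem_Ico] at hi
      exact bExt_le ha (by omega) (by omega)
    have hmid : (q - p) • bExt n a (q - 1) < (q - p) • bExt n a r := by
      rw [nsmul_eq_mul, nsmul_eq_mul]
      apply mul_lt_mul_of_pos_left (bExt_lt ha (by omega) hrn)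
      have : 0 < q - p := by omega
      exact_mod_cast this
    have heq : (q - p) = (s - r) := by omega
    calc ∑ i ∈ Finset.Ico p q, bExt n a i ≤ (q - p) • bExt n a (q - 1) := hb1
      _ < (q - p) • bExt n a r := hmid
      _ = (s - r) • bExt n a r := by rw [heq]
      _ ≤ ∑ i ∈ Finset.Ico r s, bExt n a i := hb2
  linarith

/-- Existence of a permutation sending `I` to the initial `|I|` segment and `J` to the
initial `|J|` segment, when `I ⊆ J`. -/
lemma exists_perm (I J : Finset (Fin n)) (hIJ : I ⊆ J) :
    ∃ e : Equiv.Perm (Fin n), I.image e = Bfin n I.card ∧ J.image e = Bfin n J.card := by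
  classical
  set k := I.card with hk
  set m := J.card with hm
  have hkm : k ≤ m := Finset.card_le_card hIJ
  have hmn : m ≤ n := by simpa using Finset.card_le_card (Finset.subset_univ J)
  have hkn : k ≤ n := le_trans hkm hmn
  have hB12 : Bfin n k ⊆ Bfin n m := by
    intro i hi; rw [mem_Bfin] at *; omega
  have c1 : I.card = (Bfin n k).card := by rw [card_Bfin hkn]
  have c2 : (J \ I).card = (Bfin n m \ Bfin n k).card := by
    rw [Finset.card_sdiff_of_subset hIJ, Finset.card_sdiff_of_subset hB12, card_Bfin hkn, card_Bfin hmn]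
  have c3 : Jᶜ.card = (Bfin n m)ᶜ.card := by
    rw [Finset.card_compl, Finset.card_compl, card_Bfin hmn]
  let e1 := Finset.equivOfCardEq c1
  let e2 := Finset.equivOfCardEq c2
  let e3 := Finset.equivOfCardEq c3
  let f : Fin n → Fin n := fun x =>
    if hx : x ∈ I then (e1 ⟨x, hx⟩ : Fin n)
    else if hx' : x ∈ J then (e2 ⟨x, Finset.mem_sdiff.2 ⟨hx', hx⟩⟩ : Fin n)
    else (e3 ⟨x, Finset.mem_compl.2 hx'⟩ : Fin n)
  have hf1 : ∀ x (hx : x ∈ I), f x = (e1 ⟨x, hx⟩ : Fin n) := by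
    intro x hx; simp only [f, dif_pos hx]
  have hf2 : ∀ x (hx : x ∈ J) (hx' : x ∉ I),
      f x = (e2 ⟨x, Finset.mem_sdiff.2 ⟨hx, hx'⟩⟩ : Fin n) := by
    intro x hx hx'; simp only [f, dif_neg hx', dif_pos hx]
  have hf3 : ∀ x (hx : x ∉ J),
      f x = (e3 ⟨x, Finset.mem_compl.2 hx⟩ : Fin n) := by
    intro x hx
    have hx' : x ∉ I := fun h => hx (hIJ h)
    simp only [f, dif_neg hx', dif_neg hx]
  have hr1 : ∀ x (hx : x ∈ I), f x ∈ Bfin n k := by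
    intro x hx; rw [hf1 x hx]; exact (e1 ⟨x, hx⟩).2
  have hr2 : ∀ x (hx : x ∈ J) (hx' : x ∉ I), f x ∈ Bfin n m \ Bfin n k := by
    intro x hx hx'; rw [hf2 x hx hx']; exact (e2 _).2
  have hr3 : ∀ x (hx : x ∉ J), f x ∈ (Bfin n m)ᶜ := by
    intro x hx; rw [hf3 x hx]; exact (e3 _).2
  have hinj : Function.Injective f := by
    intro x y hxy
    by_cases hxI : x ∈ I <;> by_cases hyI : y ∈ I
    · have := hr1 x hxI; have := hr1 y hyI
      rw [hf1 x hxI, hf1 y hyI] at hxy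
      have := e1.injective (Subtype.coe_injective hxy)
      exact Subtype.mk_eq_mk.mp this
    · by_cases hyJ : y ∈ J
      · exfalso
        have h1 := hr1 x hxI
        have h2 := hr2 y hyJ hyI
        rw [Finset.mem_sdiff] at h2
        exact h2.2 (hxy ▸ h1)
      · exfalso
        have h1 := hr1 x hxI
        have h2 := hr3 y hyJ
        rw [Finset.mem_compl] at h2
        exact h2 (hB12 (hxy ▸ h1))
    · by_cases hxJ : x ∈ J
      · exfalso
        have h1 := hr2 x hxJ hxI
        have h2 := hr1 y hyI
        rw [Finset.mem_sdiff] at h1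
        exact h1.2 (hxy ▸ h2)
      · exfalso
        have h1 := hr3 x hxJ
        have h2 := hr1 y hyI
        rw [Finset.mem_compl] at h1
        exact h1 (hB12 (hxy ▸ h2))
    · by_cases hxJ : x ∈ J <;> by_cases hyJ : y ∈ J
      · have h1 := hr2 x hxJ hxI
        rw [hf2 x hxJ hxI, hf2 y hyJ hyI] at hxy
        have := e2.injective (Subtype.coe_injective hxy)
        exact Subtype.mk_eq_mk.mp this
      · exfalso
        have h1 := hr2 x hxJ hxI
        have h2 := hr3 y hyJ
        rw [Finset.mem_sdiff] at h1
        rw [Finset.mem_compl] at h2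
        exact h2 (hxy ▸ h1.1)
      · exfalso
        have h1 := hr3 x hxJ
        have h2 := hr2 y hyJ hyI
        rw [Finset.mem_sdiff] at h2
        rw [Finset.mem_compl] at h1
        exact h1 (hxy ▸ h2.1)
      · rw [hf3 x hxJ, hf3 y hyJ] at hxy
        have := e3.injective (Subtype.coe_injective hxy)
        exact Subtype.mk_eq_mk.mp this
  have hbij : Function.Bijective f := Finite.injective_iff_bijective.mp hinj
  refine ⟨Equiv.ofBijective f hbij, ?_, ?_⟩
  · apply Finset.eq_of_subset_of_card_le
    · intro y hy
      rw [Finset.mem_image] at hy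
      obtain ⟨x, hx, rfl⟩ := hy
      exact hr1 x hx
    · rw [Finset.card_image_of_injective _ (Equiv.ofBijective f hbij).injective, ← c1]
  · apply Finset.eq_of_subset_of_card_le
    · intro y hy
      rw [Finset.mem_image] at hy
      obtain ⟨x, hx, rfl⟩ := hy
      by_cases hxI : x ∈ I
      · exact hB12 (hr1 x hxI)
      · exact (Finset.mem_sdiff.mp (hr2 x hx hxI)).1
    · rw [Finset.card_image_of_injective _ (Equiv.ofBijective f hbij).injective]
      rw [card_Bfin hmn]
  
/-- The backward direction. -/
lemma subset_nonempty (ha : StrictMono a) {I J : Finset (Fin n)} (hIJ : I ⊆ J) :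
    (facet n a I ∩ facet n a J).Nonempty := by
  obtain ⟨e, heI, heJ⟩ := exists_perm I J hIJ
  refine ⟨permPoint n a e, ?_, ?_⟩ <;>
  · refine ⟨subset_convexHull ℝ _ ⟨e, rfl⟩, ?_⟩
    show ∑ i ∈ _, a (e i) = _
    rw [← Finset.sum_image (fun x _ y _ h => e.injective h)]
    first
    | rw [heI]; rfl
    | rw [heJ]; rfl

end Aux

open PermutohedronA in
theorem statement0 (n : ℕ) (hn : 2 ≤ n) (a : Fin n → ℝ) (ha : StrictMono a)
    (hsum : ∑ i, a i = 0) (I J : Finset (Fin n))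
    (hI1 : I.Nonempty) (hI2 : I ≠ Finset.univ)
    (hJ1 : J.Nonempty) (hJ2 : J ≠ Finset.univ) :
    (facet n a I ∩ facet n a J).Nonempty ↔ I ⊆ J ∨ J ⊆ I := by
  classical
  constructor
  · rintro ⟨x, ⟨hxP, hxI⟩, ⟨_, hxJ⟩⟩
    by_contra hcon
    push_neg at hcon
    obtain ⟨hnIJ, hnJI⟩ := hcon
    set p := (I ∩ J).card with hp
    set q := I.card with hq
    set r := J.card with hr
    set s := (I ∪ J).card with hs
    have hcard : p + s = q + r := Finset.card_inter_add_card_union I J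
    have hpq : p < q := by
      apply Finset.card_lt_card
      rw [Finset.ssubset_iff_of_subset Finset.inter_subset_left]
      obtain ⟨z, hzI, hzJ⟩ := Finset.not_subset.mp hnIJ
      exact ⟨z, hzI, fun h => hzJ (Finset.mem_inter.mp h).2⟩
    have hpr : p < r := by
      apply Finset.card_lt_card
      rw [Finset.ssubset_iff_of_subset Finset.inter_subset_right]
      obtain ⟨z, hzJ, hzI⟩ := Finset.not_subset.mp hnJI
      exact ⟨z, hzJ, fun h => hzI (Finset.mem_inter.mp h).1⟩
    have hqs : q < s := by
      apply Finset.card_lt_card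
      rw [Finset.ssubset_iff_of_subset Finset.subset_union_left]
      obtain ⟨z, hzJ, hzI⟩ := Finset.not_subset.mp hnJI
      exact ⟨z, Finset.mem_union_right _ hzJ, hzI⟩
    have hrs : r < s := by
      apply Finset.card_lt_card
      rw [Finset.ssubset_iff_of_subset Finset.subset_union_right]
      obtain ⟨z, hzI, hzJ⟩ := Finset.not_subset.mp hnIJ
      exact ⟨z, Finset.mem_union_left _ hzI, hzJ⟩
    have hsn : s ≤ n := by
      simpa using Finset.card_le_card (Finset.subset_univ (I ∪ J))
    have hqn : q ≤ n := le_trans hqs.le hsn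
    have hrn : r ≤ n := le_trans hrs.le hsn
    -- facet equations
    have heI : ∑ i ∈ I, x i = Gfun n a q := by
      rw [hxI]; exact sum_Bfin_eq_of_le hqn
    have heJ : ∑ i ∈ J, x i = Gfun n a r := by
      rw [hxJ]; exact sum_Bfin_eq_of_le hrn
    have hlow1 : Gfun n a p ≤ ∑ i ∈ I ∩ J, x i := perm_lower ha hxP _
    have hlow2 : Gfun n a s ≤ ∑ i ∈ I ∪ J, x i := perm_lower ha hxP _
    have hsplit : ∑ i ∈ I ∪ J, x i + ∑ i ∈ I ∩ J, x i = ∑ i ∈ I, x i + ∑ i ∈ J, x i :=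
      Finset.sum_union_inter
    have hstrict : Gfun n a q + Gfun n a r < Gfun n a p + Gfun n a s := by
      rcases le_total q r with h | h
      · exact G_strict ha hpq h hrs hsn hcard
      · have := G_strict ha hpr h hqs hsn (by omega)
        linarith
    linarith
  · rintro (h | h)
    · exact subset_nonempty ha h
    · rw [Set.inter_comm]
      exact subset_nonempty ha h
end
end

section
/- Key combinatorial claim in the proof of Lemma 3.7: Let I_1 ⊊ I_2 ⊊ ⋯ ⊊ I_d be a strictly increasing chain of subsets of [n], and let w_1,…,w_d ∈ 𝔖_K be such that w_1(I_1) ⊆ w_2(I_2) ⊆ ⋯ ⊆ w_d(I_d). Then there exists a single w ∈ 𝔖_K with w(I_i) = w_i(I_i) for all i = 1,…,d. -/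
/-!
Key combinatorial claim in the proof of Lemma 3.7.

Indices are 0-indexed: `K ⊆ {0, …, n-2}` (each `k ∈ K` satisfies `k + 1 < n`),
and `𝔖_K ≤ 𝔖_n` is generated by the adjacent transpositions `(k, k+1)` for `k ∈ K`.
-/

namespace PermutohedronA

/-- The parabolic subgroup `𝔖_K` generated by the adjacent transpositions
`s_k = (k, k+1)` with `k ∈ K`. -/
def SK (n : ℕ) (K : Finset ℕ) (hK : ∀ k ∈ K, k + 1 < n) :
    Subgroup (Equiv.Perm (Fin n)) :=
  Subgroup.closure
    {σ | ∃ k, ∃ hk : k ∈ K,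
      σ = Equiv.swap ⟨k, Nat.lt_of_succ_lt (hK k hk)⟩ ⟨k + 1, hK k hk⟩}

variable {n : ℕ} {K : Finset ℕ}

/-- Block index: the number of `j < x` with `j ∉ K`. -/
def fb (K : Finset ℕ) {n : ℕ} (x : Fin n) : ℕ :=
  ((Finset.range x.val).filter (fun j => j ∉ K)).card

lemma fb_mono {x y : Fin n} (h : x.val ≤ y.val) : fb K x ≤ fb K y :=
  Finset.card_le_card (Finset.filter_subset_filter _ (by simpa using Finset.range_subset_range.2 h))

lemma mem_K_of_fb_eq {x y : Fin n} (hxy : x.val < y.val) (hf : fb K x = fb K y)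
    {j : ℕ} (h1 : x.val ≤ j) (h2 : j < y.val) : j ∈ K := by
  by_contra hj
  have hjn : j ∉ (Finset.range x.val).filter (fun j => j ∉ K) := by
    simp only [Finset.mem_filter, Finset.mem_range]
    omega
  have hsub : insert j ((Finset.range x.val).filter (fun j => j ∉ K)) ⊆
      (Finset.range y.val).filter (fun j => j ∉ K) := by
    intro a ha
    rcases Finset.mem_insert.1 ha with rfl | ha
    · exact Finset.mem_filter.2 ⟨Finset.mem_range.2 h2, hj⟩
    · obtain ⟨ha1, ha2⟩ := Finset.mem_filter.1 ha
      exact Finset.mem_filter.2 ⟨Finset.mem_range.2 (by have := Finset.mem_range.1 ha1; omega), ha2⟩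
  have := Finset.card_le_card hsub
  rw [Finset.card_insert_of_notMem hjn] at this
  unfold fb at hf
  omega

lemma fb_succ_mem {k : ℕ} (hk : k ∈ K) (h : k + 1 < n) :
    fb K (⟨k, Nat.lt_of_succ_lt h⟩ : Fin n) = fb K (⟨k + 1, h⟩ : Fin n) := by
  unfold fb
  simp only
  rw [Finset.range_add_one, Finset.filter_insert]
  simp [hk]

/-- The subgroup of permutations preserving the block index. -/
def Hf (K : Finset ℕ) (n : ℕ) : Subgroup (Equiv.Perm (Fin n)) where
  carrier := {v | ∀ x, fb K (v x) = fb K x}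
  one_mem' := fun _ => rfl
  mul_mem' := by
    intro a b ha hb x
    have : (a * b) x = a (b x) := rfl
    rw [this, ha (b x), hb x]
  inv_mem' := by
    intro a ha x
    have h := ha (a⁻¹ x)
    rw [show a (a⁻¹ x) = x from a.apply_symm_apply x] at h
    exact h.symm

lemma SK_le_Hf (hK : ∀ k ∈ K, k + 1 < n) : SK n K hK ≤ Hf K n := by
  rw [SK, Subgroup.closure_le]
  rintro σ ⟨k, hk, rfl⟩
  intro x
  have h1 := fb_succ_mem hk (hK k hk)
  rw [Equiv.swap_apply_def]
  split_ifs with h h'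
  · rw [h, h1]
  · rw [h', h1]
  · rfl


variable {n : ℕ}

def invs (v : Equiv.Perm (Fin n)) : Finset (Fin n × Fin n) :=
  Finset.univ.filter fun p => p.1 < p.2 ∧ v p.2 < v p.1

lemma invs_card_swap {v : Equiv.Perm (Fin n)} {a b : Fin n} (hab : a.val + 1 = b.val)
    (hdesc : v b < v a) :
    (invs (v * Equiv.swap a b)).card + 1 = (invs v).card := by
  classical
  set s := Equiv.swap a b with hs
  have haltb : a < b := by rw [Fin.lt_def]; omega
  have hmem : (a, b) ∈ invs v := by simp [invs, haltb, hdesc]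
  have hswap : ∀ p : Fin n × Fin n, p.1 < p.2 → p ≠ (a, b) → s p.1 < s p.2 := by
    intro p hp hne
    have hne' : ¬(p.1.val = a.val ∧ p.2.val = b.val) := by
      intro ⟨u1, u2⟩
      exact hne (Prod.ext (Fin.ext u1) (Fin.ext u2))
    rw [Fin.lt_def] at hp
    rw [hs]
    simp only [Equiv.swap_apply_def]
    split_ifs with h1 h2 h3 h4 h5 h6 <;>
      simp only [Fin.lt_def, Fin.ext_iff] at * <;> omega
  have hss : ∀ x, s (s x) = x := fun x => Equiv.swap_apply_self a b x
  have hmul : ∀ (u : Equiv.Perm (Fin n)) x, (u * s) x = u (s x) := fun _ _ => rfl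
  have hcard : ((invs v).erase (a, b)).card = (invs (v * s)).card := by
    apply Finset.card_bij' (fun p _ => (s p.1, s p.2)) (fun p _ => (s p.1, s p.2))
    · intro p hp
      obtain ⟨hne, hp⟩ := Finset.mem_erase.1 hp
      obtain ⟨hp1, hp2⟩ := (Finset.mem_filter.1 hp).2
      refine Finset.mem_filter.2 ⟨Finset.mem_univ _, hswap p hp1 hne, ?_⟩
      rw [hmul, hmul, hss, hss]
      exact hp2
    · intro q hq
      obtain ⟨hq1, hq2⟩ := (Finset.mem_filter.1 hq).2
      have hqne : q ≠ (a, b) := by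
        rintro rfl
        rw [hmul, hmul, Equiv.swap_apply_left, Equiv.swap_apply_right] at hq2
        exact absurd hdesc (asymm hq2)
      refine Finset.mem_erase.2 ⟨?_, Finset.mem_filter.2 ⟨Finset.mem_univ _, hswap q hq1 hqne, ?_⟩⟩
      · intro hcontra
        have h1 : s q.1 = a := congrArg Prod.fst hcontra
        have h2 : s q.2 = b := congrArg Prod.snd hcontra
        have : q.1 = s a := by rw [← h1, hss]
        have hb' : q.2 = s b := by rw [← h2, hss]
        rw [Equiv.swap_apply_left] at this
        rw [Equiv.swap_apply_right] at hb'
        rw [this, hb'] at hq1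
        exact absurd haltb (asymm hq1)
      · rw [hmul, hmul] at hq2
        exact hq2
    · intro p _
      exact Prod.ext (hss p.1) (hss p.2)
    · intro p _
      exact Prod.ext (hss p.1) (hss p.2)
  have hpos : 1 ≤ (invs v).card := Finset.card_pos.2 ⟨_, hmem⟩
  rw [Finset.card_erase_of_mem hmem] at hcard
  omega

set_option maxHeartbeats 1000000 in
lemma mem_SK_of_fb (hK : ∀ k ∈ K, k + 1 < n) (v : Equiv.Perm (Fin n))
    (hv : ∀ x, fb K (v x) = fb K x) : v ∈ SK n K hK := by
  classical
  obtain ⟨N, hN⟩ : ∃ N, (invs v).card ≤ N := ⟨_, le_rfl⟩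
  induction N generalizing v with
  | zero =>
    -- show v = 1
    by_cases h1 : v = 1
    · rw [h1]; exact one_mem _
    · exfalso
      obtain ⟨x, hx⟩ : ∃ x, v x ≠ x := by
        by_contra h
        push_neg at h
        exact h1 (Equiv.ext h)
      -- find an inversion of v : (v⁻¹ (v x)) trick; easier: min nonfixed point
      have hne : (Finset.univ.filter fun y => v y ≠ y).Nonempty :=
        ⟨x, Finset.mem_filter.2 ⟨Finset.mem_univ _, hx⟩⟩
      set k := (Finset.univ.filter fun y => v y ≠ y).min' hne with hk
      have hkmem : v k ≠ k := (Finset.mem_filter.1 ((Finset.univ.filter fun y => v y ≠ y).min'_mem hne)).2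
      have hmin : ∀ y, v y ≠ y → k ≤ y := by
        intro y hy
        rw [hk]
        have hy' : y ∈ Finset.univ.filter fun z => v z ≠ z :=
          Finset.mem_filter.2 ⟨Finset.mem_univ y, hy⟩
        exact Finset.min'_le _ _ hy'
      set m := v.symm k with hm
      have hvm : v m = k := v.apply_symm_apply k
      have hkm : k < m := by
        rcases lt_trichotomy k m with h | h | h
        · exact h
        · exfalso; rw [← h] at hvm; exact hkmem hvm
        · exfalso
          have : v m = m := by
            by_contra hc
            exact absurd (hmin m hc) (not_le.2 h)
          rw [hvm] at this
          exact absurd this.symm (ne_of_lt h)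
      -- Use pair (k, m) if v m < v k? v m = k ≤ ... v k ≠ k, v k > k? 
      have hvk : k < v k := by
        rcases lt_or_ge k (v k) with h | h
        · exact h
        · exfalso
          rcases lt_or_eq_of_le h with h' | h'
          · have := hmin (v k) (by
              intro hc
              exact absurd (v.injective hc) hkmem)
            exact absurd this (not_le.2 h')
          · exact hkmem h'
      have : (k, m) ∈ invs v := by
        refine Finset.mem_filter.2 ⟨Finset.mem_univ _, hkm, ?_⟩
        rw [hvm]; exact hvk
      have := Finset.card_pos.2 ⟨_, this⟩
      omega
  | succ N ih =>
    by_cases h1 : v = 1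
    · rw [h1]; exact one_mem _
    obtain ⟨x, hx⟩ : ∃ x, v x ≠ x := by
      by_contra h
      push_neg at h
      exact h1 (Equiv.ext h)
    have hne : (Finset.univ.filter fun y => v y ≠ y).Nonempty :=
      ⟨x, Finset.mem_filter.2 ⟨Finset.mem_univ _, hx⟩⟩
    set k := (Finset.univ.filter fun y => v y ≠ y).min' hne with hk
    have hkmem : v k ≠ k := (Finset.mem_filter.1 ((Finset.univ.filter fun y => v y ≠ y).min'_mem hne)).2
    have hmin : ∀ y, v y ≠ y → k ≤ y := by
      intro y hy
      rw [hk]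
      have hy' : y ∈ Finset.univ.filter fun z => v z ≠ z :=
        Finset.mem_filter.2 ⟨Finset.mem_univ y, hy⟩
      exact Finset.min'_le _ _ hy'
    have hfix : ∀ y : Fin n, y < k → v y = y := by
      intro y hy
      by_contra hc
      exact absurd (hmin y hc) (not_le.2 hy)
    set m := v.symm k with hm
    have hvm : v m = k := v.apply_symm_apply k
    have hkm : k < m := by
      rcases lt_trichotomy k m with h | h | h
      · exact h
      · exfalso; rw [← h] at hvm; exact hkmem hvm
      · exfalso
        have := hfix m h
        rw [hvm] at this
        exact absurd this.symm (ne_of_lt h)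
    have hkm' : k.val < m.val := hkm
    have hm1 : m.val - 1 < n := by omega
    set m' : Fin n := ⟨m.val - 1, hm1⟩ with hm'
    have hm'val : m'.val = m.val - 1 := rfl
    have hm'm : m'.val + 1 = m.val := by rw [hm'val]; omega
    have hfkm : fb K k = fb K m := by
      have := hv m
      rw [hvm] at this
      exact this
    have hm'K : m.val - 1 ∈ K := mem_K_of_fb_eq hkm' hfkm (by omega) (by omega)
    have hfm'm : fb K m' = fb K m := by
      have h1 : fb K k ≤ fb K m' := fb_mono (by rw [hm'val]; omega)
      have h2 : fb K m' ≤ fb K m := fb_mono (by rw [hm'val]; omega)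
      omega
    set s := Equiv.swap m' m with hs
    have hsSK : s ∈ SK n K hK := by
      apply Subgroup.subset_closure
      refine ⟨m.val - 1, hm'K, ?_⟩
      rw [hs]
      congr 1
      exact Fin.ext (show m.val = m.val - 1 + 1 by omega)
    -- descent: v m < v m'
    have hdesc : v m < v m' := by
      rw [hvm]
      rcases lt_trichotomy k (v m') with h | h | h
      · exact h
      · exfalso
        have : m' = m := v.injective (by rw [hvm, ← h])
        have : m'.val = m.val := congrArg Fin.val this
        omega
      · exfalso
        have h2 := hfix (v m') h
        have h3 : v m' = m' := v.injective h2
        have h4 : (v m').val = m'.val := congrArg Fin.val h3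
        have h5 : (v m').val < k.val := h
        have h6 : k.val ≤ m'.val := by rw [hm'val]; omega
        omega
    have hcard := invs_card_swap hm'm hdesc
    rw [← hs] at hcard
    have hv' : ∀ x, fb K ((v * s) x) = fb K x := by
      intro x
      have hmul : (v * s) x = v (s x) := rfl
      rw [hmul, hv (s x)]
      rw [hs, Equiv.swap_apply_def]
      split_ifs with h h'
      · rw [h, hfm'm]
      · rw [h', hfm'm]
      · rfl
    have hvs : v * s ∈ SK n K hK := ih (v * s) hv' (by omega)
    have hvss : (v * s) * s = v := by
      rw [mul_assoc, hs, Equiv.swap_mul_self, mul_one]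
    rw [← hvss]
    exact mul_mem hvs hsSK


/-- The level of `x` w.r.t. a monotone chain `A`. -/
def lvl {d : ℕ} (A : Fin d → Finset (Fin n)) (x : Fin n) : ℕ :=
  d - (Finset.univ.filter fun i => x ∈ A i).card

lemma lvl_le_d {d : ℕ} (A : Fin d → Finset (Fin n)) (x : Fin n) : lvl A x ≤ d :=
  Nat.sub_le _ _

lemma mem_iff_lvl_le {d : ℕ} {A : Fin d → Finset (Fin n)}
    (hA : ∀ i j : Fin d, i ≤ j → A i ⊆ A j) (x : Fin n) (i : Fin d) :
    x ∈ A i ↔ lvl A x ≤ i.val := by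
  have hid : i.val < d := i.isLt
  have hcard_le : (Finset.univ.filter fun j => x ∈ A j).card ≤ d := by
    have := Finset.card_filter_le (Finset.univ : Finset (Fin d)) (fun j => x ∈ A j)
    simpa using this
  constructor
  · intro hx
    have h1 : Finset.Ici i ⊆ Finset.univ.filter fun j => x ∈ A j := by
      intro j hj
      exact Finset.mem_filter.2 ⟨Finset.mem_univ _, hA i j (Finset.mem_Ici.1 hj) hx⟩
    have h2 := Finset.card_le_card h1
    rw [Fin.card_Ici] at h2
    unfold lvl
    omega
  · intro h
    by_contra hx
    have h1 : (Finset.univ.filter fun j => x ∈ A j) ⊆ Finset.Ioi i := by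
      intro j hj
      rcases lt_or_ge i j with h' | h'
      · exact Finset.mem_Ioi.2 h'
      · exact absurd (hA j i h' (Finset.mem_filter.1 hj).2) hx
    have h2 := Finset.card_le_card h1
    rw [Fin.card_Ioi] at h2
    unfold lvl at h
    omega


lemma fiber_card_eq {d : ℕ} {K : Finset ℕ} {A B : Fin d → Finset (Fin n)}
    (hA : ∀ i j : Fin d, i ≤ j → A i ⊆ A j) (hB : ∀ i j : Fin d, i ≤ j → B i ⊆ B j)
    (hcard : ∀ (i : Fin d) (b : ℕ),
      ((A i).filter fun x => fb K x = b).card = ((B i).filter fun x => fb K x = b).card)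
    (c : ℕ × ℕ) :
    (Finset.univ.filter fun x : Fin n => (fb K x, lvl A x) = c).card =
      (Finset.univ.filter fun x : Fin n => (fb K x, lvl B x) = c).card := by
  obtain ⟨b, l⟩ := c
  have hcum : ∀ l : ℕ,
      (Finset.univ.filter fun x : Fin n => fb K x = b ∧ lvl A x ≤ l).card =
      (Finset.univ.filter fun x : Fin n => fb K x = b ∧ lvl B x ≤ l).card := by
    intro l
    rcases lt_or_ge l d with hl | hl
    · have eA : (Finset.univ.filter fun x : Fin n => fb K x = b ∧ lvl A x ≤ l)
          = (A ⟨l, hl⟩).filter fun x => fb K x = b := by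
        ext x
        simp only [Finset.mem_filter, Finset.mem_univ, true_and]
        rw [mem_iff_lvl_le hA x ⟨l, hl⟩]
        tauto
      have eB : (Finset.univ.filter fun x : Fin n => fb K x = b ∧ lvl B x ≤ l)
          = (B ⟨l, hl⟩).filter fun x => fb K x = b := by
        ext x
        simp only [Finset.mem_filter, Finset.mem_univ, true_and]
        rw [mem_iff_lvl_le hB x ⟨l, hl⟩]
        tauto
      rw [eA, eB, hcard]
    · have eA : (Finset.univ.filter fun x : Fin n => fb K x = b ∧ lvl A x ≤ l)
          = Finset.univ.filter fun x : Fin n => fb K x = b := by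
        ext x
        simp only [Finset.mem_filter, Finset.mem_univ, true_and]
        have := le_trans (lvl_le_d A x) hl
        tauto
      have eB : (Finset.univ.filter fun x : Fin n => fb K x = b ∧ lvl B x ≤ l)
          = Finset.univ.filter fun x : Fin n => fb K x = b := by
        ext x
        simp only [Finset.mem_filter, Finset.mem_univ, true_and]
        have := le_trans (lvl_le_d B x) hl
        tauto
      rw [eA, eB]
  have fibeq : ∀ (C : Fin n → ℕ),
      (Finset.univ.filter fun x : Fin n => (fb K x, C x) = (b, l)) =
      (Finset.univ.filter fun x : Fin n => fb K x = b ∧ C x = l) := by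
    intro C
    ext x
    simp [Prod.ext_iff]
  rw [fibeq (lvl A), fibeq (lvl B)]
  cases l with
  | zero =>
    have e0 : ∀ (C : Fin n → ℕ),
        (Finset.univ.filter fun x : Fin n => fb K x = b ∧ C x = 0) =
        (Finset.univ.filter fun x : Fin n => fb K x = b ∧ C x ≤ 0) := by
      intro C; ext x; simp [Nat.le_zero]
    rw [e0 (lvl A), e0 (lvl B)]
    exact hcum 0
  | succ l =>
    have esplit : ∀ (C : Fin n → ℕ),
        (Finset.univ.filter fun x : Fin n => fb K x = b ∧ C x = l + 1) =
        (Finset.univ.filter fun x : Fin n => fb K x = b ∧ C x ≤ l + 1) \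
          (Finset.univ.filter fun x : Fin n => fb K x = b ∧ C x ≤ l) := by
      intro C
      ext x
      simp only [Finset.mem_sdiff, Finset.mem_filter, Finset.mem_univ, true_and]
      omega
    have hsub : ∀ (C : Fin n → ℕ),
        (Finset.univ.filter fun x : Fin n => fb K x = b ∧ C x ≤ l) ⊆
        (Finset.univ.filter fun x : Fin n => fb K x = b ∧ C x ≤ l + 1) := by
      intro C x hx
      simp only [Finset.mem_filter, Finset.mem_univ, true_and] at *
      omega
    rw [esplit (lvl A), esplit (lvl B),
      Finset.card_sdiff_of_subset (hsub (lvl A)), Finset.card_sdiff_of_subset (hsub (lvl B)),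
      hcum l, hcum (l + 1)]


end PermutohedronA

open PermutohedronA in
theorem statement1 (n : ℕ) (hn : 2 ≤ n) (K : Finset ℕ) (hK : ∀ k ∈ K, k + 1 < n)
    (d : ℕ) (I : Fin d → Finset (Fin n))
    (hchain : ∀ i j : Fin d, i < j → I i ⊂ I j)
    (w : Fin d → Equiv.Perm (Fin n)) (hw : ∀ i, w i ∈ SK n K hK)
    (hmono : ∀ i j : Fin d, i ≤ j → (I i).image (w i) ⊆ (I j).image (w j)) :
    ∃ v ∈ SK n K hK, ∀ i, (I i).image v = (I i).image (w i) := by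
  classical
  have monoI : ∀ i j : Fin d, i ≤ j → I i ⊆ I j := by
    intro i j h
    rcases eq_or_lt_of_le h with rfl | h'
    · exact subset_rfl
    · exact (hchain i j h').subset
  let J : Fin d → Finset (Fin n) := fun i => (I i).image (w i)
  have monoJ : ∀ i j : Fin d, i ≤ j → J i ⊆ J j := hmono
  have hwf : ∀ (i : Fin d) (x : Fin n), fb K (w i x) = fb K x := fun i => SK_le_Hf hK (hw i)
  have hcard : ∀ (i : Fin d) (b : ℕ),
      ((I i).filter fun x => fb K x = b).card = ((J i).filter fun x => fb K x = b).card := by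
    intro i b
    have himg : (J i).filter (fun x => fb K x = b)
        = ((I i).filter fun x => fb K x = b).image (w i) := by
      ext y
      simp only [Finset.mem_filter, Finset.mem_image, J]
      constructor
      · rintro ⟨⟨x, hx, rfl⟩, hb⟩
        exact ⟨x, ⟨hx, by rw [← hwf i x]; exact hb⟩, rfl⟩
      · rintro ⟨x, ⟨hx, hb⟩, rfl⟩
        exact ⟨⟨x, hx, rfl⟩, by rw [hwf i x]; exact hb⟩
    rw [himg, Finset.card_image_of_injective _ (w i).injective]
  have hfib := fiber_card_eq monoI monoJ hcard
  have hfty : ∀ c : ℕ × ℕ,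
      Fintype.card {x : Fin n // (fb K x, lvl I x) = c} =
      Fintype.card {x : Fin n // (fb K x, lvl J x) = c} := by
    intro c
    rw [Fintype.card_subtype, Fintype.card_subtype]
    exact hfib c
  let ec : ∀ c : ℕ × ℕ,
      {x : Fin n // (fb K x, lvl I x) = c} ≃ {x : Fin n // (fb K x, lvl J x) = c} :=
    fun c => Fintype.equivOfCardEq (hfty c)
  let v : Equiv.Perm (Fin n) := Equiv.ofFiberEquiv ec
  have hvt : ∀ x, (fb K (v x), lvl J (v x)) = (fb K x, lvl I x) :=
    fun x => Equiv.ofFiberEquiv_map ec x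
  have hvf : ∀ x, fb K (v x) = fb K x := fun x => congrArg Prod.fst (hvt x)
  have hvl : ∀ x, lvl J (v x) = lvl I x := fun x => congrArg Prod.snd (hvt x)
  refine ⟨v, mem_SK_of_fb hK v hvf, ?_⟩
  intro i
  ext y
  show y ∈ (I i).image v ↔ y ∈ J i
  rw [mem_iff_lvl_le monoJ y i]
  simp only [Finset.mem_image]
  constructor
  · rintro ⟨x, hx, rfl⟩
    rw [hvl x]
    exact (mem_iff_lvl_le monoI x i).1 hx
  · intro h
    refine ⟨v.symm y, ?_, v.apply_symm_apply y⟩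
    apply (mem_iff_lvl_le monoI _ i).2
    rw [← hvl (v.symm y), v.apply_symm_apply]
    exact h
end

section
/- Proposition 3.9: The ideal 𝓘 + 𝓙 of ℚ[τ] is stable under the 𝔖_n-action permuting the variables (so 𝔖_K acts on the quotient A = ℚ[τ]/(𝓘+𝓙)), and the subalgebra A^{𝔖_K} of 𝔖_K-invariant elements is generated as a ℚ-algebra by the images in A of the orbit sums [τ_I] for I ∈ 𝔉_{A_{n−1}}. -/
noncomputable section

open MvPolynomial

namespace PermutohedronA

/-- `𝔉_{A_{n-1}}`: the nonempty proper subsets of `[n]`. -/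
abbrev FA (n : ℕ) := {I : Finset (Fin n) // I.Nonempty ∧ I ≠ Finset.univ}

/-- The action of a permutation `w` on `𝔉_{A_{n-1}}`, `I ↦ w(I)`. -/
def permFA (n : ℕ) (w : Equiv.Perm (Fin n)) (I : FA n) : FA n :=
  ⟨I.1.image w, I.2.1.image w, by
    intro h
    apply I.2.2
    have hc : (I.1.image w).card = I.1.card :=
      Finset.card_image_of_injective _ w.injective
    rw [h, Finset.card_univ] at hc
    exact Finset.eq_univ_of_card _ hc.symm⟩

/-- The ideal `𝓙` generated by products `τ_I τ_J` for incomparable `I, J`. -/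
def Jideal (n : ℕ) : Ideal (MvPolynomial (FA n) ℚ) :=
  Ideal.span {p | ∃ I J : FA n, ¬ I.1 ⊆ J.1 ∧ ¬ J.1 ⊆ I.1 ∧ p = X I * X J}

/-- The linear form `θ_j = Σ_I ([j ∈ I] − [j+1 ∈ I]) τ_I` (0-indexed `j`). -/
def theta (n : ℕ) (j : ℕ) (hj : j + 1 < n) : MvPolynomial (FA n) ℚ :=
  ∑ I : FA n,
    (((if (⟨j, Nat.lt_of_succ_lt hj⟩ : Fin n) ∈ I.1 then (1 : ℚ) else 0) -
      (if (⟨j + 1, hj⟩ : Fin n) ∈ I.1 then (1 : ℚ) else 0)) • X I)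

/-- The ideal `𝓘` generated by the linear forms `θ_j`, `j = 1, …, n-1`. -/
def Iideal (n : ℕ) : Ideal (MvPolynomial (FA n) ℚ) :=
  Ideal.span {p | ∃ j, ∃ hj : j + 1 < n, p = theta n j hj}

open scoped Classical in
/-- The orbit sum `[τ_I] = Σ_{J ∈ 𝔖_K · I} τ_J` (over the distinct members of
the `𝔖_K`-orbit of `I`). -/
def orbitSum (n : ℕ) (K : Finset ℕ) (hK : ∀ k ∈ K, k + 1 < n) (I : FA n) :
    MvPolynomial (FA n) ℚ :=
  ∑ J ∈ Finset.univ.filter (fun J : FA n => ∃ w ∈ SK n K hK, permFA n w I = J), X J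

end PermutohedronA


namespace P39
set_option maxHeartbeats 1000000
set_option synthInstance.maxHeartbeats 400000
open PermutohedronA MvPolynomial
open scoped Classical

variable {n : ℕ}

lemma permFA_one (I : FA n) : permFA n 1 I = I := by
  apply Subtype.ext
  simp [permFA]

lemma permFA_mul (v w : Equiv.Perm (Fin n)) (I : FA n) :
    permFA n (v * w) I = permFA n v (permFA n w I) := by
  apply Subtype.ext
  simp [permFA, Finset.image_image]

lemma permFA_inv_left (w : Equiv.Perm (Fin n)) (I : FA n) :
    permFA n w⁻¹ (permFA n w I) = I := by
  rw [← permFA_mul, inv_mul_cancel, permFA_one]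

lemma permFA_inv_right (w : Equiv.Perm (Fin n)) (I : FA n) :
    permFA n w (permFA n w⁻¹ I) = I := by
  rw [← permFA_mul, mul_inv_cancel, permFA_one]

/-- `permFA` as an equivalence. -/
def pe (w : Equiv.Perm (Fin n)) : FA n ≃ FA n where
  toFun := permFA n w
  invFun := permFA n w⁻¹
  left_inv := permFA_inv_left w
  right_inv := permFA_inv_right w

lemma mem_permFA (w : Equiv.Perm (Fin n)) (I : FA n) (x : Fin n) :
    w x ∈ (permFA n w I).1 ↔ x ∈ I.1 := by
  constructor
  · rintro h
    rcases Finset.mem_image.mp h with ⟨y, hy, hyx⟩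
    rwa [w.injective hyx] at hy
  · intro h
    exact Finset.mem_image_of_mem _ h

lemma card_permFA (w : Equiv.Perm (Fin n)) (I : FA n) :
    (permFA n w I).1.card = I.1.card :=
  Finset.card_image_of_injective _ w.injective

/-- The linear form `Σ_I ([a ∈ I] − [b ∈ I]) τ_I`. -/
def Lfun (a b : Fin n) : MvPolynomial (FA n) ℚ :=
  ∑ I : FA n,
    (((if a ∈ I.1 then (1 : ℚ) else 0) - (if b ∈ I.1 then (1 : ℚ) else 0)) • X I)

lemma theta_eq_L (j : ℕ) (hj : j + 1 < n) :
    theta n j hj = Lfun ⟨j, Nat.lt_of_succ_lt hj⟩ ⟨j + 1, hj⟩ := rfl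

lemma Lfun_self (a : Fin n) : Lfun a a = 0 := by
  simp [Lfun]

lemma Lfun_add (a b c : Fin n) : Lfun a b + Lfun b c = Lfun a c := by
  rw [Lfun, Lfun, Lfun, ← Finset.sum_add_distrib]
  congr 1
  funext I
  rw [← add_smul]
  ring_nf

lemma Lfun_mem_of_le : ∀ d : ℕ, ∀ a b : Fin n, b.1 = a.1 + d → Lfun a b ∈ Iideal n := by
  intro d
  induction d with
  | zero =>
    intro a b h
    have : a = b := Fin.ext (by omega)
    rw [this, Lfun_self]
    exact zero_mem _
  | succ d ih =>
    intro a b h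
    have ha : a.1 + 1 < n := by omega
    set a' : Fin n := ⟨a.1 + 1, ha⟩ with ha'
    have h1 : Lfun a a' ∈ Iideal n := by
      have : theta n a.1 ha = Lfun a a' := by
        rw [theta_eq_L]
      rw [← this]
      exact Ideal.subset_span ⟨a.1, ha, rfl⟩
    have h2 : Lfun a' b ∈ Iideal n := ih a' b (by simp [ha']; omega)
    rw [← Lfun_add a a' b]
    exact add_mem h1 h2

lemma Lfun_anti (a b : Fin n) : Lfun b a = -Lfun a b := by
  have := Lfun_add a b a
  rw [Lfun_self] at this
  linear_combination this

lemma Lfun_mem (a b : Fin n) : Lfun a b ∈ Iideal n := by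
  rcases le_or_gt a.1 b.1 with h | h
  · exact Lfun_mem_of_le (b.1 - a.1) a b (by omega)
  · rw [Lfun_anti]
    exact neg_mem (Lfun_mem_of_le (a.1 - b.1) b a (by omega))

lemma rename_theta (w : Equiv.Perm (Fin n)) (j : ℕ) (hj : j + 1 < n) :
    rename (permFA n w) (theta n j hj) =
      Lfun (w ⟨j, Nat.lt_of_succ_lt hj⟩) (w ⟨j + 1, hj⟩) := by
  rw [theta_eq_L, Lfun, map_sum, Lfun]
  apply Fintype.sum_equiv (pe w)
  intro I
  rw [map_smul, rename_X]
  congr 2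
  · congr 1
    exact (propext (mem_permFA w I _)).symm
  · congr 1
    exact (propext (mem_permFA w I _)).symm

lemma stability (w : Equiv.Perm (Fin n)) (p : MvPolynomial (FA n) ℚ)
    (hp : p ∈ Iideal n ⊔ Jideal n) :
    rename (permFA n w) p ∈ Iideal n ⊔ Jideal n := by
  have hsup : Iideal n ⊔ Jideal n =
      Ideal.span ({p | ∃ j, ∃ hj : j + 1 < n, p = theta n j hj} ∪
        {p | ∃ I J : FA n, ¬ I.1 ⊆ J.1 ∧ ¬ J.1 ⊆ I.1 ∧ p = X I * X J}) := by
    rw [Ideal.span_union]; rfl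
  have hle : (Iideal n ⊔ Jideal n).map
      ((rename (permFA n w) : MvPolynomial (FA n) ℚ →ₐ[ℚ] _) :
        MvPolynomial (FA n) ℚ →+* MvPolynomial (FA n) ℚ) ≤ Iideal n ⊔ Jideal n := by
    conv_lhs => rw [hsup]
    rw [Ideal.map_span, Ideal.span_le]
    rintro q ⟨q', hq', rfl⟩
    rcases hq' with ⟨j, hj, rfl⟩ | ⟨I, J, h1, h2, rfl⟩
    · apply Ideal.mem_sup_left
      show rename (permFA n w) (theta n j hj) ∈ _
      rw [rename_theta]
      exact Lfun_mem _ _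
    · apply Ideal.mem_sup_right
      show rename (permFA n w) (X I * X J) ∈ _
      rw [map_mul, rename_X, rename_X]
      refine Ideal.subset_span ⟨permFA n w I, permFA n w J, ?_, ?_, rfl⟩
      · exact fun hc => h1 ((Finset.image_subset_image_iff w.injective).mp hc)
      · exact fun hc => h2 ((Finset.image_subset_image_iff w.injective).mp hc)
  exact hle (Ideal.mem_map_of_mem _ hp)

variable {K : Finset ℕ}

/-- `a` and `b` are in the same `K`-block. -/
def same (K : Finset ℕ) (a b : Fin n) : Prop :=
  ∀ m : ℕ, min a.1 b.1 ≤ m → m < max a.1 b.1 → m ∈ K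

lemma same_refl (a : Fin n) : same K a a := fun m h1 h2 => by omega

lemma same_symm {a b : Fin n} (h : same K a b) : same K b a := fun m h1 h2 =>
  h m (by omega) (by omega)

lemma same_trans {a b c : Fin n} (h1 : same K a b) (h2 : same K b c) : same K a c := by
  intro m hm1 hm2
  by_cases hc1 : min a.1 b.1 ≤ m ∧ m < max a.1 b.1
  · exact h1 m hc1.1 hc1.2
  by_cases hc2 : min b.1 c.1 ≤ m ∧ m < max b.1 c.1
  · exact h2 m hc2.1 hc2.2
  · exfalso; omega

lemma same_of_swap {hK : ∀ k ∈ K, k + 1 < n} {k : ℕ} (hk : k ∈ K) (x : Fin n) :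
    same K x (Equiv.swap (⟨k, Nat.lt_of_succ_lt (hK k hk)⟩ : Fin n) ⟨k + 1, hK k hk⟩ x) := by
  set a : Fin n := ⟨k, Nat.lt_of_succ_lt (hK k hk)⟩
  set b : Fin n := ⟨k + 1, hK k hk⟩
  rcases eq_or_ne x a with rfl | hxa
  · rw [Equiv.swap_apply_left]
    intro m h1 h2
    have : m = k := by simp [a, b] at h1 h2 ⊢; omega
    rwa [this]
  rcases eq_or_ne x b with rfl | hxb
  · rw [Equiv.swap_apply_right]
    intro m h1 h2
    have : m = k := by simp [a, b] at h1 h2 ⊢; omega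
    rwa [this]
  · rw [Equiv.swap_apply_of_ne_of_ne hxa hxb]
    exact same_refl x

lemma same_of_mem_SK {hK : ∀ k ∈ K, k + 1 < n} {w : Equiv.Perm (Fin n)}
    (hw : w ∈ SK n K hK) : ∀ x : Fin n, same K x (w x) := by
  induction hw using Subgroup.closure_induction with
  | mem σ hσ =>
    rcases hσ with ⟨k, hk, rfl⟩
    exact fun x => same_of_swap hk x
  | one => intro x; simpa using same_refl x
  | mul σ τ hσ hτ ihσ ihτ =>
    intro x
    have h1 : same K x (τ x) := ihτ x
    have h2 : same K (τ x) (σ (τ x)) := ihσ (τ x)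
    simpa using same_trans h1 h2
  | inv σ hσ ihσ =>
    intro x
    have := ihσ (σ⁻¹ x)
    rw [← Equiv.Perm.mul_apply, mul_inv_cancel, Equiv.Perm.one_apply] at this
    exact same_symm this

def invSet (σ : Equiv.Perm (Fin n)) : Finset (Fin n × Fin n) :=
  Finset.univ.filter fun p => p.1 < p.2 ∧ σ p.2 < σ p.1

lemma eq_one_of_invSet_empty (σ : Equiv.Perm (Fin n)) (h : invSet σ = ∅) : σ = 1 := by
  have hm : StrictMono σ := by
    intro a b hab
    rcases lt_trichotomy (σ a) (σ b) with h1 | h1 | h1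
    · exact h1
    · exact absurd (σ.injective h1) (ne_of_lt hab)
    · exfalso
      have hmem : (a, b) ∈ invSet σ := by simp [invSet, hab, h1]
      rw [h] at hmem
      simp at hmem
  have hco : ⇑σ = id := by
    apply (StrictMono.range_inj hm strictMono_id).mp
    rw [σ.surjective.range_eq, Set.range_id]
  exact Equiv.ext fun x => congrFun hco x

lemma no_descent_mono (σ : Equiv.Perm (Fin n))
    (h : ∀ j : ℕ, ∀ hj : j + 1 < n, σ ⟨j, Nat.lt_of_succ_lt hj⟩ ≤ σ ⟨j + 1, hj⟩) :
    ∀ d : ℕ, ∀ a b : Fin n, b.1 = a.1 + d → σ a ≤ σ b := by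
  intro d
  induction d with
  | zero => intro a b hab; have : a = b := Fin.ext (by omega); rw [this]
  | succ d ih =>
    intro a b hab
    have ha : a.1 + 1 < n := by omega
    have h1 : σ a ≤ σ ⟨a.1 + 1, ha⟩ := by
      have := h a.1 ha
      simpa using this
    exact le_trans h1 (ih ⟨a.1 + 1, ha⟩ b (by simp; omega))

lemma exists_descent (σ : Equiv.Perm (Fin n)) (hne : invSet σ ≠ ∅) :
    ∃ j : ℕ, ∃ hj : j + 1 < n, σ ⟨j + 1, hj⟩ < σ ⟨j, Nat.lt_of_succ_lt hj⟩ := by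
  by_contra hcon
  push_neg at hcon
  have h : ∀ j : ℕ, ∀ hj : j + 1 < n, σ ⟨j, Nat.lt_of_succ_lt hj⟩ ≤ σ ⟨j + 1, hj⟩ :=
    fun j hj => hcon j hj
  obtain ⟨⟨a, b⟩, hab⟩ := Finset.nonempty_iff_ne_empty.mpr hne
  simp only [invSet, Finset.mem_filter, Finset.mem_univ, true_and] at hab
  have := no_descent_mono σ h (b.1 - a.1) a b (by omega)
  exact absurd hab.2 (not_lt.mpr this)

lemma invSet_lt (σ : Equiv.Perm (Fin n)) (j : ℕ) (hj : j + 1 < n)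
    (hd : σ ⟨j + 1, hj⟩ < σ ⟨j, Nat.lt_of_succ_lt hj⟩) :
    (invSet (σ * Equiv.swap ⟨j, Nat.lt_of_succ_lt hj⟩ ⟨j + 1, hj⟩)).card < (invSet σ).card := by
  set a : Fin n := ⟨j, Nat.lt_of_succ_lt hj⟩ with hadef
  set b : Fin n := ⟨j + 1, hj⟩ with hbdef
  set τ := Equiv.swap a b with hτdef
  have hab : a < b := by simp [hadef, hbdef, Fin.lt_def]
  have hmem : (a, b) ∈ invSet σ := by simp [invSet, hab, hd]
  have hcard : (invSet (σ * τ)).card ≤ ((invSet σ).erase (a, b)).card := by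
    apply Finset.card_le_card_of_injOn (fun p => (τ p.1, τ p.2))
    · rintro ⟨x, y⟩ hp
      simp only [Finset.mem_coe, invSet, Finset.mem_filter, Finset.mem_univ, true_and] at hp
      obtain ⟨hxy, hσ'⟩ := hp
      have hστ : σ (τ y) < σ (τ x) := hσ'
      have htxy : τ x < τ y := by
        rcases lt_trichotomy (τ x) (τ y) with h1 | h1 | h1
        · exact h1
        · exact absurd (τ.injective h1) (ne_of_lt hxy)
        · exfalso
          by_cases hxa : x = a
          · by_cases hyb : y = b
            · subst hxa; subst hyb
              rw [Equiv.swap_apply_left, Equiv.swap_apply_right] at hστ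
              exact absurd hστ (not_lt.mpr (le_of_lt hd))
            · have hya : y ≠ a := by intro hc; rw [hxa, hc] at hxy; exact lt_irrefl _ hxy
              subst hxa
              rw [Equiv.swap_apply_left, Equiv.swap_apply_of_ne_of_ne hya hyb] at h1
              rw [Fin.lt_def] at hxy h1
              simp [hadef, hbdef] at hxy h1
              omega
          · by_cases hxb : x = b
            · subst hxb
              have hya : y ≠ a := by
                intro hc; subst hc
                rw [Fin.lt_def] at hxy
                simp only [hadef, hbdef, Fin.val_mk] at hxy
                omega
              have hyb : y ≠ b := ne_of_gt hxy
              rw [Equiv.swap_apply_right, Equiv.swap_apply_of_ne_of_ne hya hyb] at h1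
              rw [Fin.lt_def] at hxy h1
              simp [hadef, hbdef] at hxy h1
              omega
            · rw [Equiv.swap_apply_of_ne_of_ne hxa hxb] at h1
              by_cases hya : y = a
              · subst hya
                rw [Equiv.swap_apply_left] at h1
                rw [Fin.lt_def] at hxy h1
                simp [hadef, hbdef] at hxy h1
                omega
              · by_cases hyb : y = b
                · subst hyb
                  rw [Equiv.swap_apply_right] at h1
                  rw [Fin.lt_def] at hxy h1
                  have hxa' : x.1 ≠ j := fun hc => hxa (Fin.ext hc)
                  simp [hadef, hbdef] at hxy h1
                  omega
                · rw [Equiv.swap_apply_of_ne_of_ne hya hyb] at h1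
                  exact absurd hxy (not_lt.mpr (le_of_lt h1))
      have hne : (τ x, τ y) ≠ (a, b) := by
        intro hc
        have hx : τ x = a := congrArg Prod.fst hc
        have hy : τ y = b := congrArg Prod.snd hc
        have : x = τ a := by rw [← hx, Equiv.swap_apply_self]  -- τ (τ x) = x
        rw [Equiv.swap_apply_left] at this
        have hy' : y = τ b := by rw [← hy, Equiv.swap_apply_self]
        rw [Equiv.swap_apply_right] at hy'
        rw [this, hy'] at hxy
        exact absurd hab (not_lt.mpr (le_of_lt hxy))
      rw [Finset.mem_coe, Finset.mem_erase]
      refine ⟨hne, ?_⟩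
      simp [invSet, htxy, hστ]
    · rintro ⟨x, y⟩ _ ⟨x', y'⟩ _ hpq
      simp only [Prod.mk.injEq] at hpq ⊢
      exact ⟨τ.injective hpq.1, τ.injective hpq.2⟩
  have hlt : ((invSet σ).erase (a, b)).card < (invSet σ).card :=
    Finset.card_erase_lt_of_mem hmem
  omega

lemma mem_SK_of_same (hK : ∀ k ∈ K, k + 1 < n) :
    ∀ N : ℕ, ∀ σ : Equiv.Perm (Fin n), (invSet σ).card ≤ N →
      (∀ x, same K x (σ x)) → σ ∈ SK n K hK := by
  intro N
  induction N with
  | zero =>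
    intro σ h _
    have : invSet σ = ∅ := Finset.card_eq_zero.mp (Nat.le_zero.mp h)
    rw [eq_one_of_invSet_empty σ this]
    exact one_mem _
  | succ N ih =>
    intro σ h hsame
    by_cases h0 : invSet σ = ∅
    · rw [eq_one_of_invSet_empty σ h0]
      exact one_mem _
    · obtain ⟨j, hj, hd⟩ := exists_descent σ h0
      have hjK : j ∈ K := by
        by_contra hjK
        have h1 : (σ ⟨j, Nat.lt_of_succ_lt hj⟩).1 ≤ j := by
          by_contra hgt
          push_neg at hgt
          exact hjK (hsame ⟨j, Nat.lt_of_succ_lt hj⟩ j (by simp only [Fin.val_mk]; omega)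
            (by simp only [Fin.val_mk]; omega))
        have h2 : j + 1 ≤ (σ ⟨j + 1, hj⟩).1 := by
          by_contra hlt
          push_neg at hlt
          exact hjK (hsame ⟨j + 1, hj⟩ j (by simp only [Fin.val_mk]; omega)
            (by simp only [Fin.val_mk]; omega))
        rw [Fin.lt_def] at hd
        omega
      set a : Fin n := ⟨j, Nat.lt_of_succ_lt (hK j hjK)⟩ with hadef
      set b : Fin n := ⟨j + 1, hK j hjK⟩ with hbdef
      set τ := Equiv.swap a b with hτdef
      have hτ : τ ∈ SK n K hK := Subgroup.subset_closure ⟨j, hjK, rfl⟩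
      have hab' : a = (⟨j, Nat.lt_of_succ_lt hj⟩ : Fin n) := rfl
      have hbb' : b = (⟨j + 1, hj⟩ : Fin n) := rfl
      have hσ' : σ * τ ∈ SK n K hK := by
        apply ih (σ * τ)
        · have := invSet_lt σ j hj hd
          have he : Equiv.swap (⟨j, Nat.lt_of_succ_lt hj⟩ : Fin n) ⟨j + 1, hj⟩ = τ := by
            rw [hτdef, hab', hbb']
          rw [he] at this
          omega
        · intro x
          have h1 : same K x (τ x) := same_of_swap (hK := hK) hjK x
          have h2 : same K (τ x) (σ (τ x)) := hsame (τ x)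
          exact same_trans h1 h2
      have hfin : σ = (σ * τ) * τ := by
        rw [mul_assoc, hτdef, Equiv.swap_mul_self, mul_one]
      rw [hfin]
      exact mul_mem hσ' hτ

variable (K) in
/-- The `K`-block of `y`, as a finset. -/
def cls (y : Fin n) : Finset (Fin n) := Finset.univ.filter fun z => same K y z

lemma mem_cls_self (y : Fin n) : y ∈ cls K y := by
  simp [cls, same_refl]

lemma cls_eq_of_same {y z : Fin n} (h : same K y z) : cls K y = cls K z := by
  ext u
  simp only [cls, Finset.mem_filter, Finset.mem_univ, true_and]
  exact ⟨fun h2 => same_trans (same_symm h) h2, fun h2 => same_trans h h2⟩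

lemma same_of_cls_eq {y z : Fin n} (h : cls K y = cls K z) : same K y z := by
  have : z ∈ cls K y := h ▸ mem_cls_self z
  simpa [cls] using this

variable {hK : ∀ k ∈ K, k + 1 < n}

lemma cls_perm {w : Equiv.Perm (Fin n)} (hw : w ∈ SK n K hK) (u : Fin n) :
    cls K (w u) = cls K u :=
  (cls_eq_of_same (same_of_mem_SK hw u)).symm

lemma filter_cls_image {w : Equiv.Perm (Fin n)} (hw : w ∈ SK n K hK)
    (I : Finset (Fin n)) (c : Finset (Fin n)) :
    ((I.image w).filter fun y => cls K y = c).card =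
      (I.filter fun y => cls K y = c).card := by
  have himg : (I.image w).filter (fun y => cls K y = c) =
      (I.filter fun y => cls K y = c).image w := by
    rw [Finset.filter_image]
    congr 1
    apply Finset.filter_congr
    intro a _
    rw [cls_perm (hK := hK) hw a]
  rw [himg, Finset.card_image_of_injective _ w.injective]

section Flag

variable (hK)
variable (s : Finset (FA n)) (t : FA n → FA n)

/-- membership pattern of `y` w.r.t. the flag `s`. -/
def Dpat (y : Fin n) : Finset (FA n) := s.filter fun I => y ∈ I.1

/-- membership pattern of `y` w.r.t. the image flag. -/
def Dpat' (y : Fin n) : Finset (FA n) := s.filter fun I => y ∈ (t I).1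

variable {s t}
variable (hchain : ∀ I ∈ s, ∀ J ∈ s, I.1 ⊆ J.1 ∨ J.1 ⊆ I.1)
  (ht : ∀ I ∈ s, ∃ w ∈ SK n K hK, permFA n w I = t I)
  (htc : ∀ I ∈ s, ∀ J ∈ s, (t I).1 ⊆ (t J).1 ∨ (t J).1 ⊆ (t I).1)

section
include hchain ht htc

omit hchain htc in
lemma card_t (I : FA n) (hI : I ∈ s) : (t I).1.card = I.1.card := by
  obtain ⟨w, hw, hwI⟩ := ht I hI
  rw [← hwI]
  exact card_permFA w I

lemma t_mono (I : FA n) (hI : I ∈ s) (J : FA n) (hJ : J ∈ s) (hIJ : I.1 ⊆ J.1) :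
    (t I).1 ⊆ (t J).1 := by
  rcases htc I hI J hJ with h | h
  · exact h
  · have h1 : J.1.card ≤ I.1.card := by
      have := Finset.card_le_card h
      rwa [card_t hK ht I hI, card_t hK ht J hJ] at this
    have : I = J := Subtype.ext (Finset.eq_of_subset_of_card_le hIJ h1)
    rw [this]

lemma count_superset (c : Finset (Fin n)) (S : Finset (FA n)) :
    (Finset.univ.filter fun y : Fin n => cls K y = c ∧ S ⊆ Dpat s y).card =
      (Finset.univ.filter fun y : Fin n => cls K y = c ∧ S ⊆ Dpat' s t y).card := by
  rcases S.eq_empty_or_nonempty with rfl | hS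
  · simp
  by_cases hSs : S ⊆ s
  swap
  · have h1 : ∀ y : Fin n, ¬ (S ⊆ Dpat s y) := fun y hy =>
      hSs (hy.trans (Finset.filter_subset _ _))
    have h2 : ∀ y : Fin n, ¬ (S ⊆ Dpat' s t y) := fun y hy =>
      hSs (hy.trans (Finset.filter_subset _ _))
    simp [h1, h2]
  -- minimum of S
  obtain ⟨I₀, hI₀S, hI₀min⟩ := Finset.exists_min_image S (fun I => I.1.card) hS
  have hI₀s : I₀ ∈ s := hSs hI₀S
  have hmin : ∀ I ∈ S, I₀.1 ⊆ I.1 := by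
    intro I hI
    rcases hchain I₀ hI₀s I (hSs hI) with h | h
    · exact h
    · have heq := Finset.eq_of_subset_of_card_le h (hI₀min I hI)
      rw [heq]
  have hD : ∀ y : Fin n, S ⊆ Dpat s y ↔ y ∈ I₀.1 := by
    intro y
    constructor
    · intro h
      have := h hI₀S
      simp only [Dpat, Finset.mem_filter] at this
      exact this.2
    · intro hy I hI
      simp only [Dpat, Finset.mem_filter]
      exact ⟨hSs hI, hmin I hI hy⟩
  have hD' : ∀ y : Fin n, S ⊆ Dpat' s t y ↔ y ∈ (t I₀).1 := by
    intro y
    constructor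
    · intro h
      have := h hI₀S
      simp only [Dpat', Finset.mem_filter] at this
      exact this.2
    · intro hy I hI
      simp only [Dpat', Finset.mem_filter]
      exact ⟨hSs hI, t_mono hK hchain ht htc I₀ hI₀s I (hSs hI) (hmin I hI) hy⟩
  have e1 : (Finset.univ.filter fun y : Fin n => cls K y = c ∧ S ⊆ Dpat s y) =
      I₀.1.filter fun y => cls K y = c := by
    ext y
    simp only [Finset.mem_filter, Finset.mem_univ, true_and, hD]
    tauto
  have e2 : (Finset.univ.filter fun y : Fin n => cls K y = c ∧ S ⊆ Dpat' s t y) =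
      (t I₀).1.filter fun y => cls K y = c := by
    ext y
    simp only [Finset.mem_filter, Finset.mem_univ, true_and, hD']
    tauto
  rw [e1, e2]
  obtain ⟨w, hw, hwI⟩ := ht I₀ hI₀s
  rw [← hwI]
  exact (filter_cls_image (hK := hK) hw I₀.1 c).symm

lemma count_exact (c : Finset (Fin n)) (S : Finset (FA n)) :
    (Finset.univ.filter fun y : Fin n => cls K y = c ∧ Dpat s y = S).card =
      (Finset.univ.filter fun y : Fin n => cls K y = c ∧ Dpat' s t y = S).card := by
  suffices H : ∀ d : ℕ, ∀ S : Finset (FA n), s.card - S.card = d →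
      (Finset.univ.filter fun y : Fin n => cls K y = c ∧ Dpat s y = S).card =
        (Finset.univ.filter fun y : Fin n => cls K y = c ∧ Dpat' s t y = S).card by
    exact H _ S rfl
  intro d
  induction d using Nat.strong_induction_on with
  | _ d ih =>
  intro S hd
  by_cases hSs : S ⊆ s
  swap
  · have h1 : ∀ y : Fin n, Dpat s y ≠ S := fun y hy =>
      hSs (hy ▸ Finset.filter_subset _ _)
    have h2 : ∀ y : Fin n, Dpat' s t y ≠ S := fun y hy =>
      hSs (hy ▸ Finset.filter_subset _ _)
    simp [h1, h2]
  set T := s.powerset.filter (fun S' => S ⊆ S') with hT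
  have hST : S ∈ T := by simp [hT, hSs]
  have hA : (Finset.univ.filter fun y : Fin n => cls K y = c ∧ S ⊆ Dpat s y).card
      = ∑ S' ∈ T, (Finset.univ.filter fun y : Fin n => cls K y = c ∧ Dpat s y = S').card := by
    rw [Finset.card_eq_sum_card_fiberwise (f := Dpat s) (t := T)]
    · apply Finset.sum_congr rfl
      intro S' hS'
      have hSS' : S ⊆ S' := (Finset.mem_filter.mp hS').2
      congr 1
      ext y
      simp only [Finset.mem_filter, Finset.mem_univ, true_and]
      constructor
      · rintro ⟨⟨h1, _⟩, h3⟩; exact ⟨h1, h3⟩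
      · rintro ⟨h1, h3⟩; exact ⟨⟨h1, h3 ▸ hSS'⟩, h3⟩
    · intro y hy
      simp only [Finset.mem_coe, Finset.mem_filter, Finset.mem_univ, true_and] at hy
      simp only [Finset.mem_coe, hT, Finset.mem_filter, Finset.mem_powerset]
      exact ⟨Finset.filter_subset _ _, hy.2⟩
  have hA' : (Finset.univ.filter fun y : Fin n => cls K y = c ∧ S ⊆ Dpat' s t y).card
      = ∑ S' ∈ T, (Finset.univ.filter fun y : Fin n => cls K y = c ∧ Dpat' s t y = S').card := by
    rw [Finset.card_eq_sum_card_fiberwise (f := Dpat' s t) (t := T)]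
    · apply Finset.sum_congr rfl
      intro S' hS'
      have hSS' : S ⊆ S' := (Finset.mem_filter.mp hS').2
      congr 1
      ext y
      simp only [Finset.mem_filter, Finset.mem_univ, true_and]
      constructor
      · rintro ⟨⟨h1, _⟩, h3⟩; exact ⟨h1, h3⟩
      · rintro ⟨h1, h3⟩; exact ⟨⟨h1, h3 ▸ hSS'⟩, h3⟩
    · intro y hy
      simp only [Finset.mem_coe, Finset.mem_filter, Finset.mem_univ, true_and] at hy
      simp only [Finset.mem_coe, hT, Finset.mem_filter, Finset.mem_powerset]
      exact ⟨Finset.filter_subset _ _, hy.2⟩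
  have hsum : (Finset.univ.filter fun y : Fin n => cls K y = c ∧ Dpat s y = S).card +
      ∑ S' ∈ T.erase S,
        (Finset.univ.filter fun y : Fin n => cls K y = c ∧ Dpat s y = S').card =
      ∑ S' ∈ T, (Finset.univ.filter fun y : Fin n => cls K y = c ∧ Dpat s y = S').card :=
    Finset.add_sum_erase T
      (fun S' => (Finset.univ.filter fun y : Fin n => cls K y = c ∧ Dpat s y = S').card) hST
  have hsum' : (Finset.univ.filter fun y : Fin n => cls K y = c ∧ Dpat' s t y = S).card +
      ∑ S' ∈ T.erase S,
        (Finset.univ.filter fun y : Fin n => cls K y = c ∧ Dpat' s t y = S').card =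
      ∑ S' ∈ T, (Finset.univ.filter fun y : Fin n => cls K y = c ∧ Dpat' s t y = S').card :=
    Finset.add_sum_erase T
      (fun S' => (Finset.univ.filter fun y : Fin n => cls K y = c ∧ Dpat' s t y = S').card) hST
  have hih : ∀ S' ∈ T.erase S,
      (Finset.univ.filter fun y : Fin n => cls K y = c ∧ Dpat s y = S').card =
        (Finset.univ.filter fun y : Fin n => cls K y = c ∧ Dpat' s t y = S').card := by
    intro S' hS'
    have hne : S' ≠ S := (Finset.mem_erase.mp hS').1
    have hmem := (Finset.mem_erase.mp hS').2
    have hS's : S' ⊆ s := Finset.mem_powerset.mp (Finset.mem_filter.mp hmem).1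
    have hSS' : S ⊆ S' := (Finset.mem_filter.mp hmem).2
    have hlt : S.card < S'.card := Finset.card_lt_card (Finset.ssubset_iff_subset_ne.mpr ⟨hSS', hne.symm⟩)
    have hle' : S'.card ≤ s.card := Finset.card_le_card hS's
    have hle : S.card ≤ s.card := Finset.card_le_card hSs
    exact ih (s.card - S'.card) (by omega) S' rfl
  have heq : ∑ S' ∈ T.erase S,
      (Finset.univ.filter fun y : Fin n => cls K y = c ∧ Dpat s y = S').card =
      ∑ S' ∈ T.erase S,
      (Finset.univ.filter fun y : Fin n => cls K y = c ∧ Dpat' s t y = S').card :=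
    Finset.sum_congr rfl hih
  have hsup := count_superset hK hchain ht htc c S
  omega

lemma flag_trans : ∃ w ∈ SK n K hK, ∀ I ∈ s, permFA n w I = t I := by
  have hcount : ∀ p : Finset (Fin n) × Finset (FA n),
      Fintype.card {y : Fin n // (cls K y, Dpat s y) = p} =
        Fintype.card {y : Fin n // (cls K y, Dpat' s t y) = p} := by
    rintro ⟨c, S⟩
    rw [Fintype.card_subtype, Fintype.card_subtype]
    have h := count_exact hK hchain ht htc c S
    have e1 : (Finset.univ.filter fun y : Fin n => (cls K y, Dpat s y) = (c, S)) =
        (Finset.univ.filter fun y : Fin n => cls K y = c ∧ Dpat s y = S) := by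
      apply Finset.filter_congr; intro y _; simp [Prod.ext_iff]
    have e2 : (Finset.univ.filter fun y : Fin n => (cls K y, Dpat' s t y) = (c, S)) =
        (Finset.univ.filter fun y : Fin n => cls K y = c ∧ Dpat' s t y = S) := by
      apply Finset.filter_congr; intro y _; simp [Prod.ext_iff]
    rw [e1, e2, h]
  let σ : Equiv.Perm (Fin n) :=
    Equiv.ofFiberEquiv (f := fun y : Fin n => (cls K y, Dpat s y))
      (g := fun y : Fin n => (cls K y, Dpat' s t y))
      (fun p => Fintype.equivOfCardEq (hcount p))
  have hσ : ∀ y, (cls K (σ y), Dpat' s t (σ y)) = (cls K y, Dpat s y) := fun y =>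
    Equiv.ofFiberEquiv_map (f := fun y : Fin n => (cls K y, Dpat s y))
      (g := fun y : Fin n => (cls K y, Dpat' s t y))
      (fun p => Fintype.equivOfCardEq (hcount p)) y
  have hcls : ∀ y, cls K (σ y) = cls K y := fun y => congrArg Prod.fst (hσ y)
  have hD : ∀ y, Dpat' s t (σ y) = Dpat s y := fun y => congrArg Prod.snd (hσ y)
  have hσSK : σ ∈ SK n K hK :=
    mem_SK_of_same hK (invSet σ).card σ le_rfl
      (fun y => same_symm (same_of_cls_eq (hcls y)))
  refine ⟨σ, hσSK, ?_⟩
  intro I hI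
  apply Subtype.ext
  show I.1.image σ = (t I).1
  ext x
  simp only [Finset.mem_image]
  constructor
  · rintro ⟨y, hy, rfl⟩
    have hmem : I ∈ Dpat s y := by simp [Dpat, hI, hy]
    rw [← hD y] at hmem
    simp only [Dpat', Finset.mem_filter] at hmem
    exact hmem.2
  · intro hx
    refine ⟨σ.symm x, ?_, σ.apply_symm_apply x⟩
    have hmem : I ∈ Dpat' s t (σ (σ.symm x)) := by
      rw [σ.apply_symm_apply]
      simp [Dpat', hI, hx]
    rw [hD] at hmem
    simp only [Dpat, Finset.mem_filter] at hmem
    exact hmem.2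

end
end Flag

section Main

variable (hK : ∀ k ∈ K, k + 1 < n)

/-- The quotient map. -/
abbrev mkq : MvPolynomial (FA n) ℚ →+* MvPolynomial (FA n) ℚ ⧸ (Iideal n ⊔ Jideal n) :=
  Ideal.Quotient.mk (Iideal n ⊔ Jideal n)

/-- image of a variable. -/
def Q (J : FA n) : MvPolynomial (FA n) ℚ ⧸ (Iideal n ⊔ Jideal n) := mkq (X J)

lemma Q_mul_incomp {J J' : FA n} (h1 : ¬ J.1 ⊆ J'.1) (h2 : ¬ J'.1 ⊆ J.1) :
    Q J * Q J' = 0 := by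
  have : mkq (X J * X J') = 0 := by
    rw [mkq, Ideal.Quotient.eq_zero_iff_mem]
    exact Ideal.mem_sup_right (Ideal.subset_span ⟨J, J', h1, h2, rfl⟩)
  rw [← this, mkq, map_mul]
  rfl

/-- The orbit of `I` as a finset. -/
def orb (I : FA n) : Finset (FA n) :=
  Finset.univ.filter fun J : FA n => ∃ w ∈ SK n K hK, permFA n w I = J

lemma card_of_mem_orb {I J : FA n} (hJ : J ∈ orb hK I) : J.1.card = I.1.card := by
  simp only [orb, Finset.mem_filter, Finset.mem_univ, true_and] at hJ
  obtain ⟨w, _, rfl⟩ := hJ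
  exact card_permFA w I

lemma incomp_of_mem_orb {I J J' : FA n} (hJ : J ∈ orb hK I) (hJ' : J' ∈ orb hK I)
    (hne : J ≠ J') : ¬ J.1 ⊆ J'.1 ∧ ¬ J'.1 ⊆ J.1 := by
  have hc : J.1.card = J'.1.card := by
    rw [card_of_mem_orb hK hJ, card_of_mem_orb hK hJ']
  constructor
  · intro hsub
    exact hne (Subtype.ext (Finset.eq_of_subset_of_card_le hsub (le_of_eq hc.symm)))
  · intro hsub
    exact hne (Subtype.ext (Finset.eq_of_subset_of_card_le hsub (le_of_eq hc)).symm)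

lemma mkq_orbitSum (I : FA n) :
    mkq (orbitSum n K hK I) = ∑ J ∈ orb hK I, Q J := by
  rw [orbitSum, map_sum]
  rfl

lemma orbitSum_pow (I : FA n) (a : ℕ) (ha : 1 ≤ a) :
    (mkq (orbitSum n K hK I)) ^ a = ∑ J ∈ orb hK I, Q J ^ a := by
  induction a with
  | zero => omega
  | succ a ih =>
    rcases Nat.eq_or_lt_of_le ha with h1 | h1
    · rw [← h1]
      simp [mkq_orbitSum]
    · have ha' : 1 ≤ a := by omega
      rw [pow_succ, ih ha', mkq_orbitSum, Finset.sum_mul_sum]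
      apply Finset.sum_congr rfl
      intro J hJ
      have h0 : ∀ J' ∈ orb hK I, J' ≠ J → Q J ^ a * Q J' = 0 := by
        intro J' hJ' hne
        obtain ⟨b, hb⟩ : ∃ b, a = b + 1 := ⟨a - 1, by omega⟩
        obtain ⟨hi1, hi2⟩ := incomp_of_mem_orb hK hJ hJ' (Ne.symm hne)
        calc Q J ^ a * Q J' = Q J ^ b * (Q J * Q J') := by rw [hb, pow_succ, mul_assoc]
        _ = 0 := by rw [Q_mul_incomp hi1 hi2, mul_zero]
      rw [Finset.sum_eq_single_of_mem J hJ h0, ← pow_succ]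

lemma prod_eq_zero_of_incomp {ι : Type} [Fintype ι] [DecidableEq ι] (f : ι → FA n)
    (e : ι → ℕ) (he : ∀ i, 1 ≤ e i) (i j : ι) (hne : i ≠ j)
    (h1 : ¬ (f i).1 ⊆ (f j).1) (h2 : ¬ (f j).1 ⊆ (f i).1) :
    ∏ k : ι, Q (f k) ^ e k = 0 := by
  rw [← Finset.mul_prod_erase Finset.univ _ (Finset.mem_univ i)]
  rw [← Finset.mul_prod_erase (Finset.univ.erase i) _
    (Finset.mem_erase.mpr ⟨hne.symm, Finset.mem_univ j⟩)]
  obtain ⟨a, hae⟩ : ∃ a, e i = a + 1 := ⟨e i - 1, by have := he i; omega⟩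
  obtain ⟨b, hbe⟩ : ∃ b, e j = b + 1 := ⟨e j - 1, by have := he j; omega⟩
  rw [hae, hbe]
  have : Q (f i) ^ (a + 1) * (Q (f j) ^ (b + 1) *
      ∏ k ∈ (Finset.univ.erase i).erase j, Q (f k) ^ e k) =
      (Q (f i) * Q (f j)) * (Q (f i) ^ a * Q (f j) ^ b *
      ∏ k ∈ (Finset.univ.erase i).erase j, Q (f k) ^ e k) := by
    ring
  rw [this, Q_mul_incomp h1 h2, zero_mul]

/-- The generating set. -/
def genset : Set (MvPolynomial (FA n) ℚ ⧸ (Iideal n ⊔ Jideal n)) :=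
  {x | ∃ I : FA n, x = Ideal.Quotient.mk _ (orbitSum n K hK I)}

/-- The finset of elements of `𝔖_K`. -/
def GF : Finset (Equiv.Perm (Fin n)) :=
  Finset.univ.filter fun w : Equiv.Perm (Fin n) => w ∈ SK n K hK

lemma mem_GF {w : Equiv.Perm (Fin n)} : w ∈ GF hK ↔ w ∈ SK n K hK := by
  simp [GF]

lemma mkq_rename_monomial (m : FA n →₀ ℕ) (w : Equiv.Perm (Fin n)) :
    mkq (rename (permFA n w) (monomial m (1 : ℚ))) =
      ∏ i : {I : FA n // I ∈ m.support}, Q (permFA n w i.1) ^ m i.1 := by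
  rw [monomial_eq, C_1, one_mul, Finsupp.prod]
  calc mkq (rename (permFA n w) (∏ I ∈ m.support, X I ^ m I))
      = ∏ I ∈ m.support, Q (permFA n w I) ^ m I := by
        rw [map_prod, map_prod]
        apply Finset.prod_congr rfl
        intro I hI
        rw [map_pow, map_pow, rename_X]
        rfl
    _ = ∏ i : {I : FA n // I ∈ m.support}, Q (permFA n w i.1) ^ m i.1 :=
        (Finset.prod_coe_sort _ _).symm

lemma mk_Tm_mem (m : FA n →₀ ℕ) :
    mkq (∑ w ∈ GF hK, rename (permFA n w) (monomial m (1 : ℚ))) ∈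
      Algebra.adjoin ℚ (genset hK) := by
  classical
  rw [map_sum]
  rw [Finset.sum_congr rfl (fun w _ => mkq_rename_monomial m w)]
  by_cases hchain : ∀ I ∈ m.support, ∀ J ∈ m.support, I.1 ⊆ J.1 ∨ J.1 ⊆ I.1
  swap
  · -- non-chain support: every term vanishes
    push_neg at hchain
    obtain ⟨I, hI, J, hJ, hIJ, hJI⟩ := hchain
    have hzero : ∀ w : Equiv.Perm (Fin n),
        ∏ i : {I : FA n // I ∈ m.support}, Q (permFA n w i.1) ^ m i.1 = 0 := by
      intro w
      refine prod_eq_zero_of_incomp _ _ (fun i => ?_) ⟨I, hI⟩ ⟨J, hJ⟩ ?_ ?_ ?_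
      · have := Finsupp.mem_support_iff.mp i.2
        omega
      · intro hc
        apply hIJ
        cases Subtype.mk_eq_mk.mp hc
        exact subset_rfl
      · intro hc
        exact hIJ ((Finset.image_subset_image_iff w.injective).mp hc)
      · intro hc
        exact hJI ((Finset.image_subset_image_iff w.injective).mp hc)
    rw [Finset.sum_congr rfl (fun w _ => hzero w)]
    simp only [Finset.sum_const_zero]
    exact Subalgebra.zero_mem _
  -- chain case
  set s := m.support with hs
  set φ : Equiv.Perm (Fin n) → ({I : FA n // I ∈ s} → FA n) :=
    fun w i => permFA n w i.1 with hφ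
  set F : ({I : FA n // I ∈ s} → FA n) → MvPolynomial (FA n) ℚ ⧸ (Iideal n ⊔ Jideal n) :=
    fun t => ∏ i : {I : FA n // I ∈ s}, Q (t i) ^ m i.1 with hF
  -- the product of orbit sums
  have hP : (∏ i : {I : FA n // I ∈ s},
      (Ideal.Quotient.mk (Iideal n ⊔ Jideal n) (orbitSum n K hK i.1)) ^ m i.1) =
      ∑ t ∈ Fintype.piFinset (fun i : {I : FA n // I ∈ s} => orb hK i.1), F t := by
    have h1 : ∀ i : {I : FA n // I ∈ s},
        (Ideal.Quotient.mk (Iideal n ⊔ Jideal n) (orbitSum n K hK i.1)) ^ m i.1 =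
          ∑ J ∈ orb hK i.1, Q J ^ m i.1 := by
      intro i
      exact orbitSum_pow hK i.1 (m i.1) (by have := Finsupp.mem_support_iff.mp i.2; omega)
    rw [Finset.prod_congr rfl (fun i _ => h1 i), Finset.prod_univ_sum]
  -- restrict to comparable tuples
  have hC : ∑ t ∈ Fintype.piFinset (fun i : {I : FA n // I ∈ s} => orb hK i.1), F t =
      ∑ t ∈ (GF hK).image φ, F t := by
    apply (Finset.sum_subset ?hsub ?hzero).symm
    case hsub =>
      intro t hti
      rw [Finset.mem_image] at hti
      obtain ⟨w, hw, rfl⟩ := hti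
      rw [Fintype.mem_piFinset]
      intro i
      simp only [orb, Finset.mem_filter, Finset.mem_univ, true_and]
      exact ⟨w, (mem_GF hK).mp hw, rfl⟩
    case hzero =>
      intro t ht htn
      by_cases hcomp : ∀ i j : {I : FA n // I ∈ s}, (t i).1 ⊆ (t j).1 ∨ (t j).1 ⊆ (t i).1
      · -- comparable tuple: it is in the image, contradiction
        exfalso
        apply htn
        rw [Fintype.mem_piFinset] at ht
        set tt : FA n → FA n := fun I => if h : I ∈ s then t ⟨I, h⟩ else I with htt
        have hwex : ∃ w ∈ SK n K hK, ∀ I ∈ s, permFA n w I = tt I := by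
          apply flag_trans hK hchain
          · intro I hI
            have := ht ⟨I, hI⟩
            simp only [orb, Finset.mem_filter, Finset.mem_univ, true_and] at this
            obtain ⟨w, hw, hweq⟩ := this
            exact ⟨w, hw, by rw [hweq, htt]; simp [hI]⟩
          · intro I hI J hJ
            have := hcomp ⟨I, hI⟩ ⟨J, hJ⟩
            simpa [htt, hI, hJ] using this
        obtain ⟨w, hw, hweq⟩ := hwex
        rw [Finset.mem_image]
        refine ⟨w, (mem_GF hK).mpr hw, ?_⟩
        funext i
        show permFA n w i.1 = t i
        rw [hweq i.1 i.2]
        show (if h : i.1 ∈ s then t ⟨i.1, h⟩ else i.1) = t i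
        rw [dif_pos i.2]
      · push_neg at hcomp
        obtain ⟨i, j, hij1, hij2⟩ := hcomp
        have hne : i ≠ j := by
          intro hc
          subst hc
          exact hij1 (subset_rfl)
        exact prod_eq_zero_of_incomp _ _
          (fun i => by have := Finsupp.mem_support_iff.mp i.2; omega) i j hne hij1 hij2
  -- fibers of φ on GF all have the same cardinality
  have hfib : ∀ t ∈ (GF hK).image φ,
      ((GF hK).filter fun w => φ w = t).card =
        ((GF hK).filter fun w => φ w = φ 1).card := by
    intro t hti
    rw [Finset.mem_image] at hti
    obtain ⟨v, hv, rfl⟩ := hti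
    rw [mem_GF] at hv
    apply Finset.card_bij' (fun w _ => v⁻¹ * w) (fun u _ => v * u)
    · intro w hw
      rw [Finset.mem_filter] at hw ⊢
      obtain ⟨hw1, hw2⟩ := hw
      rw [mem_GF] at hw1
      refine ⟨(mem_GF hK).mpr (mul_mem (inv_mem hv) hw1), ?_⟩
      funext i
      have h3 : permFA n w i.1 = permFA n v i.1 := congrFun hw2 i
      show permFA n (v⁻¹ * w) i.1 = permFA n 1 i.1
      rw [permFA_mul, h3, permFA_inv_left, permFA_one]
    · intro u hu
      rw [Finset.mem_filter] at hu ⊢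
      obtain ⟨hu1, hu2⟩ := hu
      rw [mem_GF] at hu1
      refine ⟨(mem_GF hK).mpr (mul_mem hv hu1), ?_⟩
      funext i
      have h3 : permFA n u i.1 = permFA n 1 i.1 := congrFun hu2 i
      rw [permFA_one] at h3
      show permFA n (v * u) i.1 = permFA n v i.1
      rw [permFA_mul, h3]
    · intro w _
      rw [mul_inv_cancel_left]
    · intro u _
      rw [inv_mul_cancel_left]
  -- put it together
  have hsum : ∑ w ∈ GF hK, F (φ w) =
      ∑ t ∈ (GF hK).image φ, ((GF hK).filter fun w => φ w = t).card • F t :=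
    Finset.sum_comp F φ
  have hfinal : ∑ w ∈ GF hK,
      (∏ i : {I : FA n // I ∈ s}, Q (permFA n w i.1) ^ m i.1) =
      ((GF hK).filter fun w => φ w = φ 1).card •
        ∑ t ∈ (GF hK).image φ, F t := by
    calc ∑ w ∈ GF hK, (∏ i : {I : FA n // I ∈ s}, Q (permFA n w i.1) ^ m i.1)
        = ∑ w ∈ GF hK, F (φ w) := rfl
      _ = ∑ t ∈ (GF hK).image φ, ((GF hK).filter fun w => φ w = t).card • F t := hsum
      _ = ∑ t ∈ (GF hK).image φ, ((GF hK).filter fun w => φ w = φ 1).card • F t :=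
          Finset.sum_congr rfl fun t ht => by rw [hfib t ht]
      _ = ((GF hK).filter fun w => φ w = φ 1).card • ∑ t ∈ (GF hK).image φ, F t :=
          (Finset.smul_sum).symm
  rw [hfinal, ← hC, ← hP]
  apply Subalgebra.nsmul_mem
  apply Subalgebra.prod_mem
  intro i _
  apply Subalgebra.pow_mem
  exact Algebra.subset_adjoin ⟨i.1, rfl⟩

lemma rename_orbitSum {w : Equiv.Perm (Fin n)} (hw : w ∈ SK n K hK) (I : FA n) :
    rename (permFA n w) (orbitSum n K hK I) = orbitSum n K hK I := by
  rw [orbitSum, map_sum]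
  have hinj : ∀ x ∈ (Finset.univ.filter fun J : FA n => ∃ v ∈ SK n K hK, permFA n v I = J),
      ∀ y ∈ (Finset.univ.filter fun J : FA n => ∃ v ∈ SK n K hK, permFA n v I = J),
      permFA n w x = permFA n w y → x = y := by
    intro x _ y _ hxy
    have := congrArg (permFA n w⁻¹) hxy
    rwa [permFA_inv_left, permFA_inv_left] at this
  have himg : (Finset.univ.filter fun J : FA n =>
        ∃ v ∈ SK n K hK, permFA n v I = J).image (permFA n w) =
      Finset.univ.filter fun J : FA n => ∃ v ∈ SK n K hK, permFA n v I = J := by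
    ext J
    simp only [Finset.mem_image, Finset.mem_filter, Finset.mem_univ, true_and]
    constructor
    · rintro ⟨J', ⟨v, hv, rfl⟩, rfl⟩
      exact ⟨w * v, mul_mem hw hv, permFA_mul w v I⟩
    · rintro ⟨v, hv, rfl⟩
      exact ⟨permFA n w⁻¹ (permFA n v I),
        ⟨w⁻¹ * v, mul_mem (inv_mem hw) hv, permFA_mul _ _ _⟩, permFA_inv_right w _⟩
  calc ∑ J ∈ (Finset.univ.filter fun J : FA n => ∃ v ∈ SK n K hK, permFA n v I = J),
        rename (permFA n w) (X J)
      = ∑ J ∈ (Finset.univ.filter fun J : FA n => ∃ v ∈ SK n K hK, permFA n v I = J),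
          X (permFA n w J) := by
        apply Finset.sum_congr rfl
        intro J _
        rw [rename_X]
    _ = ∑ J ∈ ((Finset.univ.filter fun J : FA n =>
          ∃ v ∈ SK n K hK, permFA n v I = J).image (permFA n w)), X J :=
        (Finset.sum_image hinj).symm
    _ = ∑ J ∈ (Finset.univ.filter fun J : FA n => ∃ v ∈ SK n K hK, permFA n v I = J), X J := by
        rw [himg]

omit hK in
/-- The induced algebra endomorphism of the quotient. -/
def rho (w : Equiv.Perm (Fin n)) :
    (MvPolynomial (FA n) ℚ ⧸ (Iideal n ⊔ Jideal n)) →ₐ[ℚ]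
      (MvPolynomial (FA n) ℚ ⧸ (Iideal n ⊔ Jideal n)) :=
  Ideal.Quotient.liftₐ (Iideal n ⊔ Jideal n)
    ((Ideal.Quotient.mkₐ ℚ (Iideal n ⊔ Jideal n)).comp (rename (permFA n w)))
    (fun a ha => by
      simp only [AlgHom.comp_apply, Ideal.Quotient.mkₐ_eq_mk]
      rw [Ideal.Quotient.eq_zero_iff_mem]
      exact stability w a ha)

omit hK in
lemma rho_mk (w : Equiv.Perm (Fin n)) (p : MvPolynomial (FA n) ℚ) :
    rho w (Ideal.Quotient.mk (Iideal n ⊔ Jideal n) p) =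
      Ideal.Quotient.mk (Iideal n ⊔ Jideal n) (rename (permFA n w) p) := by
  rw [rho, Ideal.Quotient.liftₐ_apply]
  rfl

omit hK in
lemma mkq_smul (c : ℚ) (q : MvPolynomial (FA n) ℚ) :
    Ideal.Quotient.mk (Iideal n ⊔ Jideal n) (c • q) =
      c • Ideal.Quotient.mk (Iideal n ⊔ Jideal n) q := by
  rw [← Ideal.Quotient.mkₐ_eq_mk (R₁ := ℚ)]
  exact map_smul (Ideal.Quotient.mkₐ ℚ (Iideal n ⊔ Jideal n)) c q

lemma main_inclusion2 (x : MvPolynomial (FA n) ℚ ⧸ (Iideal n ⊔ Jideal n))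
    (hx : ∀ w ∈ SK n K hK, ∀ p : MvPolynomial (FA n) ℚ,
      Ideal.Quotient.mk (Iideal n ⊔ Jideal n) p = x →
      Ideal.Quotient.mk (Iideal n ⊔ Jideal n) (rename (permFA n w) p) = x) :
    x ∈ Algebra.adjoin ℚ (genset hK) := by
  obtain ⟨p, hp⟩ := Ideal.Quotient.mk_surjective x
  have hcard : 0 < (GF hK : Finset (Equiv.Perm (Fin n))).card :=
    Finset.card_pos.mpr ⟨1, (mem_GF hK).mpr (one_mem _)⟩
  have hsum : mkq (∑ w ∈ GF hK, rename (permFA n w) p) = ((GF hK).card : ℚ) • x := by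
    rw [map_sum]
    rw [Finset.sum_congr rfl (fun w hw => hx w ((mem_GF hK).mp hw) p hp)]
    rw [Finset.sum_const, Nat.cast_smul_eq_nsmul]
  have hdecomp : (∑ w ∈ GF hK, rename (permFA n w) p) =
      ∑ m ∈ p.support, (coeff m p) • (∑ w ∈ GF hK, rename (permFA n w) (monomial m 1)) := by
    have h1 : ∀ w : Equiv.Perm (Fin n), rename (permFA n w) p =
        ∑ m ∈ p.support, (coeff m p) • rename (permFA n w) (monomial m 1) := by
      intro w
      conv_lhs => rw [← MvPolynomial.support_sum_monomial_coeff p]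
      rw [map_sum]
      apply Finset.sum_congr rfl
      intro m _
      rw [← map_smul]
      congr 1
      rw [MvPolynomial.smul_monomial, smul_eq_mul, mul_one]
    rw [Finset.sum_congr rfl (fun w _ => h1 w), Finset.sum_comm]
    apply Finset.sum_congr rfl
    intro m _
    rw [Finset.smul_sum]
  have hx2 : ((GF hK).card : ℚ) • x ∈ Algebra.adjoin ℚ (genset hK) := by
    rw [← hsum, hdecomp, map_sum]
    apply Subalgebra.sum_mem
    intro m _
    rw [mkq_smul]
    exact Subalgebra.smul_mem _ (mk_Tm_mem hK m) _
  have hxeq : x = ((GF hK).card : ℚ)⁻¹ • (((GF hK).card : ℚ) • x) := by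
    rw [smul_smul, inv_mul_cancel₀ (by exact_mod_cast hcard.ne'), one_smul]
  rw [hxeq]
  exact Subalgebra.smul_mem _ hx2 _

lemma main_inclusion1 (x : MvPolynomial (FA n) ℚ ⧸ (Iideal n ⊔ Jideal n))
    (hx : x ∈ Algebra.adjoin ℚ (genset hK)) :
    ∀ w ∈ SK n K hK, ∀ p : MvPolynomial (FA n) ℚ,
      Ideal.Quotient.mk (Iideal n ⊔ Jideal n) p = x →
      Ideal.Quotient.mk (Iideal n ⊔ Jideal n) (rename (permFA n w) p) = x := by
  intro w hw p hp
  have hgen : Algebra.adjoin ℚ (genset hK) ≤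
      AlgHom.equalizer (rho (n := n) w) (AlgHom.id ℚ _) := by
    apply Algebra.adjoin_le
    rintro y ⟨I, rfl⟩
    show rho w (Ideal.Quotient.mk _ (orbitSum n K hK I)) =
      Ideal.Quotient.mk _ (orbitSum n K hK I)
    rw [rho_mk, rename_orbitSum hK hw I]
  have hfix : rho w x = x := hgen hx
  calc Ideal.Quotient.mk (Iideal n ⊔ Jideal n) (rename (permFA n w) p)
      = rho w (Ideal.Quotient.mk (Iideal n ⊔ Jideal n) p) := (rho_mk w p).symm
    _ = rho w x := by rw [hp]
    _ = x := hfix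

end Main

end P39

open PermutohedronA MvPolynomial in
/-- Proposition 3.9: the ideal `𝓘 + 𝓙` is stable under the `𝔖_n`-action
`τ_I ↦ τ_{w(I)}` (so `𝔖_K` acts on the quotient `A`), and the invariant
subalgebra `A^{𝔖_K}` is generated over `ℚ` by the images of the orbit sums
`[τ_I]`.  (Since the action descends, an element `x` of the quotient is
invariant iff for every lift `p` of `x` and every `w ∈ 𝔖_K`, the class of the
translate `w · p` is again `x`.) -/
theorem statement3 (n : ℕ) (hn : 2 ≤ n) (K : Finset ℕ) (hK : ∀ k ∈ K, k + 1 < n) :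
    (∀ w : Equiv.Perm (Fin n), ∀ p ∈ Iideal n ⊔ Jideal n,
      MvPolynomial.rename (permFA n w) p ∈ Iideal n ⊔ Jideal n) ∧
    (Algebra.adjoin ℚ
        {x : MvPolynomial (FA n) ℚ ⧸ (Iideal n ⊔ Jideal n) |
          ∃ I : FA n, x = Ideal.Quotient.mk _ (orbitSum n K hK I)} :
      Set (MvPolynomial (FA n) ℚ ⧸ (Iideal n ⊔ Jideal n))) =
    {x | ∀ w ∈ SK n K hK, ∀ p : MvPolynomial (FA n) ℚ,
      Ideal.Quotient.mk (Iideal n ⊔ Jideal n) p = x →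
      Ideal.Quotient.mk (Iideal n ⊔ Jideal n)
        (MvPolynomial.rename (permFA n w) p) = x} := by
  constructor
  · exact fun w p hp => P39.stability w p hp
  · apply Set.Subset.antisymm
    · intro x hx w hw p hp
      exact P39.main_inclusion1 hK x hx w hw p hp
    · intro x hx
      exact P39.main_inclusion2 hK x hx
end
end

section
/- Proposition 4.2 (position of facets relative to reflecting hyperplanes): Let k ∈ [n−1] and let I be a nonempty proper subset of [n]. Then: (1) F(I) ∩ H(k) ≠ ∅ if and only if I is s_k-invariant, and in that case F(I) meets both open half-spaces {x : x_k < x_{k+1}} and {x : x_k > x_{k+1}}; (2) F(I) ⊆ H(k)^< if and only if k ∈ I and k+1 ∉ I; (3) F(I) ∩ H(k)^≤ ≠ ∅ if and only if k ∈ I whenever k+1 ∈ I. -/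
/-!
Proposition 4.2 (position of facets relative to reflecting hyperplanes, type A).

Indices are 0-indexed: the paper's `k ∈ [n-1]` corresponds to `k : ℕ` with
`k + 1 < n`, the simple reflection `s_k` swaps coordinates `k` and `k+1`.
-/

noncomputable section

namespace PermutohedronA

/-- The reflecting hyperplane `H(k) = {x | x_k = x_{k+1}}`. -/
def hyperplane (n : ℕ) (k : ℕ) (hk : k + 1 < n) : Set (Fin n → ℝ) :=
  {x | x ⟨k, Nat.lt_of_succ_lt hk⟩ = x ⟨k + 1, hk⟩}

/-- The closed half-space `H(k)^≤ = {x | x_k ≤ x_{k+1}}`. -/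
def halfSpaceLe (n : ℕ) (k : ℕ) (hk : k + 1 < n) : Set (Fin n → ℝ) :=
  {x | x ⟨k, Nat.lt_of_succ_lt hk⟩ ≤ x ⟨k + 1, hk⟩}

/-- The open half-space `H(k)^< = {x | x_k < x_{k+1}}`. -/
def halfSpaceLt (n : ℕ) (k : ℕ) (hk : k + 1 < n) : Set (Fin n → ℝ) :=
  {x | x ⟨k, Nat.lt_of_succ_lt hk⟩ < x ⟨k + 1, hk⟩}

/-- `I` is `s_k`-invariant: the transposition `(k, k+1)` fixes `I` setwise. -/
def sInvariant (n : ℕ) (k : ℕ) (hk : k + 1 < n) (I : Finset (Fin n)) : Prop :=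
  I.image (Equiv.swap ⟨k, Nat.lt_of_succ_lt hk⟩ ⟨k + 1, hk⟩) = I

end PermutohedronA

section
open Finset

namespace PermHelp

variable {n : ℕ} {a : Fin n → ℝ}

lemma fin_le_of_strictMono {m : ℕ} (f : Fin m → Fin n) (hf : StrictMono f) (j : Fin m) :
    (j : ℕ) ≤ (f j : ℕ) := by
  obtain ⟨j, hj⟩ := j
  induction j with
  | zero => exact Nat.zero_le _
  | succ i ih =>
    have h1 : (⟨i, Nat.lt_of_succ_lt hj⟩ : Fin m) < ⟨i + 1, hj⟩ := by
      simp [Fin.lt_def]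
    have h2 := hf h1
    have h3 := ih (Nat.lt_of_succ_lt hj)
    simp only [Fin.lt_def, Fin.val_mk] at h2 h3 ⊢
    omega

lemma lowFilter_eq {m : ℕ} (hm : m ≤ n) :
    univ.filter (fun i : Fin n => (i : ℕ) < m) = Finset.image (Fin.castLE hm) univ := by
  ext i
  simp only [mem_filter, mem_univ, true_and, mem_image]
  constructor
  · intro h
    exact ⟨⟨i, h⟩, by ext; simp⟩
  · rintro ⟨j, -, rfl⟩
    exact j.isLt

lemma card_lowFilter {m : ℕ} (hm : m ≤ n) :
    (univ.filter (fun i : Fin n => (i : ℕ) < m)).card = m := by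
  rw [lowFilter_eq hm, Finset.card_image_of_injective _ (Fin.castLE_injective hm)]
  simp

lemma lowFilter_succ {m : ℕ} (hm : m < n) :
    univ.filter (fun i : Fin n => (i : ℕ) < m + 1)
      = insert ⟨m, hm⟩ (univ.filter fun i : Fin n => (i : ℕ) < m) := by
  ext i
  simp only [mem_filter, mem_univ, true_and, mem_insert, Fin.ext_iff]
  omega

lemma sum_lowFilter_le (ha : StrictMono a) (S : Finset (Fin n)) :
    ∑ i ∈ univ.filter (fun i : Fin n => (i : ℕ) < S.card), a i ≤ ∑ i ∈ S, a i := by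
  have hm : S.card ≤ n := by
    simpa using S.card_le_univ
  have hS : S = Finset.image (S.orderEmbOfFin rfl) univ := by
    ext x
    simp only [mem_image, mem_univ, true_and]
    constructor
    · intro hx
      obtain ⟨j, hj⟩ := Set.mem_range.1 (by rw [Finset.range_orderEmbOfFin]; exact hx :
        x ∈ Set.range (S.orderEmbOfFin rfl))
      exact ⟨j, hj⟩
    · rintro ⟨j, rfl⟩
      exact S.orderEmbOfFin_mem rfl j
  have e2 : ∑ i ∈ S, a i = ∑ j ∈ univ, a (S.orderEmbOfFin rfl j) := by
    conv_lhs => rw [hS]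
    exact Finset.sum_image (fun x _ y _ h => (S.orderEmbOfFin rfl).injective h)
  have e1 : ∑ i ∈ univ.filter (fun i : Fin n => (i : ℕ) < S.card), a i
      = ∑ j ∈ univ, a (Fin.castLE hm j) := by
    rw [lowFilter_eq hm]
    exact Finset.sum_image (fun x _ y _ h => Fin.castLE_injective hm h)
  rw [e1, e2]
  apply Finset.sum_le_sum
  intro j _
  apply ha.monotone
  rw [Fin.le_def]
  simpa using fin_le_of_strictMono _ (S.orderEmbOfFin rfl).strictMono j

end PermHelp
end

namespace PermutohedronA

open Finset PermHelp

variable {n : ℕ} {a : Fin n → ℝ}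

lemma sum_perm_lower (ha : StrictMono a) {x : Fin n → ℝ} (hx : x ∈ permutohedron n a)
    (J : Finset (Fin n)) :
    ∑ i ∈ univ.filter (fun i : Fin n => (i : ℕ) < J.card), a i ≤ ∑ i ∈ J, x i := by
  set c := ∑ i ∈ univ.filter (fun i : Fin n => (i : ℕ) < J.card), a i with hc
  have hlin : IsLinearMap ℝ (fun w : Fin n → ℝ => ∑ i ∈ J, w i) := by
    constructor
    · intro x y; simp [Finset.sum_add_distrib]
    · intro r x; simp [Finset.mul_sum, smul_eq_mul]
  have hconv : Convex ℝ {w : Fin n → ℝ | c ≤ ∑ i ∈ J, w i} := convex_halfSpace_ge hlin c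
  have hsub : {p | ∃ u : Equiv.Perm (Fin n), p = permPoint n a u}
      ⊆ {w : Fin n → ℝ | c ≤ ∑ i ∈ J, w i} := by
    rintro p ⟨u, rfl⟩
    show c ≤ ∑ i ∈ J, a (u i)
    have himg : ∑ i ∈ J.image u, a i = ∑ i ∈ J, a (u i) :=
      Finset.sum_image (fun x _ y _ h => u.injective h)
    have hcard : (J.image u).card = J.card := Finset.card_image_of_injective _ u.injective
    calc c = ∑ i ∈ univ.filter (fun i : Fin n => (i : ℕ) < (J.image u).card), a i := by
            rw [hcard]
      _ ≤ ∑ i ∈ J.image u, a i := sum_lowFilter_le ha _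
      _ = ∑ i ∈ J, a (u i) := himg
  exact convexHull_min hsub hconv hx

lemma vertex_exists (a : Fin n → ℝ) (I : Finset (Fin n)) :
    ∃ u : Equiv.Perm (Fin n), permPoint n a u ∈ facet n a I := by
  classical
  set J := univ.filter (fun i : Fin n => (i : ℕ) < I.card) with hJ
  have hmn : I.card ≤ n := by simpa using I.card_le_univ
  have hJcard : J.card = I.card := card_lowFilter hmn
  have e : {x : Fin n // x ∈ I} ≃ {x : Fin n // x ∈ J} :=
    Finset.equivOfCardEq hJcard.symm
  refine ⟨e.extendSubtype, ?_, ?_⟩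
  · exact subset_convexHull ℝ _ ⟨e.extendSubtype, rfl⟩
  · have himg : I.image e.extendSubtype = J := by
      apply Finset.eq_of_subset_of_card_le
      · intro x hx
        simp only [Finset.mem_image] at hx
        obtain ⟨y, hy, rfl⟩ := hx
        exact e.extendSubtype_mem y hy
      · rw [Finset.card_image_of_injective _ e.extendSubtype.injective, hJcard]
    have := Finset.sum_image (f := a) (g := ⇑e.extendSubtype) (s := I)
      (fun x _ y _ h => e.extendSubtype.injective h)
    rw [himg] at this
    exact this.symm

lemma facet_perm_comp {u : Equiv.Perm (Fin n)} {I : Finset (Fin n)}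
    (hu : permPoint n a u ∈ facet n a I) {τ : Equiv.Perm (Fin n)}
    (hτ : I.image τ = I) : permPoint n a (τ.trans u) ∈ facet n a I := by
  refine ⟨subset_convexHull ℝ _ ⟨τ.trans u, rfl⟩, ?_⟩
  have h1 : ∑ i ∈ I.image τ, a (u i) = ∑ i ∈ I, a (u (τ i)) :=
    Finset.sum_image (fun x _ y _ h => τ.injective h)
  rw [hτ] at h1
  have h2 := hu.2
  simp only [permPoint] at h2 ⊢
  simp only [Equiv.trans_apply]
  rw [← h1, h2]

lemma key_lt (ha : StrictMono a) {I : Finset (Fin n)} (hI2 : I ≠ Finset.univ)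
    {x : Fin n → ℝ} (hx : x ∈ facet n a I) {j1 j2 : Fin n} (h1 : j1 ∈ I) (h2 : j2 ∉ I) :
    x j1 < x j2 := by
  obtain ⟨hxP, hxs⟩ := hx
  have hmltn : I.card < n := by
    have := (Finset.card_lt_iff_ne_univ I).2 hI2
    simpa using this
  obtain ⟨m', hm'⟩ : ∃ m', I.card = m' + 1 :=
    Nat.exists_eq_succ_of_ne_zero (Finset.card_ne_zero_of_mem h1)
  have hm'n : m' < n := by omega
  have hm1n : m' + 1 < n := by omega
  -- upper bound for x j1
  have hub : x j1 ≤ a ⟨m', hm'n⟩ := by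
    have hlow := sum_perm_lower ha hxP (I.erase j1)
    rw [Finset.card_erase_of_mem h1, hm'] at hlow
    simp only [Nat.add_sub_cancel] at hlow
    have hsplit : ∑ i ∈ I.erase j1, x i = ∑ i ∈ I, x i - x j1 := by
      rw [← Finset.add_sum_erase _ _ h1]; ring
    have hfil : ∑ i ∈ univ.filter (fun i : Fin n => (i : ℕ) < m' + 1), a i
        = a ⟨m', hm'n⟩ + ∑ i ∈ univ.filter (fun i : Fin n => (i : ℕ) < m'), a i := by
      rw [lowFilter_succ hm'n, Finset.sum_insert (by simp)]
    rw [hm', hfil] at hxs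
    rw [hsplit, hxs] at hlow
    linarith
  -- lower bound for x j2
  have hlb : a ⟨m' + 1, hm1n⟩ ≤ x j2 := by
    have hlow := sum_perm_lower ha hxP (insert j2 I)
    rw [Finset.card_insert_of_notMem h2, hm'] at hlow
    have hsplit : ∑ i ∈ insert j2 I, x i = x j2 + ∑ i ∈ I, x i :=
      Finset.sum_insert h2
    have hfil : ∑ i ∈ univ.filter (fun i : Fin n => (i : ℕ) < m' + 1 + 1), a i
        = a ⟨m' + 1, hm1n⟩ + ∑ i ∈ univ.filter (fun i : Fin n => (i : ℕ) < m' + 1), a i := by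
      rw [lowFilter_succ hm1n, Finset.sum_insert (by simp)]
    rw [hm'] at hxs
    rw [hfil, hsplit, hxs] at hlow
    linarith
  calc x j1 ≤ a ⟨m', hm'n⟩ := hub
    _ < a ⟨m' + 1, hm1n⟩ := ha (by simp [Fin.lt_def])
    _ ≤ x j2 := hlb

lemma sInvariant_iff {k : ℕ} (hk : k + 1 < n) (I : Finset (Fin n)) :
    sInvariant n k hk I ↔
      ((⟨k, Nat.lt_of_succ_lt hk⟩ : Fin n) ∈ I ↔ (⟨k + 1, hk⟩ : Fin n) ∈ I) := by
  set κ : Fin n := ⟨k, Nat.lt_of_succ_lt hk⟩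
  set κ' : Fin n := ⟨k + 1, hk⟩
  unfold sInvariant
  constructor
  · intro h
    constructor
    · intro hκ
      have : Equiv.swap κ κ' κ ∈ I.image (Equiv.swap κ κ') := Finset.mem_image_of_mem _ hκ
      rw [Equiv.swap_apply_left, h] at this; exact this
    · intro hκ'
      have : Equiv.swap κ κ' κ' ∈ I.image (Equiv.swap κ κ') := Finset.mem_image_of_mem _ hκ'
      rw [Equiv.swap_apply_right, h] at this; exact this
  · intro h
    have hswap : ∀ y, y ∈ I → Equiv.swap κ κ' y ∈ I := by
      intro y hy
      by_cases hyk : y = κ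
      · subst hyk; rw [Equiv.swap_apply_left]; exact h.1 hy
      by_cases hyk' : y = κ'
      · subst hyk'; rw [Equiv.swap_apply_right]; exact h.2 hy
      · rw [Equiv.swap_apply_of_ne_of_ne hyk hyk']; exact hy
    ext x
    rw [Finset.mem_image]
    constructor
    · rintro ⟨y, hy, rfl⟩; exact hswap y hy
    · intro hx
      exact ⟨Equiv.swap κ κ' x, hswap x hx, Equiv.swap_apply_self _ _ _⟩

end PermutohedronA

namespace PermutohedronA

open Finset PermHelp

variable {n : ℕ} {a : Fin n → ℝ}

lemma invariant_sides (ha : StrictMono a) {k : ℕ} {hk : k + 1 < n} {I : Finset (Fin n)}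
    (hinv : sInvariant n k hk I) :
    (facet n a I ∩ hyperplane n k hk).Nonempty ∧
    (facet n a I ∩ halfSpaceLt n k hk).Nonempty ∧
    (facet n a I ∩ {x | x ⟨k + 1, hk⟩ < x ⟨k, Nat.lt_of_succ_lt hk⟩}).Nonempty := by
  classical
  set κ : Fin n := ⟨k, Nat.lt_of_succ_lt hk⟩ with hκd
  set κ' : Fin n := ⟨k + 1, hk⟩ with hκ'd
  have hκκ' : κ ≠ κ' := by simp [hκd, hκ'd, Fin.ext_iff]
  obtain ⟨u, hu⟩ := vertex_exists a I
  have hinv' : I.image (Equiv.swap κ κ') = I := hinv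
  have hw := facet_perm_comp hu hinv'
  set v := permPoint n a u with hv
  set w := permPoint n a ((Equiv.swap κ κ').trans u) with hwd
  have hwκ : w κ = v κ' := by
    simp [hwd, hv, permPoint, Equiv.swap_apply_left]
  have hwκ' : w κ' = v κ := by
    simp [hwd, hv, permPoint, Equiv.swap_apply_right]
  have hne : v κ ≠ v κ' := fun h => hκκ' (u.injective (ha.injective h))
  have hzP : ((1/2 : ℝ) • v + (1/2 : ℝ) • w) ∈ permutohedron n a :=
    (convex_convexHull ℝ _) hu.1 hw.1 (by norm_num) (by norm_num) (by norm_num)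
  have hzs : ∑ i ∈ I, ((1/2 : ℝ) • v + (1/2 : ℝ) • w) i
      = ∑ i ∈ univ.filter (fun i : Fin n => (i : ℕ) < I.card), a i := by
    have h1 := hu.2
    have h2 := hw.2
    simp only [Pi.add_apply, Pi.smul_apply, smul_eq_mul]
    rw [Finset.sum_add_distrib, ← Finset.mul_sum, ← Finset.mul_sum, h1, h2]
    ring
  refine ⟨⟨_, ⟨hzP, hzs⟩, ?_⟩, ?_⟩
  · show ((1/2 : ℝ) • v + (1/2 : ℝ) • w) κ = ((1/2 : ℝ) • v + (1/2 : ℝ) • w) κ'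
    simp only [Pi.add_apply, Pi.smul_apply, smul_eq_mul, hwκ, hwκ']
    ring
  · rcases hne.lt_or_gt with hlt | hlt
    · exact ⟨⟨v, hu, hlt⟩, ⟨w, hw, by show w κ' < w κ; rw [hwκ, hwκ']; exact hlt⟩⟩
    · exact ⟨⟨w, hw, by show w κ < w κ'; rw [hwκ, hwκ']; exact hlt⟩, ⟨v, hu, hlt⟩⟩

end PermutohedronA

open PermutohedronA in
theorem statement4 (n : ℕ) (hn : 2 ≤ n) (a : Fin n → ℝ) (ha : StrictMono a)
    (hsum : ∑ i, a i = 0) (k : ℕ) (hk : k + 1 < n) (I : Finset (Fin n))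
    (hI1 : I.Nonempty) (hI2 : I ≠ Finset.univ) :
    (((facet n a I ∩ hyperplane n k hk).Nonempty ↔ sInvariant n k hk I) ∧
      (sInvariant n k hk I →
        (facet n a I ∩ halfSpaceLt n k hk).Nonempty ∧
        (facet n a I ∩ {x | x ⟨k + 1, hk⟩ < x ⟨k, Nat.lt_of_succ_lt hk⟩}).Nonempty)) ∧
    (facet n a I ⊆ halfSpaceLt n k hk ↔
      ((⟨k, Nat.lt_of_succ_lt hk⟩ : Fin n) ∈ I ∧ (⟨k + 1, hk⟩ : Fin n) ∉ I)) ∧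
    ((facet n a I ∩ halfSpaceLe n k hk).Nonempty ↔
      ((⟨k + 1, hk⟩ : Fin n) ∈ I → (⟨k, Nat.lt_of_succ_lt hk⟩ : Fin n) ∈ I)) := by
  classical
  set κ : Fin n := ⟨k, Nat.lt_of_succ_lt hk⟩ with hκd
  set κ' : Fin n := ⟨k + 1, hk⟩ with hκ'd
  obtain ⟨u, hu⟩ := vertex_exists a I
  by_cases h1 : κ ∈ I <;> by_cases h2 : κ' ∈ I
  · have hinv : sInvariant n k hk I := (sInvariant_iff hk I).2 (iff_of_true h1 h2)
    obtain ⟨hA, hB, hC⟩ := invariant_sides ha hinv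
    obtain ⟨p, hpf, hps⟩ := id hC
    obtain ⟨q, hqf, hqs⟩ := id hB
    have hqle : q ∈ halfSpaceLe n k hk := by
      simp only [halfSpaceLe, Set.mem_setOf_eq]; exact le_of_lt hqs
    have hplt : p ∉ halfSpaceLt n k hk := by
      simp only [halfSpaceLt, Set.mem_setOf_eq]
      exact lt_asymm hps
    exact ⟨⟨iff_of_true hA hinv, fun _ => ⟨hB, hC⟩⟩,
      iff_of_false (fun hsub => absurd (hsub hpf) hplt) (fun h => h.2 h2),
      iff_of_true ⟨q, hqf, hqle⟩ (fun _ => h1)⟩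
  · have hninv : ¬ sInvariant n k hk I := fun h => h2 (((sInvariant_iff hk I).1 h).1 h1)
    have hkey : ∀ x ∈ facet n a I, x κ < x κ' := fun x hx => key_lt ha hI2 hx h1 h2
    exact ⟨⟨iff_of_false (fun ⟨x, hxf, hxh⟩ => absurd hxh (ne_of_lt (hkey x hxf))) hninv,
        fun h => absurd h hninv⟩,
      iff_of_true (fun x hx => hkey x hx) ⟨h1, h2⟩,
      iff_of_true ⟨_, hu, le_of_lt (hkey _ hu)⟩ (fun h => absurd h h2)⟩
  · have hninv : ¬ sInvariant n k hk I := fun h => h1 (((sInvariant_iff hk I).1 h).2 h2)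
    have hkey : ∀ x ∈ facet n a I, x κ' < x κ := fun x hx => key_lt ha hI2 hx h2 h1
    exact ⟨⟨iff_of_false (fun ⟨x, hxf, hxh⟩ => absurd hxh.symm (ne_of_lt (hkey x hxf))) hninv,
        fun h => absurd h hninv⟩,
      iff_of_false (fun hsub => absurd (hsub hu) (lt_asymm (hkey _ hu))) (fun h => h1 h.1),
      iff_of_false (fun ⟨x, hxf, hxle⟩ => absurd hxle (not_le.2 (hkey x hxf))) (fun h => h1 (h h2))⟩
  · have hinv : sInvariant n k hk I := (sInvariant_iff hk I).2 (iff_of_false h1 h2)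
    obtain ⟨hA, hB, hC⟩ := invariant_sides ha hinv
    obtain ⟨p, hpf, hps⟩ := id hC
    obtain ⟨q, hqf, hqs⟩ := id hB
    have hqle : q ∈ halfSpaceLe n k hk := by
      simp only [halfSpaceLe, Set.mem_setOf_eq]; exact le_of_lt hqs
    have hplt : p ∉ halfSpaceLt n k hk := by
      simp only [halfSpaceLt, Set.mem_setOf_eq]
      exact lt_asymm hps
    exact ⟨⟨iff_of_true hA hinv, fun _ => ⟨hB, hC⟩⟩,
      iff_of_false (fun hsub => absurd (hsub hpf) hplt) (fun h => h1 h.1),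
      iff_of_true ⟨q, hqf, hqle⟩ (fun h => absurd h h2)⟩
end
end

section
/- Lemma 4.5 (barycenters of faces): Let I_1 ⊊ I_2 ⊊ ⋯ ⊊ I_d be a strictly increasing chain of nonempty proper subsets of [n]. The set V = {u ∈ 𝔖_n : u(I_j) = {1,…,|I_j|} for all j = 1,…,d} is nonempty; let C(I_•) = (1/|V|) Σ_{u∈V} (a_{u(1)},…,a_{u(n)}) ∈ ℝ^n (the barycenter of the face F(I_•) = F(I_1) ∩ ⋯ ∩ F(I_d) of P_{A_{n−1}}). Then: (1) if every I_j is s_k-invariant for some k ∈ [n−1], then C(I_•) ∈ H(k); (2) if K ⊆ [n−1] and every I_j belongs to 𝔉_{A_{n−1}}(K), then C(I_•) ∈ P_{A_{n−1}}(K). -/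
noncomputable section

namespace PermutohedronA

/-- The lower-subset condition defining `𝔉_{A_{n-1}}(K)` (besides nonemptiness and
properness): whenever `k` and `k+1` lie in the same `𝔖_K`-orbit and `k+1 ∈ I`,
also `k ∈ I`. -/
def lowerK (n : ℕ) (K : Finset ℕ) (hK : ∀ k ∈ K, k + 1 < n)
    (I : Finset (Fin n)) : Prop :=
  ∀ (k : ℕ) (hk : k + 1 < n),
    (∃ w ∈ SK n K hK, w ⟨k, Nat.lt_of_succ_lt hk⟩ = (⟨k + 1, hk⟩ : Fin n)) →
    (⟨k + 1, hk⟩ : Fin n) ∈ I → (⟨k, Nat.lt_of_succ_lt hk⟩ : Fin n) ∈ I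

/-- The partitioned permutohedron `P_{A_{n-1}}(K) = P ∩ ⋂_{k ∈ K} H(k)^≤`. -/
def permutohedronK (n : ℕ) (a : Fin n → ℝ) (K : Finset ℕ)
    (hK : ∀ k ∈ K, k + 1 < n) : Set (Fin n → ℝ) :=
  permutohedron n a ∩
    {x | ∀ k, ∀ hk : k ∈ K,
      x ⟨k, Nat.lt_of_succ_lt (hK k hk)⟩ ≤ x ⟨k + 1, hK k hk⟩}

end PermutohedronA

namespace PermutohedronA

/-- The set `V` of permutations sending each `I j` to an initial segment. -/
def baryV (n : ℕ) (d : ℕ) (I : Fin d → Finset (Fin n)) : Finset (Equiv.Perm (Fin n)) :=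
  Finset.univ.filter
    (fun u => ∀ j, (I j).image u =
      Finset.univ.filter (fun i : Fin n => (i : ℕ) < (I j).card))

/-- The barycenter `C(I_•)` of the face `F(I_•)`. -/
def barycenter (n : ℕ) (a : Fin n → ℝ) (d : ℕ) (I : Fin d → Finset (Fin n)) :
    Fin n → ℝ :=
  ((baryV n d I).card : ℝ)⁻¹ • ∑ u ∈ baryV n d I, permPoint n a u

end PermutohedronA

namespace PermutohedronAAux

/-- A downward-closed finset of `Fin n` is an initial segment. -/
lemma lower_eq {n : ℕ} (S : Finset (Fin n))
    (h : ∀ i₁ i₂ : Fin n, i₁ ≤ i₂ → i₂ ∈ S → i₁ ∈ S) :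
    S = Finset.univ.filter (fun i : Fin n => (i : ℕ) < S.card) := by
  ext x
  simp only [Finset.mem_filter, Finset.mem_univ, true_and]
  constructor
  · intro hx
    have hsub : Finset.Iic x ⊆ S := fun y hy => h y x (Finset.mem_Iic.mp hy) hx
    have hc := Finset.card_le_card hsub
    rw [Fin.card_Iic] at hc
    omega
  · intro hx
    by_contra hxS
    have hsub : S ⊆ Finset.Iio x := by
      intro y hy
      rw [Finset.mem_Iio]
      by_contra hyx
      exact hxS (h x y (le_of_not_gt hyx) hy)
    have hc := Finset.card_le_card hsub
    rw [Fin.card_Iio] at hc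
    omega

lemma arith {n : ℕ} (mx xv jv : ℕ) (hx : xv < n) :
    mx ≤ jv ↔ mx * n + xv < (jv + 1) * n := by
  constructor
  · intro h
    calc mx * n + xv < mx * n + n := by omega
      _ = (mx + 1) * n := by ring
      _ ≤ (jv + 1) * n := Nat.mul_le_mul_right n (by omega)
  · intro h
    by_contra hc
    have h1 : (jv + 1) * n ≤ mx * n := Nat.mul_le_mul_right n (by omega)
    omega

end PermutohedronAAux

open PermutohedronA in
theorem statement5 (n : ℕ) (hn : 2 ≤ n) (a : Fin n → ℝ) (ha : StrictMono a)
    (hsum : ∑ i, a i = 0) (K : Finset ℕ) (hK : ∀ k ∈ K, k + 1 < n)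
    (d : ℕ) (I : Fin d → Finset (Fin n))
    (hchain : ∀ i j : Fin d, i < j → I i ⊂ I j)
    (hne : ∀ j, (I j).Nonempty) (hpr : ∀ j, I j ≠ Finset.univ) :
    (baryV n d I).Nonempty ∧
    (∀ (k : ℕ) (hk : k + 1 < n),
      (∀ j, sInvariant n k hk (I j)) → barycenter n a d I ∈ hyperplane n k hk) ∧
    ((∀ j, lowerK n K hK (I j)) → barycenter n a d I ∈ permutohedronK n a K hK) := by
  classical
  have hmono : ∀ i j : Fin d, i ≤ j → I i ⊆ I j := by
    intro i j hij
    rcases eq_or_lt_of_le hij with rfl | h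
    · exact subset_rfl
    · exact (hchain i j h).subset
  -- membership characterization via the "first level" function
  have hmem : ∀ (x : Fin n) (j : Fin d),
      x ∈ I j ↔ (Finset.univ.filter fun j' : Fin d => x ∉ I j').card ≤ (j : ℕ) := by
    intro x j
    have hlowB : ∀ i₁ i₂ : Fin d, i₁ ≤ i₂ →
        i₂ ∈ Finset.univ.filter (fun j' : Fin d => x ∉ I j') →
        i₁ ∈ Finset.univ.filter (fun j' : Fin d => x ∉ I j') := by
      intro i₁ i₂ h12 h2
      simp only [Finset.mem_filter, Finset.mem_univ, true_and] at h2 ⊢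
      exact fun hx => h2 (hmono i₁ i₂ h12 hx)
    have heq := PermutohedronAAux.lower_eq _ hlowB
    have hthis := Finset.ext_iff.mp heq j
    simp only [Finset.mem_filter, Finset.mem_univ, true_and] at hthis
    constructor
    · intro hx
      by_contra hlt
      exact (hthis.mpr (by omega)) hx
    · intro hle
      by_contra hx
      have := hthis.mp hx
      omega
  -- nonemptiness of V via sorting
  have hVne : (baryV n d I).Nonempty := by
    set κ : Fin n → ℕ :=
      fun x => (Finset.univ.filter fun j' : Fin d => x ∉ I j').card * n + (x : ℕ) with hκ
    have hkey : ∀ (x : Fin n) (j : Fin d),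
        x ∈ I j ↔ κ x < ((j : ℕ) + 1) * n := by
      intro x j
      rw [hmem x j]
      simp only [hκ]
      exact PermutohedronAAux.arith _ _ _ x.isLt
    refine ⟨(Tuple.sort κ)⁻¹, ?_⟩
    simp only [baryV, Finset.mem_filter, Finset.mem_univ, true_and]
    intro j
    have himg : ∀ z : Fin n,
        z ∈ (I j).image ⇑(Tuple.sort κ)⁻¹ ↔ (Tuple.sort κ) z ∈ I j := by
      intro z
      simp only [Finset.mem_image]
      constructor
      · rintro ⟨y, hy, rfl⟩
        simpa using hy
      · intro h
        exact ⟨Tuple.sort κ z, h, by simp⟩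
    have hlowS : ∀ i₁ i₂ : Fin n, i₁ ≤ i₂ →
        i₂ ∈ (I j).image ⇑(Tuple.sort κ)⁻¹ → i₁ ∈ (I j).image ⇑(Tuple.sort κ)⁻¹ := by
      intro i₁ i₂ h12 h2
      rw [himg] at h2 ⊢
      have hmon : κ (Tuple.sort κ i₁) ≤ κ (Tuple.sort κ i₂) := Tuple.monotone_sort κ h12
      rw [hkey] at h2 ⊢
      omega
    have heq := PermutohedronAAux.lower_eq _ hlowS
    rw [Finset.card_image_of_injective _ (Tuple.sort κ)⁻¹.injective] at heq
    exact heq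
  -- barycenter coordinates
  have hbary : ∀ i : Fin n,
      barycenter n a d I i
        = (((baryV n d I).card : ℝ))⁻¹ * ∑ u ∈ baryV n d I, a (u i) := by
    intro i
    simp [barycenter, permPoint, Finset.sum_apply]
  refine ⟨hVne, ?_, ?_⟩
  · -- part (1): sk-invariance gives hyperplane membership
    intro k hk hinv
    set σk : Equiv.Perm (Fin n) :=
      Equiv.swap ⟨k, Nat.lt_of_succ_lt hk⟩ ⟨k + 1, hk⟩ with hσk
    have hss : ∀ u : Equiv.Perm (Fin n), u * σk * σk = u := by
      intro u
      rw [mul_assoc, hσk, Equiv.swap_mul_self, mul_one]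
    have hswapV : ∀ u : Equiv.Perm (Fin n), u ∈ baryV n d I → u * σk ∈ baryV n d I := by
      intro u hu
      simp only [baryV, Finset.mem_filter, Finset.mem_univ, true_and] at hu ⊢
      intro j
      have h1 : (I j).image ⇑(u * σk) = ((I j).image ⇑σk).image ⇑u := by
        rw [Finset.image_image]
        rfl
      have h2 : (I j).image ⇑σk = I j := hinv j
      rw [h1, h2]
      exact hu j
    have hsum0 : ∑ u ∈ baryV n d I,
        (a (u ⟨k + 1, hk⟩) - a (u ⟨k, Nat.lt_of_succ_lt hk⟩)) = 0 := by
      apply Finset.sum_involution (fun u _ => u * σk)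
      · intro u hu
        simp only [Equiv.Perm.mul_apply, hσk, Equiv.swap_apply_left, Equiv.swap_apply_right]
        ring
      · intro u hu hne' heq
        have h1 := congrArg (fun v : Equiv.Perm (Fin n) => v ⟨k, Nat.lt_of_succ_lt hk⟩) heq
        simp only [Equiv.Perm.mul_apply, hσk, Equiv.swap_apply_left] at h1
        have h2 := u.injective h1
        simp only [Fin.mk.injEq] at h2
        omega
      · intro u hu
        exact hswapV u hu
      · intro u hu
        exact hss u
    show barycenter n a d I ⟨k, Nat.lt_of_succ_lt hk⟩ = barycenter n a d I ⟨k + 1, hk⟩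
    rw [hbary, hbary]
    congr 1
    have := Finset.sum_sub_distrib
      (f := fun u : Equiv.Perm (Fin n) => a (u ⟨k + 1, hk⟩))
      (g := fun u : Equiv.Perm (Fin n) => a (u ⟨k, Nat.lt_of_succ_lt hk⟩))
      (s := baryV n d I)
    rw [this] at hsum0
    linarith
  · -- part (2): lowerK gives membership in the partitioned permutohedron
    intro hlow
    refine ⟨?_, ?_⟩
    · -- barycenter lies in the permutohedron
      have h1 : barycenter n a d I
          = (baryV n d I).centerMass (fun _ => (1 : ℝ)) (fun u => permPoint n a u) := by
        rw [Finset.centerMass]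
        simp only [one_smul, Finset.sum_const, nsmul_eq_mul, mul_one, barycenter]
      rw [h1]
      exact Finset.centerMass_mem_convexHull _ (fun _ _ => zero_le_one)
        (by rw [Finset.sum_const, nsmul_eq_mul, mul_one]; exact_mod_cast hVne.card_pos)
        (fun u _ => ⟨u, rfl⟩)
    · intro k hkK
      have hk : k + 1 < n := hK k hkK
      set σk : Equiv.Perm (Fin n) :=
        Equiv.swap ⟨k, Nat.lt_of_succ_lt hk⟩ ⟨k + 1, hk⟩ with hσk
      have hss : ∀ u : Equiv.Perm (Fin n), u * σk * σk = u := by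
        intro u
        rw [mul_assoc, hσk, Equiv.swap_mul_self, mul_one]
      have hσSK : σk ∈ SK n K hK := Subgroup.subset_closure ⟨k, hkK, rfl⟩
      have hk1k : ∀ j, (⟨k + 1, hk⟩ : Fin n) ∈ I j →
          (⟨k, Nat.lt_of_succ_lt hk⟩ : Fin n) ∈ I j :=
        fun j => hlow j k hk ⟨σk, hσSK, Equiv.swap_apply_left _ _⟩
      have key : ∑ u ∈ baryV n d I, a (u ⟨k, Nat.lt_of_succ_lt hk⟩)
          ≤ ∑ u ∈ baryV n d I, a (u ⟨k + 1, hk⟩) := by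
        rw [← sub_nonneg, ← Finset.sum_sub_distrib]
        rw [← Finset.sum_filter_add_sum_filter_not (baryV n d I)
          (fun u => u * σk ∈ baryV n d I)]
        have hA : ∑ u ∈ (baryV n d I).filter (fun u => u * σk ∈ baryV n d I),
            (a (u ⟨k + 1, hk⟩) - a (u ⟨k, Nat.lt_of_succ_lt hk⟩)) = 0 := by
          apply Finset.sum_involution (fun u _ => u * σk)
          · intro u hu
            simp only [Equiv.Perm.mul_apply, hσk, Equiv.swap_apply_left,
              Equiv.swap_apply_right]
            ring
          · intro u hu hne' heq
            have h1 := congrArg (fun v : Equiv.Perm (Fin n) => v ⟨k, Nat.lt_of_succ_lt hk⟩) heq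
            simp only [Equiv.Perm.mul_apply, hσk, Equiv.swap_apply_left] at h1
            have h2 := u.injective h1
            simp only [Fin.mk.injEq] at h2
            omega
          · intro u hu
            simp only [Finset.mem_filter] at hu ⊢
            exact ⟨hu.2, by rw [hss]; exact hu.1⟩
          · intro u hu
            exact hss u
        have hB : (0 : ℝ) ≤ ∑ u ∈ (baryV n d I).filter (fun u => ¬ u * σk ∈ baryV n d I),
            (a (u ⟨k + 1, hk⟩) - a (u ⟨k, Nat.lt_of_succ_lt hk⟩)) := by
          apply Finset.sum_nonneg
          intro u hu
          simp only [Finset.mem_filter] at hu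
          obtain ⟨huV, hus⟩ := hu
          have himgu : ∀ j, (I j).image ⇑u
              = Finset.univ.filter (fun i : Fin n => (i : ℕ) < (I j).card) := by
            simpa only [baryV, Finset.mem_filter, Finset.mem_univ, true_and] using huV
          have hexj : ∃ j, (I j).image ⇑σk ≠ I j := by
            by_contra hall
            push_neg at hall
            apply hus
            simp only [baryV, Finset.mem_filter, Finset.mem_univ, true_and]
            intro j
            have h1 : (I j).image ⇑(u * σk) = ((I j).image ⇑σk).image ⇑u := by
              rw [Finset.image_image]
              rfl
            rw [h1, hall j]
            exact himgu j
          obtain ⟨j, hj⟩ := hexj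
          have hfix : ((⟨k, Nat.lt_of_succ_lt hk⟩ : Fin n) ∈ I j ↔
              (⟨k + 1, hk⟩ : Fin n) ∈ I j) → (I j).image ⇑σk = I j := by
            intro hiff
            ext z
            have hz : z ∈ (I j).image ⇑σk ↔ σk z ∈ I j := by
              simp only [Finset.mem_image]
              constructor
              · rintro ⟨y, hy, rfl⟩
                rwa [show σk (σk y) = y from Equiv.swap_apply_self _ _ _]
              · intro hzz
                exact ⟨σk z, hzz, Equiv.swap_apply_self _ _ _⟩
            rw [hz]
            by_cases h1 : z = ⟨k, Nat.lt_of_succ_lt hk⟩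
            · subst h1
              rw [hσk, Equiv.swap_apply_left]
              exact hiff.symm
            · by_cases h2 : z = ⟨k + 1, hk⟩
              · subst h2
                rw [hσk, Equiv.swap_apply_right]
                exact hiff
              · rw [hσk, Equiv.swap_apply_of_ne_of_ne h1 h2]
          have honeside : (⟨k, Nat.lt_of_succ_lt hk⟩ : Fin n) ∈ I j ∧
              (⟨k + 1, hk⟩ : Fin n) ∉ I j := by
            by_cases hk1 : (⟨k + 1, hk⟩ : Fin n) ∈ I j
            · exact absurd (hfix ⟨fun _ => hk1, fun _ => hk1k j hk1⟩) hj
            · by_cases hk0 : (⟨k, Nat.lt_of_succ_lt hk⟩ : Fin n) ∈ I j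
              · exact ⟨hk0, hk1⟩
              · exact absurd
                  (hfix ⟨fun h => absurd h hk0, fun h => absurd h hk1⟩) hj
          obtain ⟨hkin, hk1out⟩ := honeside
          have h1 : ((u ⟨k, Nat.lt_of_succ_lt hk⟩ : Fin n) : ℕ) < (I j).card := by
            have hmem1 : u ⟨k, Nat.lt_of_succ_lt hk⟩ ∈ (I j).image ⇑u :=
              Finset.mem_image_of_mem _ hkin
            rw [himgu j] at hmem1
            simpa using hmem1
          have h2 : ¬ ((u ⟨k + 1, hk⟩ : Fin n) : ℕ) < (I j).card := by
            intro hcon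
            have hmem2 : u ⟨k + 1, hk⟩ ∈ (I j).image ⇑u := by
              rw [himgu j]
              simp [hcon]
            obtain ⟨y, hy, hyy⟩ := Finset.mem_image.mp hmem2
            exact hk1out (u.injective hyy ▸ hy)
          have hlt : u ⟨k, Nat.lt_of_succ_lt hk⟩ < u ⟨k + 1, hk⟩ := by
            rw [Fin.lt_def]
            omega
          have := ha hlt
          linarith
        rw [hA, zero_add]
        exact hB
      show barycenter n a d I ⟨k, Nat.lt_of_succ_lt (hK k hkK)⟩
          ≤ barycenter n a d I ⟨k + 1, hK k hkK⟩
      rw [hbary, hbary]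
      apply mul_le_mul_of_nonneg_left key
      exact inv_nonneg.mpr (Nat.cast_nonneg _)
end
end

section
/- Characterization of nonvanishing facets of the partitioned permutohedron (content of Corollary 4.4(2)): For K ⊆ [n−1] and any nonempty proper subset I ⊆ [n], the intersection F(I) ∩ P_{A_{n−1}}(K) is nonempty if and only if I ∈ 𝔉_{A_{n−1}}(K). -/
noncomputable section

namespace PermProofAux

open PermutohedronA Finset

lemma card_filter_val_lt (n m : ℕ) (h : m ≤ n) :
    (Finset.univ.filter (fun i : Fin n => (i : ℕ) < m)).card = m := by
  have : (Finset.univ.filter (fun i : Fin n => (i : ℕ) < m)).card = (Finset.range m).card := by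
    refine Finset.card_bij' (fun i _ => (i : ℕ))
      (fun j hj => (⟨j, lt_of_lt_of_le (Finset.mem_range.mp hj) h⟩ : Fin n)) ?_ ?_ ?_ ?_
    · intro i hi; simp at hi ⊢; omega
    · intro j hj; simp at hj ⊢; omega
    · intro i hi; simp
    · intro j hj; simp
  simpa using this

lemma sum_filter_lt_succ {n : ℕ} (a : Fin n → ℝ) (m : ℕ) (hm : m < n) :
    ∑ i ∈ Finset.univ.filter (fun i : Fin n => (i : ℕ) < m + 1), a i
      = (∑ i ∈ Finset.univ.filter (fun i : Fin n => (i : ℕ) < m), a i) + a ⟨m, hm⟩ := by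
  have hins : Finset.univ.filter (fun i : Fin n => (i : ℕ) < m + 1)
      = insert (⟨m, hm⟩ : Fin n) (Finset.univ.filter (fun i : Fin n => (i : ℕ) < m)) := by
    ext i
    simp only [Finset.mem_filter, Finset.mem_insert, Finset.mem_univ, true_and, Fin.ext_iff]
    omega
  rw [hins, Finset.sum_insert (by simp)]
  ring

lemma sum_min {n : ℕ} (a : Fin n → ℝ) (ha : Monotone a) (T : Finset (Fin n)) :
    ∑ i ∈ Finset.univ.filter (fun i : Fin n => (i : ℕ) < T.card), a i ≤ ∑ i ∈ T, a i := by
  classical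
  set m := T.card with hm
  set B := Finset.univ.filter (fun i : Fin n => (i : ℕ) < m) with hB
  have hsplitT : ∑ i ∈ T ∩ B, a i + ∑ i ∈ T \ B, a i = ∑ i ∈ T, a i :=
    Finset.sum_inter_add_sum_sdiff T B a
  have hsplitB : ∑ i ∈ B ∩ T, a i + ∑ i ∈ B \ T, a i = ∑ i ∈ B, a i :=
    Finset.sum_inter_add_sum_sdiff B T a
  have hBcard : B.card = m := card_filter_val_lt n m (by simpa [hm] using T.card_le_univ)
  have hcard : (T \ B).card = (B \ T).card := by
    have h1 := Finset.card_sdiff_add_card_inter T B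
    have h2 := Finset.card_sdiff_add_card_inter B T
    rw [Finset.inter_comm] at h2
    omega
  have hkey : ∑ i ∈ B \ T, a i ≤ ∑ i ∈ T \ B, a i := by
    rcases Finset.eq_empty_or_nonempty (T \ B) with he | hne
    · have : (B \ T) = ∅ := Finset.card_eq_zero.mp (by rw [← hcard, he, Finset.card_empty])
      simp [he, this]
    · obtain ⟨i0, hi0⟩ := hne
      have hi0B : ¬ ((i0 : ℕ) < m) := by
        have := (Finset.mem_sdiff.mp hi0).2
        simpa [hB] using this
      have hmn : m < n := lt_of_le_of_lt (le_of_not_gt hi0B) i0.isLt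
      set am : Fin n := ⟨m, hmn⟩
      have h1 : ∑ i ∈ B \ T, a i ≤ (B \ T).card • a am := by
        apply Finset.sum_le_card_nsmul
        intro i hi
        apply ha
        have : (i : ℕ) < m := by
          have := (Finset.mem_sdiff.mp hi).1
          simpa [hB] using this
        exact le_of_lt (Fin.lt_def.mpr this)
      have h2 : (T \ B).card • a am ≤ ∑ i ∈ T \ B, a i := by
        apply Finset.card_nsmul_le_sum
        intro i hi
        apply ha
        have : ¬ ((i : ℕ) < m) := by
          have := (Finset.mem_sdiff.mp hi).2
          simpa [hB] using this
        exact Fin.le_def.mpr (le_of_not_gt this)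
      calc ∑ i ∈ B \ T, a i ≤ (B \ T).card • a am := h1
        _ = (T \ B).card • a am := by rw [hcard]
        _ ≤ ∑ i ∈ T \ B, a i := h2
  have : ∑ i ∈ T ∩ B, a i = ∑ i ∈ B ∩ T, a i := by rw [Finset.inter_comm]
  linarith

lemma perm_sum_ge {n : ℕ} (a : Fin n → ℝ) (ha : Monotone a) (x : Fin n → ℝ)
    (hx : x ∈ permutohedron n a) (J : Finset (Fin n)) :
    ∑ i ∈ Finset.univ.filter (fun i : Fin n => (i : ℕ) < J.card), a i ≤ ∑ i ∈ J, x i := by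
  classical
  set c := ∑ i ∈ Finset.univ.filter (fun i : Fin n => (i : ℕ) < J.card), a i with hc
  have hconv : Convex ℝ {y : Fin n → ℝ | c ≤ ∑ i ∈ J, y i} := by
    intro y hy z hz s t hs ht hst
    simp only [Set.mem_setOf_eq] at hy hz ⊢
    have : ∑ i ∈ J, (s • y + t • z) i = s * ∑ i ∈ J, y i + t * ∑ i ∈ J, z i := by
      simp [Finset.mul_sum, Finset.sum_add_distrib, mul_comm]
    rw [this]
    have h1 := mul_le_mul_of_nonneg_left hy hs
    have h2 := mul_le_mul_of_nonneg_left hz ht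
    have h3 : s * c + t * c = c := by rw [← add_mul, hst, one_mul]
    linarith
  have hsub : {p | ∃ u : Equiv.Perm (Fin n), p = permPoint n a u} ⊆
      {y : Fin n → ℝ | c ≤ ∑ i ∈ J, y i} := by
    rintro p ⟨u, rfl⟩
    simp only [Set.mem_setOf_eq, permPoint]
    have himg : ∑ i ∈ J, a (u i) = ∑ j ∈ J.image u, a j := by
      rw [Finset.sum_image (fun i _ j _ h => u.injective h)]
    have hcard : (J.image u).card = J.card := Finset.card_image_of_injective _ u.injective
    rw [himg, hc, ← hcard]
    exact sum_min a ha (J.image u)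
  exact convexHull_min hsub hconv hx

lemma SK_preserves {n : ℕ} (K : Finset ℕ) (hK : ∀ k ∈ K, k + 1 < n) (k : ℕ)
    (hkK : k ∉ K) (w : Equiv.Perm (Fin n)) (hw : w ∈ SK n K hK) :
    ∀ i : Fin n, (i : ℕ) ≤ k → ((w i : Fin n) : ℕ) ≤ k := by
  classical
  refine Subgroup.closure_induction ?_ ?_ ?_ ?_ hw
  · rintro σ ⟨j, hj, rfl⟩ i hi
    have hjk : j ≠ k := fun h => hkK (h ▸ hj)
    rcases eq_or_ne i ⟨j, Nat.lt_of_succ_lt (hK j hj)⟩ with h | h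
    · rw [h, Equiv.swap_apply_left]
      simp only [h] at hi
      simp at hi ⊢
      omega
    · rcases eq_or_ne i ⟨j + 1, hK j hj⟩ with h2 | h2
      · rw [h2, Equiv.swap_apply_right]
        simp only [h2] at hi
        simp at hi ⊢
        omega
      · rw [Equiv.swap_apply_of_ne_of_ne h h2]
        exact hi
  · intro i hi; simpa using hi
  · intro x y hx hy hxk hyk i hi
    exact hxk _ (hyk i hi)
  · intro x hx hxk i hi
    set S := Finset.univ.filter (fun j : Fin n => (j : ℕ) ≤ k) with hS
    have hsub : S.image x ⊆ S := by
      intro j hj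
      obtain ⟨j', hj', rfl⟩ := Finset.mem_image.mp hj
      simp only [hS, Finset.mem_filter, Finset.mem_univ, true_and] at hj' ⊢
      exact hxk _ hj'
    have heq : S.image x = S :=
      Finset.eq_of_subset_of_card_le hsub
        (le_of_eq (Finset.card_image_of_injective _ x.injective).symm)
    have hiS : i ∈ S.image x := by
      rw [heq]; simp [hS, hi]
    obtain ⟨j, hjS, hji⟩ := Finset.mem_image.mp hiS
    have : x⁻¹ i = j := by rw [← hji]; simp
    rw [this]
    simp only [hS, Finset.mem_filter] at hjS
    exact hjS.2

/-- Strict monotonicity of the counting function. -/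
lemma filter_lt_card_strictmono {n : ℕ} (S : Finset (Fin n)) {i j : Fin n}
    (hi : i ∈ S) (hij : i < j) :
    (S.filter (fun t => t < i)).card < (S.filter (fun t => t < j)).card := by
  classical
  apply Finset.card_lt_card
  constructor
  · intro t ht
    simp only [Finset.mem_filter] at ht ⊢
    exact ⟨ht.1, lt_trans ht.2 hij⟩
  · intro hsub
    have : i ∈ S.filter (fun t => t < j) := Finset.mem_filter.mpr ⟨hi, hij⟩
    have := hsub this
    simp only [Finset.mem_filter] at this
    exact lt_irrefl i this.2

lemma filter_lt_card_mono {n : ℕ} (S : Finset (Fin n)) {i j : Fin n} (hij : i ≤ j) :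
    (S.filter (fun t => t < i)).card ≤ (S.filter (fun t => t < j)).card := by
  classical
  apply Finset.card_le_card
  intro t ht
  simp only [Finset.mem_filter] at ht ⊢
  exact ⟨ht.1, lt_of_lt_of_le ht.2 hij⟩

lemma filter_lt_card_lt_self {n : ℕ} (S : Finset (Fin n)) {i : Fin n} (hi : i ∈ S) :
    (S.filter (fun t => t < i)).card < S.card := by
  classical
  apply Finset.card_lt_card
  constructor
  · exact Finset.filter_subset _ _
  · intro hsub
    have := hsub hi
    simp only [Finset.mem_filter] at this
    exact lt_irrefl i this.2

end PermProofAux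

open PermutohedronA PermProofAux in
theorem statement6 (n : ℕ) (hn : 2 ≤ n) (a : Fin n → ℝ) (ha : StrictMono a)
    (hsum : ∑ i, a i = 0) (K : Finset ℕ) (hK : ∀ k ∈ K, k + 1 < n)
    (I : Finset (Fin n)) (hI1 : I.Nonempty) (hI2 : I ≠ Finset.univ) :
    (facet n a I ∩ permutohedronK n a K hK).Nonempty ↔ lowerK n K hK I := by
  classical
  have hmn : I.card < n := by
    have : I.card < Finset.univ.card := Finset.card_lt_card (Finset.ssubset_univ_iff.mpr hI2)
    simpa using this
  constructor
  · -- forward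
    rintro ⟨x, hxF, hxP, hxK⟩ k hk hw hk1
    obtain ⟨hxPerm, hxsum⟩ := hxF
    by_contra hkI
    -- k ∈ K
    obtain ⟨w, hwSK, hwk⟩ := hw
    have hkK : k ∈ K := by
      by_contra hkK
      have := SK_preserves K hK k hkK w hwSK ⟨k, Nat.lt_of_succ_lt hk⟩ (le_refl k)
      rw [hwk] at this
      simp at this
    have hle : x ⟨k, Nat.lt_of_succ_lt hk⟩ ≤ x ⟨k + 1, hk⟩ := hxK k hkK
    -- upper bound: x_k ≥ a ⟨m⟩
    have hup := perm_sum_ge a ha.monotone x hxPerm (insert ⟨k, Nat.lt_of_succ_lt hk⟩ I)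
    rw [Finset.sum_insert hkI, Finset.card_insert_of_notMem hkI,
      sum_filter_lt_succ a I.card hmn, hxsum] at hup
    -- lower bound: x_{k+1} ≤ a ⟨m-1⟩
    obtain ⟨m', hm'⟩ : ∃ m', I.card = m' + 1 :=
      ⟨I.card - 1, (Nat.succ_pred_eq_of_pos (Finset.card_pos.mpr hI1)).symm⟩
    have hm'n : m' < n := by omega
    have hdown := perm_sum_ge a ha.monotone x hxPerm (I.erase ⟨k + 1, hk⟩)
    have herase : ∑ i ∈ I.erase ⟨k + 1, hk⟩, x i + x ⟨k + 1, hk⟩ = ∑ i ∈ I, x i :=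
      Finset.sum_erase_add I x hk1
    rw [Finset.card_erase_of_mem hk1, hm'] at hdown
    simp only [Nat.add_sub_cancel] at hdown
    have hsum' : ∑ i ∈ I, x i
        = (∑ i ∈ Finset.univ.filter (fun i : Fin n => (i : ℕ) < m'), a i) + a ⟨m', hm'n⟩ := by
      rw [hxsum, hm', sum_filter_lt_succ a m' hm'n]
    have hstrict : a ⟨m', hm'n⟩ < a ⟨I.card, hmn⟩ := by
      apply ha
      simp only [Fin.lt_def]
      omega
    linarith
  · -- backward: construct a vertex
    intro hlow
    set m := I.card with hm
    have hcompl : (Iᶜ : Finset (Fin n)).card = n - m := by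
      rw [Finset.card_compl]
      simp [hm]
    have hbound1 : ∀ i ∈ I, (I.filter (fun t => t < i)).card < n :=
      fun i hi => lt_trans (filter_lt_card_lt_self I hi) hmn
    have hbound2 : ∀ i, i ∉ I → m + ((Iᶜ).filter (fun t => t < i)).card < n := by
      intro i hi
      have hiC : i ∈ (Iᶜ : Finset (Fin n)) := Finset.mem_compl.mpr hi
      have := filter_lt_card_lt_self (Iᶜ : Finset (Fin n)) hiC
      omega
    set f : Fin n → Fin n := fun i =>
      if h : i ∈ I then ⟨(I.filter (fun t => t < i)).card, hbound1 i h⟩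
      else ⟨m + ((Iᶜ).filter (fun t => t < i)).card, hbound2 i h⟩ with hf
    have hfmem : ∀ i ∈ I, (f i : ℕ) = (I.filter (fun t => t < i)).card := by
      intro i hi; simp [hf, hi]
    have hfnot : ∀ i, i ∉ I → (f i : ℕ) = m + ((Iᶜ).filter (fun t => t < i)).card := by
      intro i hi; simp [hf, hi]
    have hfltm : ∀ i ∈ I, (f i : ℕ) < m := by
      intro i hi
      rw [hfmem i hi]
      exact filter_lt_card_lt_self I hi
    have hfgem : ∀ i, i ∉ I → m ≤ (f i : ℕ) := by
      intro i hi
      rw [hfnot i hi]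
      omega
    have finj : Function.Injective f := by
      intro i j hij
      by_contra hne
      have hval : (f i : ℕ) = (f j : ℕ) := by rw [hij]
      rcases lt_trichotomy i j with hlt | heq | hgt
      · by_cases hi : i ∈ I <;> by_cases hj : j ∈ I
        · rw [hfmem i hi, hfmem j hj] at hval
          exact absurd hval (Nat.ne_of_lt (filter_lt_card_strictmono I hi hlt))
        · have := hfltm i hi; have := hfgem j hj; omega
        · have := hfgem i hi; have := hfltm j hj; omega
        · rw [hfnot i hi, hfnot j hj] at hval
          have hiC : i ∈ (Iᶜ : Finset (Fin n)) := Finset.mem_compl.mpr hi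
          have := filter_lt_card_strictmono (Iᶜ : Finset (Fin n)) hiC hlt
          omega
      · exact hne heq
      · by_cases hi : i ∈ I <;> by_cases hj : j ∈ I
        · rw [hfmem i hi, hfmem j hj] at hval
          exact absurd hval.symm (Nat.ne_of_lt (filter_lt_card_strictmono I hj hgt))
        · have := hfltm i hi; have := hfgem j hj; omega
        · have := hfgem i hi; have := hfltm j hj; omega
        · rw [hfnot i hi, hfnot j hj] at hval
          have hjC : j ∈ (Iᶜ : Finset (Fin n)) := Finset.mem_compl.mpr hj
          have := filter_lt_card_strictmono (Iᶜ : Finset (Fin n)) hjC hgt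
          omega
    set u : Equiv.Perm (Fin n) := Equiv.ofBijective f (Finite.injective_iff_bijective.mp finj)
      with hu
    have hui : ∀ i, u i = f i := fun i => rfl
    refine ⟨permPoint n a u, ⟨?_, ?_⟩, ?_, ?_⟩
    · exact subset_convexHull ℝ _ ⟨u, rfl⟩
    · -- the sum condition
      have himg : I.image u = Finset.univ.filter (fun i : Fin n => (i : ℕ) < m) := by
        apply Finset.eq_of_subset_of_card_le
        · intro j hj
          obtain ⟨i, hi, rfl⟩ := Finset.mem_image.mp hj
          simp only [Finset.mem_filter, Finset.mem_univ, true_and]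
          rw [hui]
          exact hfltm i hi
        · rw [card_filter_val_lt n m (le_of_lt hmn),
            Finset.card_image_of_injective _ u.injective]
      calc ∑ i ∈ I, permPoint n a u i = ∑ j ∈ I.image u, a j := by
            rw [Finset.sum_image (fun i _ j _ h => u.injective h)]
            rfl
        _ = ∑ i ∈ Finset.univ.filter (fun i : Fin n => (i : ℕ) < I.card), a i := by
            rw [himg]
    · exact subset_convexHull ℝ _ ⟨u, rfl⟩
    · -- the order conditions
      intro k hkK
      have hk := hK k hkK
      set ik : Fin n := ⟨k, Nat.lt_of_succ_lt hk⟩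
      set jk : Fin n := ⟨k + 1, hk⟩
      have hikjk : ik < jk := Fin.mk_lt_mk.mpr (Nat.lt_succ_self k)
      have hgoal : (u ik : ℕ) ≤ (u jk : ℕ) := by
        rw [hui, hui]
        by_cases hi : ik ∈ I <;> by_cases hj : jk ∈ I
        · rw [hfmem ik hi, hfmem jk hj]
          exact filter_lt_card_mono I (le_of_lt hikjk)
        · have := hfltm ik hi; have := hfgem jk hj; omega
        · exfalso
          apply hi
          apply hlow k hk _ hj
          refine ⟨Equiv.swap ik jk, Subgroup.subset_closure ⟨k, hkK, rfl⟩, ?_⟩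
          exact Equiv.swap_apply_left ik jk
        · rw [hfnot ik hi, hfnot jk hj]
          have := filter_lt_card_mono (Iᶜ : Finset (Fin n)) (le_of_lt hikjk)
          omega
      show permPoint n a u ik ≤ permPoint n a u jk
      exact ha.monotone (Fin.le_def.mpr hgoal)
end
end

section
/- Proposition 4.6 (flagness of the partitioned permutohedron): Let K ⊆ [n−1], let I_1,…,I_p ∈ 𝔉_{A_{n−1}}(K) and k_1,…,k_q ∈ K. If every pair of sets from the collection {F_K(I_1),…,F_K(I_p), H_K(k_1),…,H_K(k_q)} has nonempty intersection, then F_K(I_1) ∩ ⋯ ∩ F_K(I_p) ∩ H_K(k_1) ∩ ⋯ ∩ H_K(k_q) ≠ ∅. -/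
noncomputable section

namespace Aux
open PermutohedronA Finset

variable {n : ℕ} {a : Fin n → ℝ}

/-- i-th smallest element of T is ≥ i. -/
lemma le_orderEmb (T : Finset (Fin n)) {m : ℕ} (h : T.card = m) (i : Fin m) :
    (i : ℕ) ≤ ((T.orderEmbOfFin h i : Fin n) : ℕ) := by
  induction' hi : (i : ℕ) with j ih generalizing i
  · exact Nat.zero_le _
  · have hj : j < m := by omega
    have h1 := ih ⟨j, hj⟩ rfl
    have h2 : (⟨j, hj⟩ : Fin m) < i := by simp [Fin.lt_def, hi]
    have := (T.orderEmbOfFin h).strictMono h2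
    have := Fin.lt_def.mp this
    omega

lemma image_castLE {m : ℕ} (hmn : m ≤ n) :
    (Finset.univ : Finset (Fin m)).image (Fin.castLE hmn) =
      Finset.univ.filter (fun i : Fin n => (i : ℕ) < m) := by
  ext x
  simp only [mem_image, mem_univ, true_and, mem_filter]
  constructor
  · rintro ⟨i, rfl⟩; exact i.isLt
  · intro hx; exact ⟨⟨(x : ℕ), hx⟩, by ext; simp⟩

lemma card_filter_lt {m : ℕ} (hmn : m ≤ n) :
    (Finset.univ.filter (fun i : Fin n => (i : ℕ) < m)).card = m := by
  rw [← image_castLE hmn, Finset.card_image_of_injective _ (Fin.castLE_injective hmn)]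
  simp

lemma sum_image_univ {m : ℕ} (f : Fin m → Fin n) (hf : Function.Injective f)
    (b : Fin n → ℝ) : ∑ i ∈ (Finset.univ : Finset (Fin m)).image f, b i
      = ∑ i : Fin m, b (f i) := by
  rw [Finset.sum_image (fun x _ y _ h => hf h)]

lemma image_orderEmb (T : Finset (Fin n)) {m : ℕ} (h : T.card = m) :
    (Finset.univ : Finset (Fin m)).image (T.orderEmbOfFin h) = T := by
  ext x
  simp only [mem_image, mem_univ, true_and]
  constructor
  · rintro ⟨i, rfl⟩; exact T.orderEmbOfFin_mem h i
  · intro hx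
    have : x ∈ Set.range (T.orderEmbOfFin h) := by
      rw [T.range_orderEmbOfFin h]; exact hx
    obtain ⟨i, hi⟩ := this
    exact ⟨i, hi⟩

/-- sum of a over any set T dominates sum over initial segment of same size. -/
lemma initial_le_sum (ha : StrictMono a) (T : Finset (Fin n)) :
    ∑ i ∈ Finset.univ.filter (fun i : Fin n => (i : ℕ) < T.card), a i ≤ ∑ i ∈ T, a i := by
  have hmn : T.card ≤ n := by simpa using T.card_le_univ
  have hT : ∑ i ∈ T, a i = ∑ i : Fin T.card, a (T.orderEmbOfFin rfl i) := by
    conv_lhs => rw [← image_orderEmb T rfl]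
    rw [sum_image_univ _ (T.orderEmbOfFin rfl).injective]
  rw [← image_castLE hmn, sum_image_univ _ (Fin.castLE_injective hmn), hT]
  apply Finset.sum_le_sum
  intro i _
  exact ha.monotone (by rw [Fin.le_def]; simpa using le_orderEmb T rfl i)

/-- Rado: every point of the permutohedron satisfies the subset sum inequalities. -/
lemma rado (ha : StrictMono a) {x : Fin n → ℝ} (hx : x ∈ permutohedron n a)
    (S : Finset (Fin n)) :
    ∑ i ∈ Finset.univ.filter (fun i : Fin n => (i : ℕ) < S.card), a i ≤ ∑ i ∈ S, x i := by
  set c := ∑ i ∈ Finset.univ.filter (fun i : Fin n => (i : ℕ) < S.card), a i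
  have hconv : Convex ℝ {y : Fin n → ℝ | c ≤ ∑ i ∈ S, y i} := by
    apply convex_halfSpace_ge
    exact ⟨fun y z => by simp [Finset.sum_add_distrib],
      fun r y => by simp [Finset.mul_sum]⟩
  have hsub : {p | ∃ u : Equiv.Perm (Fin n), p = permPoint n a u} ⊆
      {y : Fin n → ℝ | c ≤ ∑ i ∈ S, y i} := by
    rintro p ⟨u, rfl⟩
    have himg : ∑ i ∈ S, permPoint n a u i = ∑ i ∈ S.image u, a i := by
      rw [Finset.sum_image (fun x _ y _ h => u.injective h)]; rfl
    have hcard : (S.image u).card = S.card := Finset.card_image_of_injective _ u.injective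
    have := initial_le_sum ha (S.image u)
    rw [hcard] at this
    simpa [himg] using this
  exact convexHull_min hsub hconv hx

end Aux
namespace Aux
open PermutohedronA Finset

variable {n : ℕ} {a : Fin n → ℝ}

lemma Gstep (ha : StrictMono a) {m : ℕ} (hm : m < n) :
    ∑ i ∈ Finset.univ.filter (fun i : Fin n => (i : ℕ) < m + 1), a i
      = (∑ i ∈ Finset.univ.filter (fun i : Fin n => (i : ℕ) < m), a i) + a ⟨m, hm⟩ := by
  have heq : Finset.univ.filter (fun i : Fin n => (i : ℕ) < m + 1)
      = insert (⟨m, hm⟩ : Fin n) (Finset.univ.filter (fun i : Fin n => (i : ℕ) < m)) := by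
    ext v
    simp only [mem_filter, mem_univ, true_and, mem_insert, Fin.ext_iff]
    omega
  rw [heq, Finset.sum_insert (by simp)]
  ring

lemma sum_lt_sum_sets (ha : StrictMono a) (S T : Finset (Fin n)) (hc : S.card = T.card)
    (hne : S.Nonempty) (h : ∀ s ∈ S, ∀ t ∈ T, s < t) : ∑ i ∈ S, a i < ∑ i ∈ T, a i := by
  have hpos : 0 < S.card := Finset.card_pos.mpr hne
  haveI : Nonempty (Fin S.card) := ⟨⟨0, hpos⟩⟩
  have hS : ∑ i ∈ S, a i = ∑ i : Fin S.card, a (S.orderEmbOfFin rfl i) := by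
    conv_lhs => rw [← image_orderEmb S rfl]
    rw [sum_image_univ _ (S.orderEmbOfFin rfl).injective]
  have hT : ∑ i ∈ T, a i = ∑ i : Fin S.card, a (T.orderEmbOfFin hc.symm i) := by
    conv_lhs => rw [← image_orderEmb T hc.symm]
    rw [sum_image_univ _ (T.orderEmbOfFin hc.symm).injective]
  rw [hS, hT]
  apply Finset.sum_lt_sum_of_nonempty Finset.univ_nonempty
  intro i _
  exact ha (h _ (S.orderEmbOfFin_mem rfl i) _ (T.orderEmbOfFin_mem hc.symm i))

lemma concave (ha : StrictMono a) {c m l d : ℕ} (h1 : c < m) (h2 : m ≤ l) (h3 : l < d)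
    (h4 : d ≤ n) (h5 : c + d = m + l) :
    (∑ i ∈ Finset.univ.filter (fun i : Fin n => (i : ℕ) < m), a i)
      + ∑ i ∈ Finset.univ.filter (fun i : Fin n => (i : ℕ) < l), a i
    < (∑ i ∈ Finset.univ.filter (fun i : Fin n => (i : ℕ) < c), a i)
      + ∑ i ∈ Finset.univ.filter (fun i : Fin n => (i : ℕ) < d), a i := by
  set A := Finset.univ.filter (fun i : Fin n => (i : ℕ) < m) with hA
  set B := Finset.univ.filter (fun i : Fin n => (i : ℕ) < l) with hB
  set C := Finset.univ.filter (fun i : Fin n => (i : ℕ) < c) with hC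
  set D := Finset.univ.filter (fun i : Fin n => (i : ℕ) < d) with hD
  have hCA : C ⊆ A := by
    intro v hv
    simp only [hC, mem_filter, mem_univ, true_and] at hv
    simp only [hA, mem_filter, mem_univ, true_and]
    omega
  have hBD : B ⊆ D := by
    intro v hv
    simp only [hB, mem_filter, mem_univ, true_and] at hv
    simp only [hD, mem_filter, mem_univ, true_and]
    omega
  have hcard1 : (A \ C).card = m - c := by
    rw [Finset.card_sdiff_of_subset hCA, hA, hC, card_filter_lt (by omega), card_filter_lt (by omega)]
  have hcard2 : (D \ B).card = d - l := by
    rw [Finset.card_sdiff_of_subset hBD, hB, hD, card_filter_lt h4, card_filter_lt (by omega)]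
  have hlt : ∑ i ∈ A \ C, a i < ∑ i ∈ D \ B, a i := by
    apply sum_lt_sum_sets ha _ _ (by omega)
    · rw [← Finset.card_pos, hcard1]; omega
    · intro s hs t ht
      simp only [hA, hB, hC, hD, Finset.mem_sdiff, mem_filter, mem_univ, true_and] at hs ht
      rw [Fin.lt_def]; omega
  have e1 : ∑ i ∈ A \ C, a i = (∑ i ∈ A, a i) - ∑ i ∈ C, a i :=
    Finset.sum_sdiff_eq_sub hCA
  have e2 : ∑ i ∈ D \ B, a i = (∑ i ∈ D, a i) - ∑ i ∈ B, a i :=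
    Finset.sum_sdiff_eq_sub hBD
  linarith

lemma comparable (ha : StrictMono a) {I J : Finset (Fin n)} {x : Fin n → ℝ}
    (hxI : x ∈ facet n a I) (hxJ : x ∈ facet n a J) : I ⊆ J ∨ J ⊆ I := by
  by_contra hcon
  push_neg at hcon
  obtain ⟨hIJ, hJI⟩ := hcon
  obtain ⟨v, hvI, hvJ⟩ := Finset.not_subset.mp hIJ
  obtain ⟨w, hwJ, hwI⟩ := Finset.not_subset.mp hJI
  have hx : x ∈ permutohedron n a := hxI.1
  have e1 := hxI.2
  have e2 := hxJ.2
  have hc1 : (I ∩ J).card < I.card := Finset.card_lt_card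
    ((Finset.ssubset_iff_of_subset Finset.inter_subset_left).mpr
      ⟨v, hvI, fun hm => hvJ (Finset.mem_inter.mp hm).2⟩)
  have hc2 : (I ∩ J).card < J.card := Finset.card_lt_card
    ((Finset.ssubset_iff_of_subset Finset.inter_subset_right).mpr
      ⟨w, hwJ, fun hm => hwI (Finset.mem_inter.mp hm).1⟩)
  have hd1 : I.card < (I ∪ J).card := Finset.card_lt_card
    ((Finset.ssubset_iff_of_subset Finset.subset_union_left).mpr
      ⟨w, Finset.mem_union_right _ hwJ, hwI⟩)
  have hd2 : J.card < (I ∪ J).card := Finset.card_lt_card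
    ((Finset.ssubset_iff_of_subset Finset.subset_union_right).mpr
      ⟨v, Finset.mem_union_left _ hvI, hvJ⟩)
  have hsum : (I ∩ J).card + (I ∪ J).card = I.card + J.card :=
    Finset.card_inter_add_card_union I J
  have hdn : (I ∪ J).card ≤ n := by simpa using (I ∪ J).card_le_univ
  have r1 := rado ha hx (I ∩ J)
  have r2 := rado ha hx (I ∪ J)
  have hsum2 : (∑ i ∈ I ∪ J, x i) + ∑ i ∈ I ∩ J, x i = (∑ i ∈ I, x i) + ∑ i ∈ J, x i :=
    Finset.sum_union_inter
  rcases le_total I.card J.card with hle | hle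
  · have := concave ha hc1 hle hd2 hdn (by omega)
    linarith
  · have := concave ha hc2 hle hd1 hdn (by omega)
    linarith

lemma not_straddle (ha : StrictMono a) {I : Finset (Fin n)} {x : Fin n → ℝ}
    (hxI : x ∈ facet n a I) {kk : ℕ} (hkk : kk + 1 < n)
    (hx : x ⟨kk, Nat.lt_of_succ_lt hkk⟩ = x ⟨kk + 1, hkk⟩)
    (hmem : (⟨kk, Nat.lt_of_succ_lt hkk⟩ : Fin n) ∈ I) : (⟨kk + 1, hkk⟩ : Fin n) ∈ I := by
  by_contra hnot
  set vk : Fin n := ⟨kk, Nat.lt_of_succ_lt hkk⟩ with hvk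
  set vk1 : Fin n := ⟨kk + 1, hkk⟩ with hvk1
  set m := I.card with hm
  have hmpos : 0 < m := Finset.card_pos.mpr ⟨vk, hmem⟩
  have hinsn : (insert vk1 I).card ≤ n := by simpa using (insert vk1 I).card_le_univ
  have hcard1 : (insert vk1 I).card = m + 1 := Finset.card_insert_of_notMem hnot
  have hmn : m < n := by omega
  -- upper bound on x vk
  have r2 := rado ha hxI.1 (I.erase vk)
  have hcard2 : (I.erase vk).card = m - 1 := Finset.card_erase_of_mem hmem
  have hsum2 : ∑ i ∈ I.erase vk, x i = (∑ i ∈ I, x i) - x vk :=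
    Finset.sum_erase_eq_sub hmem
  have hGm : (∑ i ∈ Finset.univ.filter (fun i : Fin n => (i : ℕ) < m), a i)
      = (∑ i ∈ Finset.univ.filter (fun i : Fin n => (i : ℕ) < m - 1), a i)
        + a ⟨m - 1, by omega⟩ := by
    have := Gstep ha (show m - 1 < n by omega) (a := a)
    rw [show m - 1 + 1 = m by omega] at this
    exact this
  have hub : x vk ≤ a ⟨m - 1, by omega⟩ := by
    rw [hcard2, hsum2, hxI.2, hGm] at r2
    linarith [r2]
  -- lower bound on x vk1
  have r1 := rado ha hxI.1 (insert vk1 I)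
  have hsum1 : ∑ i ∈ insert vk1 I, x i = x vk1 + ∑ i ∈ I, x i :=
    Finset.sum_insert hnot
  have hlb : a ⟨m, hmn⟩ ≤ x vk1 := by
    rw [hcard1, hsum1, hxI.2, Gstep ha hmn] at r1
    linarith
  have : a ⟨m - 1, by omega⟩ < a ⟨m, hmn⟩ := ha (by rw [Fin.lt_def]; simp; omega)
  rw [hx] at hub
  linarith

end Aux
namespace Aux
open PermutohedronA Finset

variable {n p : ℕ} {K : Finset ℕ}

def cnt (I : Fin p → Finset (Fin n)) (v : Fin n) : ℕ :=
  (Finset.univ.filter (fun i => v ∈ I i)).card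

def kappa (I : Fin p → Finset (Fin n)) (v : Fin n) : ℕ :=
  (p - cnt I v) * n + (v : ℕ)

lemma cnt_le_p (I : Fin p → Finset (Fin n)) (v : Fin n) : cnt I v ≤ p := by
  unfold cnt
  calc (Finset.univ.filter (fun i => v ∈ I i)).card ≤ (Finset.univ : Finset (Fin p)).card :=
        Finset.card_le_card (Finset.filter_subset _ _)
    _ = p := by simp

lemma cnt_lt {I : Fin p → Finset (Fin n)}
    (hcomp : ∀ i i', I i ⊆ I i' ∨ I i' ⊆ I i) {v v' : Fin n} {i : Fin p}
    (hv : v ∈ I i) (hv' : v' ∉ I i) : cnt I v' < cnt I v := by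
  apply Finset.card_lt_card
  rw [Finset.ssubset_iff_of_subset]
  · exact ⟨i, by simpa using hv, by simpa using hv'⟩
  · intro i' hi'
    simp only [mem_filter, mem_univ, true_and] at hi' ⊢
    rcases hcomp i' i with h | h
    · exact absurd (h hi') hv'
    · exact h hv

lemma kappa_lt_of_mem {I : Fin p → Finset (Fin n)}
    (hcomp : ∀ i i', I i ⊆ I i' ∨ I i' ⊆ I i) {v v' : Fin n} {i : Fin p}
    (hv : v ∈ I i) (hv' : v' ∉ I i) : kappa I v < kappa I v' := by
  have h1 := cnt_lt hcomp hv hv'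
  have h2 := cnt_le_p I v
  have h3 : p - cnt I v + 1 ≤ p - cnt I v' := by omega
  have h4 := Nat.mul_le_mul_right n h3
  have h5 : (v : ℕ) < n := v.isLt
  unfold kappa
  have : (p - cnt I v + 1) * n = (p - cnt I v) * n + n := by ring
  omega

lemma kappa_inj (I : Fin p → Finset (Fin n)) : Function.Injective (kappa I) := by
  intro v w h
  unfold kappa at h
  have hv : (v : ℕ) < n := v.isLt
  have hw : (w : ℕ) < n := w.isLt
  have h1 : kappa I v % n = (v : ℕ) := by
    unfold kappa; rw [Nat.mul_comm, Nat.mul_add_mod]; exact Nat.mod_eq_of_lt hv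
  have h2 : kappa I w % n = (w : ℕ) := by
    unfold kappa; rw [Nat.mul_comm, Nat.mul_add_mod]; exact Nat.mod_eq_of_lt hw
  apply Fin.ext
  rw [← h1, ← h2]
  unfold kappa
  rw [h]

def rnk (I : Fin p → Finset (Fin n)) (v : Fin n) : Fin n :=
  ⟨(Finset.univ.filter (fun w => kappa I w < kappa I v)).card, by
    have h1 : Finset.univ.filter (fun w => kappa I w < kappa I v) ⊆ Finset.univ.erase v := by
      intro w hw
      simp only [mem_filter, mem_univ, true_and] at hw
      simp only [Finset.mem_erase, mem_univ, and_true]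
      intro hwv; rw [hwv] at hw; exact lt_irrefl _ hw
    calc (Finset.univ.filter (fun w => kappa I w < kappa I v)).card
        ≤ (Finset.univ.erase v).card := Finset.card_le_card h1
      _ = n - 1 := by simp
      _ < n := by have := v.isLt; omega⟩

lemma rnk_lt_rnk {I : Fin p → Finset (Fin n)} {v w : Fin n}
    (h : kappa I v < kappa I w) : rnk I v < rnk I w := by
  rw [Fin.lt_def]
  show (Finset.univ.filter (fun u => kappa I u < kappa I v)).card < (Finset.univ.filter (fun u => kappa I u < kappa I w)).card
  apply Finset.card_lt_card
  rw [Finset.ssubset_iff_of_subset]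
  · exact ⟨v, by simpa using h, by simp⟩
  · intro u hu
    simp only [mem_filter, mem_univ, true_and] at hu ⊢
    omega

lemma rnk_injective (I : Fin p → Finset (Fin n)) : Function.Injective (rnk I) := by
  intro v w h
  by_contra hne
  have hk : kappa I v ≠ kappa I w := fun he => hne (kappa_inj I he)
  rcases lt_or_gt_of_ne hk with hlt | hlt
  · exact absurd h (ne_of_lt (rnk_lt_rnk hlt))
  · exact absurd h.symm (ne_of_lt (rnk_lt_rnk hlt))

def u0 (I : Fin p → Finset (Fin n)) : Equiv.Perm (Fin n) :=
  Equiv.ofBijective (rnk I) (Finite.injective_iff_bijective.mp (rnk_injective I))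

@[simp] lemma u0_apply (I : Fin p → Finset (Fin n)) (v : Fin n) : u0 I v = rnk I v := rfl

/-- P1: membership in `I i` is equivalent to small rank. -/
lemma mem_iff_rnk_lt {I : Fin p → Finset (Fin n)}
    (hcomp : ∀ i i', I i ⊆ I i' ∨ I i' ⊆ I i) (i : Fin p) (v : Fin n) :
    v ∈ I i ↔ ((rnk I v : Fin n) : ℕ) < (I i).card := by
  constructor
  · intro hv
    have hsub : Finset.univ.filter (fun w => kappa I w < kappa I v) ⊆ (I i).erase v := by
      intro w hw
      simp only [mem_filter, mem_univ, true_and] at hw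
      rw [Finset.mem_erase]
      constructor
      · intro hwv; rw [hwv] at hw; exact lt_irrefl _ hw
      · by_contra hwI
        exact absurd hw (not_lt.mpr (le_of_lt (kappa_lt_of_mem hcomp hv hwI)))
    calc ((rnk I v : Fin n) : ℕ) ≤ ((I i).erase v).card := Finset.card_le_card hsub
      _ = (I i).card - 1 := Finset.card_erase_of_mem hv
      _ < (I i).card := by
          have : 0 < (I i).card := Finset.card_pos.mpr ⟨v, hv⟩
          omega
  · intro hlt
    by_contra hv
    have hsub : I i ⊆ Finset.univ.filter (fun w => kappa I w < kappa I v) := by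
      intro w hw
      simp only [mem_filter, mem_univ, true_and]
      exact kappa_lt_of_mem hcomp hw hv
    have := Finset.card_le_card hsub
    have hr : ((rnk I v : Fin n) : ℕ)
        = (Finset.univ.filter (fun w => kappa I w < kappa I v)).card := rfl
    omega

/-- P2: the rank increases along `K`-steps, given the down-closure property. -/
lemma rnk_K_step {I : Fin p → Finset (Fin n)}
    (hdown : ∀ (i : Fin p) (kk : ℕ) (hkn : kk + 1 < n), kk ∈ K →
      (⟨kk + 1, hkn⟩ : Fin n) ∈ I i → (⟨kk, Nat.lt_of_succ_lt hkn⟩ : Fin n) ∈ I i)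
    {kk : ℕ} (hkn : kk + 1 < n) (hkK : kk ∈ K) :
    rnk I ⟨kk, Nat.lt_of_succ_lt hkn⟩ < rnk I ⟨kk + 1, hkn⟩ := by
  apply rnk_lt_rnk
  have hcle : cnt I ⟨kk + 1, hkn⟩ ≤ cnt I ⟨kk, Nat.lt_of_succ_lt hkn⟩ := by
    apply Finset.card_le_card
    intro i hi
    simp only [mem_filter, mem_univ, true_and] at hi ⊢
    exact hdown i kk hkn hkK hi
  have h3 : p - cnt I ⟨kk, Nat.lt_of_succ_lt hkn⟩ ≤ p - cnt I ⟨kk + 1, hkn⟩ := by omega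
  have h4 := Nat.mul_le_mul_right n h3
  unfold kappa
  simp only
  omega

/-- interval monotonicity of the rank. -/
lemma rnk_mono_interval {I : Fin p → Finset (Fin n)}
    (hdown : ∀ (i : Fin p) (kk : ℕ) (hkn : kk + 1 < n), kk ∈ K →
      (⟨kk + 1, hkn⟩ : Fin n) ∈ I i → (⟨kk, Nat.lt_of_succ_lt hkn⟩ : Fin n) ∈ I i) :
    ∀ (d : ℕ) (v w : Fin n), (w : ℕ) = (v : ℕ) + d →
      (∀ t, (v : ℕ) ≤ t → t < (w : ℕ) → t ∈ K) → rnk I v ≤ rnk I w := by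
  intro d
  induction d with
  | zero =>
    intro v w hw _
    have : v = w := Fin.ext (by omega)
    rw [this]
  | succ d ih =>
    intro v w hw ht
    have hwn : (w : ℕ) < n := w.isLt
    have hw' : (v : ℕ) + d + 1 < n := by omega
    set w' : Fin n := ⟨(v : ℕ) + d, Nat.lt_of_succ_lt hw'⟩ with hw'def
    have hval : (w' : ℕ) = (v : ℕ) + d := rfl
    have h1 : rnk I v ≤ rnk I w' := ih v w' hval (fun t h1 h2 => ht t h1 (by omega))
    have hKt : (v : ℕ) + d ∈ K := ht _ (by omega) (by omega)
    have h2 : rnk I w' < rnk I ⟨(v : ℕ) + d + 1, hw'⟩ := rnk_K_step hdown hw' hKt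
    have hval2 : ((⟨(v : ℕ) + d + 1, hw'⟩ : Fin n) : ℕ) = (v : ℕ) + d + 1 := rfl
    have hweq : w = ⟨(v : ℕ) + d + 1, hw'⟩ := Fin.ext (by omega)
    rw [hweq]
    exact le_of_lt (lt_of_le_of_lt h1 h2)

end Aux
open PermutohedronA in
theorem statement7 (n : ℕ) (hn : 2 ≤ n) (a : Fin n → ℝ) (ha : StrictMono a)
    (hsum : ∑ i, a i = 0) (K : Finset ℕ) (hK : ∀ k ∈ K, k + 1 < n)
    (p q : ℕ) (I : Fin p → Finset (Fin n))
    (hIne : ∀ i, (I i).Nonempty) (hIpr : ∀ i, I i ≠ Finset.univ)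
    (hIlow : ∀ i, lowerK n K hK (I i))
    (k : Fin q → ℕ) (hk : ∀ j, k j ∈ K)
    (hFF : ∀ i i', ((facet n a (I i) ∩ permutohedronK n a K hK) ∩
      (facet n a (I i') ∩ permutohedronK n a K hK)).Nonempty)
    (hFH : ∀ i j, ((facet n a (I i) ∩ permutohedronK n a K hK) ∩
      (hyperplane n (k j) (hK (k j) (hk j)) ∩ permutohedronK n a K hK)).Nonempty)
    (hHH : ∀ j j', ((hyperplane n (k j) (hK (k j) (hk j)) ∩ permutohedronK n a K hK) ∩
      (hyperplane n (k j') (hK (k j') (hk j')) ∩ permutohedronK n a K hK)).Nonempty) :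
    ((⋂ i, facet n a (I i) ∩ permutohedronK n a K hK) ∩
      ⋂ j, hyperplane n (k j) (hK (k j) (hk j)) ∩ permutohedronK n a K hK).Nonempty := by
  classical
  -- the facet sets form a chain
  have hcomp : ∀ i i', I i ⊆ I i' ∨ I i' ⊆ I i := by
    intro i i'
    obtain ⟨y, hy1, hy2⟩ := hFF i i'
    exact Aux.comparable ha hy1.1 hy2.1
  -- down-closure along K
  have hdown : ∀ (i : Fin p) (kk : ℕ) (hkn : kk + 1 < n), kk ∈ K →
      (⟨kk + 1, hkn⟩ : Fin n) ∈ I i → (⟨kk, Nat.lt_of_succ_lt hkn⟩ : Fin n) ∈ I i := by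
    intro i kk hkn hkK hmem
    refine hIlow i kk hkn
      ⟨Equiv.swap ⟨kk, Nat.lt_of_succ_lt (hK kk hkK)⟩ ⟨kk + 1, hK kk hkK⟩,
        Subgroup.subset_closure ⟨kk, hkK, rfl⟩, ?_⟩ hmem
    exact Equiv.swap_apply_left _ _
  set b : Fin q → Fin n := fun j => ⟨k j, Nat.lt_of_succ_lt (hK (k j) (hk j))⟩ with hbdef
  set b' : Fin q → Fin n := fun j => ⟨k j + 1, hK (k j) (hk j)⟩ with hb'def
  have hbval : ∀ j, ((b j : Fin n) : ℕ) = k j := by intro j; simp [hbdef]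
  have hb'val : ∀ j, ((b' j : Fin n) : ℕ) = k j + 1 := by intro j; simp [hb'def]
  -- invariance of each I i under each swap
  have hinv : ∀ (i : Fin p) (j : Fin q), (b j ∈ I i ↔ b' j ∈ I i) := by
    intro i j
    obtain ⟨y, hy1, hy2⟩ := hFH i j
    constructor
    · intro hm
      exact Aux.not_straddle ha hy1.1 (hK (k j) (hk j)) hy2.1 hm
    · intro hm
      exact hdown i (k j) (hK (k j) (hk j)) (hk j) hm
  set Q : Set (Equiv.Perm (Fin n)) := {σ | ∃ j : Fin q, σ = Equiv.swap (b j) (b' j)} with hQdef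
  set G := Subgroup.closure Q with hGdef
  have hswapG : ∀ j : Fin q, Equiv.swap (b j) (b' j) ∈ G := by
    intro j
    apply Subgroup.subset_closure
    rw [hQdef]
    exact ⟨j, rfl⟩
  -- G preserves each I i
  have hGI : ∀ g ∈ G, ∀ (i : Fin p) (v : Fin n), g v ∈ I i ↔ v ∈ I i := by
    intro g hg
    rw [hGdef] at hg
    refine Subgroup.closure_induction
      (p := fun g _ => ∀ (i : Fin p) (v : Fin n), g v ∈ I i ↔ v ∈ I i) ?_ ?_ ?_ ?_ hg
    · intro σ hσ i v
      rw [hQdef] at hσ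
      obtain ⟨j, rfl⟩ := hσ
      rcases eq_or_ne v (b j) with rfl | h1
      · rw [Equiv.swap_apply_left]
        exact (hinv i j).symm
      rcases eq_or_ne v (b' j) with rfl | h2
      · rw [Equiv.swap_apply_right]
        exact hinv i j
      · rw [Equiv.swap_apply_of_ne_of_ne h1 h2]
    · intro i v; simp
    · intro g h _ _ ihg ihh i v
      rw [Equiv.Perm.mul_apply]
      exact (ihg i (h v)).trans (ihh i v)
    · intro g _ ih i v
      have h2 := ih i (g⁻¹ v)
      rw [Equiv.Perm.inv_def, Equiv.apply_symm_apply] at h2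
      exact h2.symm
  -- G preserves lower sets at levels away from the k j
  have hGL : ∀ (m : ℕ), (∀ j : Fin q, k j ≠ m) → ∀ g ∈ G, ∀ v : Fin n,
      ((g v : Fin n) : ℕ) ≤ m ↔ (v : ℕ) ≤ m := by
    intro m hm g hg
    rw [hGdef] at hg
    refine Subgroup.closure_induction
      (p := fun g _ => ∀ v : Fin n, ((g v : Fin n) : ℕ) ≤ m ↔ (v : ℕ) ≤ m) ?_ ?_ ?_ ?_ hg
    · intro σ hσ v
      rw [hQdef] at hσ
      obtain ⟨j, rfl⟩ := hσ
      have e1 := hbval j; have e2 := hb'val j; have e3 := hm j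
      rcases eq_or_ne v (b j) with rfl | h1
      · rw [Equiv.swap_apply_left]; omega
      rcases eq_or_ne v (b' j) with rfl | h2
      · rw [Equiv.swap_apply_right]; omega
      · rw [Equiv.swap_apply_of_ne_of_ne h1 h2]
    · intro v; simp
    · intro g h _ _ ihg ihh v
      rw [Equiv.Perm.mul_apply]
      exact (ihg (h v)).trans (ihh v)
    · intro g _ ih v
      have h2 := ih (g⁻¹ v)
      rw [Equiv.Perm.inv_def, Equiv.apply_symm_apply] at h2
      exact h2.symm
  -- G moves points only along steps indexed by the k j
  have hGC : ∀ g ∈ G, ∀ (v : Fin n) (t : ℕ),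
      min (v : ℕ) ((g v : Fin n) : ℕ) ≤ t → t < max (v : ℕ) ((g v : Fin n) : ℕ) →
      ∃ j : Fin q, k j = t := by
    intro g hg
    rw [hGdef] at hg
    refine Subgroup.closure_induction
      (p := fun g _ => ∀ (v : Fin n) (t : ℕ),
        min (v : ℕ) ((g v : Fin n) : ℕ) ≤ t → t < max (v : ℕ) ((g v : Fin n) : ℕ) →
        ∃ j : Fin q, k j = t) ?_ ?_ ?_ ?_ hg
    · intro σ hσ v t h1 h2
      rw [hQdef] at hσ
      obtain ⟨j, rfl⟩ := hσ
      have e1 := hbval j; have e2 := hb'val j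
      rcases eq_or_ne v (b j) with rfl | hn1
      · rw [Equiv.swap_apply_left] at h1 h2
        exact ⟨j, by omega⟩
      rcases eq_or_ne v (b' j) with rfl | hn2
      · rw [Equiv.swap_apply_right] at h1 h2
        exact ⟨j, by omega⟩
      · rw [Equiv.swap_apply_of_ne_of_ne hn1 hn2] at h1 h2
        exact absurd h2 (by omega)
    · intro v t h1 h2
      rw [Equiv.Perm.one_apply] at h1 h2
      exact absurd h2 (by omega)
    · intro g h _ _ ihg ihh v t h1 h2
      rw [Equiv.Perm.mul_apply] at h1 h2
      by_cases hc : min ((h v : Fin n) : ℕ) ((g (h v) : Fin n) : ℕ) ≤ t ∧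
          t < max ((h v : Fin n) : ℕ) ((g (h v) : Fin n) : ℕ)
      · exact ihg (h v) t hc.1 hc.2
      · exact ihh v t (by omega) (by omega)
    · intro g _ ih v t h1 h2
      have h3 := ih (g⁻¹ v) t
      rw [Equiv.Perm.inv_def, Equiv.apply_symm_apply, min_comm, max_comm] at h3
      exact h3 h1 h2
  -- the averaging set
  set GS : Finset (Equiv.Perm (Fin n)) := Finset.univ.filter (fun g => g ∈ G) with hGSdef
  have hmemGS : ∀ g, g ∈ GS ↔ g ∈ G := by
    intro g; rw [hGSdef]; simp
  have hcard_pos : 0 < GS.card :=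
    Finset.card_pos.mpr ⟨1, (hmemGS 1).mpr (Subgroup.one_mem G)⟩
  have hNne : ((GS.card : ℝ)) ≠ 0 := (Nat.cast_pos.mpr hcard_pos).ne'
  set x : Fin n → ℝ := fun v => (∑ g ∈ GS, a (Aux.u0 I (g v))) / (GS.card : ℝ) with hxdef
  -- x lies in the permutohedron
  have hxP : x ∈ permutohedron n a := by
    have hmem : GS.centerMass (fun _ => (1 : ℝ)) (fun g => permPoint n a (Aux.u0 I * g))
        ∈ permutohedron n a := by
      apply Finset.centerMass_mem_convexHull
      · intro g _; exact zero_le_one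
      · rw [Finset.sum_const, nsmul_eq_mul, mul_one]; exact_mod_cast hcard_pos
      · intro g _; exact ⟨Aux.u0 I * g, rfl⟩
    have hx : x = GS.centerMass (fun _ => (1 : ℝ)) (fun g => permPoint n a (Aux.u0 I * g)) := by
      funext v
      simp only [hxdef, Finset.centerMass, Finset.sum_const, nsmul_eq_mul, mul_one,
        one_smul, Finset.sum_apply, Pi.smul_apply, smul_eq_mul, permPoint,
        Equiv.Perm.mul_apply, div_eq_inv_mul]
    rw [hx]
    exact hmem
  -- facet sums
  have hfsum : ∀ i, ∑ v ∈ I i, x v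
      = ∑ w ∈ Finset.univ.filter (fun w : Fin n => (w : ℕ) < (I i).card), a w := by
    intro i
    have hval_const : ∀ g ∈ GS, ∑ v ∈ I i, a (Aux.u0 I (g v)) = ∑ v ∈ I i, a (Aux.u0 I v) := by
      intro g hg
      have hgG : g ∈ G := (hmemGS g).mp hg
      refine Finset.sum_nbij' (fun v => g v) (fun v => g⁻¹ v) ?_ ?_ ?_ ?_ ?_
      · intro v hv; exact (hGI g hgG i v).mpr hv
      · intro v hv
        have h2 := hGI g hgG i (g⁻¹ v)
        rw [Equiv.Perm.inv_def, Equiv.apply_symm_apply] at h2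
        exact h2.mp hv
      · intro v _; exact g.symm_apply_apply v
      · intro v _; exact g.apply_symm_apply v
      · intro v _; rfl
    have himg : (I i).image (⇑(Aux.u0 I))
        = Finset.univ.filter (fun w : Fin n => (w : ℕ) < (I i).card) := by
      ext w
      simp only [Finset.mem_image, Finset.mem_filter, Finset.mem_univ, true_and]
      constructor
      · rintro ⟨v, hv, rfl⟩
        exact (Aux.mem_iff_rnk_lt hcomp i v).mp hv
      · intro hw
        refine ⟨(Aux.u0 I).symm w, ?_, Equiv.apply_symm_apply _ _⟩
        rw [Aux.mem_iff_rnk_lt hcomp i]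
        have h2 : ((Aux.rnk I ((Aux.u0 I).symm w) : Fin n) : ℕ) = (w : ℕ) := by
          rw [← Aux.u0_apply, Equiv.apply_symm_apply]
        rw [h2]; exact hw
    have hbase : ∑ v ∈ I i, a (Aux.u0 I v)
        = ∑ w ∈ Finset.univ.filter (fun w : Fin n => (w : ℕ) < (I i).card), a w := by
      rw [← himg, Finset.sum_image (fun u _ v _ h => (Aux.u0 I).injective h)]
    calc ∑ v ∈ I i, x v
        = (∑ v ∈ I i, ∑ g ∈ GS, a (Aux.u0 I (g v))) / (GS.card : ℝ) := by
          simp only [hxdef]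
          rw [Finset.sum_div]
      _ = (∑ g ∈ GS, ∑ v ∈ I i, a (Aux.u0 I (g v))) / (GS.card : ℝ) := by
          rw [Finset.sum_comm]
      _ = (∑ g ∈ GS, ∑ v ∈ I i, a (Aux.u0 I v)) / (GS.card : ℝ) := by
          rw [Finset.sum_congr rfl hval_const]
      _ = ((GS.card : ℝ) * ∑ v ∈ I i, a (Aux.u0 I v)) / (GS.card : ℝ) := by
          rw [Finset.sum_const, nsmul_eq_mul]
      _ = ∑ v ∈ I i, a (Aux.u0 I v) := mul_div_cancel_left₀ _ hNne
      _ = _ := hbase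
  -- hyperplane equalities
  have hHeq : ∀ j : Fin q, x (b j) = x (b' j) := by
    intro j
    have hsG := hswapG j
    have hnum : ∑ g ∈ GS, a (Aux.u0 I (g (b j))) = ∑ g ∈ GS, a (Aux.u0 I (g (b' j))) := by
      refine Finset.sum_nbij' (fun g => g * Equiv.swap (b j) (b' j))
        (fun g => g * Equiv.swap (b j) (b' j)) ?_ ?_ ?_ ?_ ?_
      · intro g hg; exact (hmemGS _).mpr (mul_mem ((hmemGS g).mp hg) hsG)
      · intro g hg; exact (hmemGS _).mpr (mul_mem ((hmemGS g).mp hg) hsG)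
      · intro g _; simp only [mul_assoc, Equiv.swap_mul_self, mul_one]
      · intro g _; simp only [mul_assoc, Equiv.swap_mul_self, mul_one]
      · intro g _
        rw [Equiv.Perm.mul_apply, Equiv.swap_apply_right]
    simp only [hxdef]
    rw [hnum]
  -- the K-inequalities
  have hle : ∀ (kk : ℕ) (hkk : kk ∈ K),
      x ⟨kk, Nat.lt_of_succ_lt (hK kk hkk)⟩ ≤ x ⟨kk + 1, hK kk hkk⟩ := by
    intro kk hkkK
    by_cases hex : ∃ j : Fin q, k j = kk
    · obtain ⟨j, rfl⟩ := hex
      have h2 := hHeq j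
      simp only [hbdef, hb'def] at h2
      exact le_of_eq h2
    · set vk : Fin n := ⟨kk, Nat.lt_of_succ_lt (hK kk hkkK)⟩ with hvkdef
      set vk1 : Fin n := ⟨kk + 1, hK kk hkkK⟩ with hvk1def
      have hvkval : (vk : ℕ) = kk := by simp [hvkdef]
      have hvk1val : (vk1 : ℕ) = kk + 1 := by simp [hvk1def]
      have hne : ∀ j : Fin q, k j ≠ kk := fun j hj => hex ⟨j, hj⟩
      simp only [hxdef]
      apply div_le_div_of_nonneg_right ?_ (Nat.cast_nonneg _)
      apply Finset.sum_le_sum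
      intro g hg
      have hgG := (hmemGS g).mp hg
      have hb1 : ((g vk : Fin n) : ℕ) ≤ kk := (hGL kk hne g hgG vk).mpr (by omega)
      have hb2' := hGL kk hne g hgG vk1
      have hb2 : kk + 1 ≤ ((g vk1 : Fin n) : ℕ) := by omega
      have hint : ∀ t, ((g vk : Fin n) : ℕ) ≤ t → t < ((g vk1 : Fin n) : ℕ) → t ∈ K := by
        intro t h1 h2
        rcases lt_trichotomy t kk with h | h | h
        · obtain ⟨j, hj⟩ := hGC g hgG vk t (by omega) (by omega)
          exact hj ▸ hk j
        · exact h.symm ▸ hkkK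
        · obtain ⟨j, hj⟩ := hGC g hgG vk1 t (by omega) (by omega)
          exact hj ▸ hk j
      have hrnk := Aux.rnk_mono_interval (K := K) hdown
        (((g vk1 : Fin n) : ℕ) - ((g vk : Fin n) : ℕ)) (g vk) (g vk1) (by omega) hint
      exact ha.monotone hrnk
  refine ⟨x, Set.mem_inter ?_ ?_⟩
  · rw [Set.mem_iInter]
    intro i
    exact ⟨⟨hxP, hfsum i⟩, hxP, fun kk hkk => hle kk hkk⟩
  · rw [Set.mem_iInter]
    intro j
    have h2 := hHeq j
    simp only [hbdef, hb'def] at h2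
    exact ⟨h2, hxP, fun kk hkk => hle kk hkk⟩
end
end
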